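/- arXiv:0807.0595 — 10 statements merged into one kernel-verified Lean document; each statement's English description precedes it below -/
import Mathlib

section
/- Let F be a field and let f(x) = x^m − σ_{m−1}x^{m−1} − ⋯ − σ_1 x − σ_0 ∈ F[x] with σ_0 ≠ 0 have m distinct zeros ξ_0, …, ξ_{m−1} (in a splitting field), all of the same finite multiplicative order n. Then ord(f) = n, and every f-sequence u in any extension field of F with (u_0, …, u_{m−1}) ≠ (0, …, 0) has smallest period per(u) = n. -/
open Polynomial

/-- The subgroup `⟨ξ⟩ = {1, ξ, ξ², …}` of powers of an element `ξ`. -/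
def powersOf {E : Type*} [Monoid E] (ξ : E) : Set E := {x | ∃ k : ℕ, x = ξ ^ k}

/-- The map `x ↦ L₀x + L₁x^q + ⋯ + L_{m-1}x^{q^{m-1}}` given by the `q`-polynomial
with coefficient vector `c`. -/
def qPolyMap {E : Type*} [Field E] (q : ℕ) {m : ℕ} (c : Fin m → E) (x : E) : E :=
  ∑ i : Fin m, c i * x ^ q ^ (i : ℕ)

/-- `u` is a linear recurring sequence (an `f`-sequence) with characteristic polynomial
`f = xᵐ - σ_{m-1}x^{m-1} - ⋯ - σ₀`, i.e. `u_{k+m} = σ_{m-1}u_{k+m-1} + ⋯ + σ₀u_k`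
where `σᵢ = -(f.coeff i)`. -/
def IsLRS {F E : Type*} [Field F] [Field E] [Algebra F E] (f : Polynomial F) (u : ℕ → E) : Prop :=
  ∀ k : ℕ, u (k + f.natDegree) =
    ∑ i ∈ Finset.range f.natDegree, algebraMap F E (-(f.coeff i)) * u (k + i)

/-- The `q`-order of `ξ` over `F`: the least `d > 0` with `ξ ^ d ∈ F`. -/
noncomputable def qOrder (F : Type*) {E : Type*} [Field F] [Field E] [Algebra F E] (ξ : E) : ℕ :=
  sInf {d : ℕ | 0 < d ∧ ξ ^ d ∈ Set.range (algebraMap F E)}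

/-- `ξ` is nonstandard of degree `m` over `F`: its minimal polynomial `f` over `F` has
degree `m`, and `⟨ξ⟩` can be generated by an `f`-sequence `u` of smallest period `|⟨ξ⟩|`
with `u 0 = 1` and `(u_0, …, u_{m-1}) ≠ (1, ζ, …, ζ^{m-1})` for every zero `ζ` of `f`. -/
def IsNonstandard (F : Type*) {E : Type*} [Field F] [Field E] [Algebra F E]
    (m : ℕ) (ξ : E) : Prop :=
  (minpoly F ξ).natDegree = m ∧
  ∃ u : ℕ → E, IsLRS (minpoly F ξ) u ∧
    IsLeast {p : ℕ | 0 < p ∧ ∀ k, u (k + p) = u k} (orderOf ξ) ∧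
    Set.range u = powersOf ξ ∧
    u 0 = 1 ∧
    ∀ ζ : E, (aeval ζ) (minpoly F ξ) = 0 → ∃ i : Fin m, u (i : ℕ) ≠ ζ ^ (i : ℕ)

section Helpers

variable {F L : Type*} [Field F] [Field L] [Algebra F L]

/-- The shift operator on sequences, as an `F`-linear endomorphism. -/
def shiftL (F L : Type*) [Field F] [Field L] [Algebra F L] : Module.End F (ℕ → L) :=
  { toFun := fun v k => v (k + 1)
    map_add' := fun _ _ => rfl
    map_smul' := fun _ _ => rfl }

lemma shiftL_pow_apply (p : ℕ) (v : ℕ → L) (k : ℕ) : ((shiftL F L ^ p) v) k = v (k + p) := by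
  induction p generalizing v k with
  | zero => rfl
  | succ p ih =>
    rw [pow_succ, Module.End.mul_apply, ih]
    show v (k + p + 1) = v (k + (p + 1))
    ring_nf

lemma aeval_shiftL_apply (g : Polynomial F) (v : ℕ → L) (k : ℕ) :
    ((aeval (shiftL F L)) g v) k =
      ∑ i ∈ Finset.range (g.natDegree + 1), g.coeff i • v (k + i) := by
  rw [Polynomial.aeval_eq_sum_range]
  simp only [LinearMap.coe_sum, Finset.sum_apply, LinearMap.smul_apply, Pi.smul_apply,
    shiftL_pow_apply]

lemma aeval_shiftL_of_isLRS {f : Polynomial F} (hmon : f.Monic) {u : ℕ → L}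
    (hu : IsLRS f u) : (aeval (shiftL F L)) f u = 0 := by
  funext k
  rw [Pi.zero_apply, aeval_shiftL_apply, Finset.sum_range_succ, hmon.coeff_natDegree, one_smul,
    hu k, ← Finset.sum_add_distrib]
  apply Finset.sum_eq_zero
  intro i _
  rw [Algebra.smul_def, map_neg]
  ring

lemma period_of_aeval_zero {f : Polynomial F} {u : ℕ → L}
    (hf : (aeval (shiftL F L)) f u = 0) {N : ℕ} (hdvd : f ∣ (X : Polynomial F) ^ N - 1) :
    ∀ k, u (k + N) = u k := by
  obtain ⟨c, hc⟩ := hdvd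
  rw [mul_comm] at hc
  have h0 : (aeval (shiftL F L)) ((X : Polynomial F) ^ N - 1) u = 0 := by
    rw [hc, map_mul, Module.End.mul_apply, hf, map_zero]
  intro k
  have := congrFun h0 k
  rw [map_sub, map_pow, map_one, aeval_X, LinearMap.sub_apply, Pi.sub_apply,
    Module.End.one_apply, Pi.zero_apply, sub_eq_zero, shiftL_pow_apply] at this
  exact this

end Helpers

/-- if `f` (monic, degree `m`, `σ₀ ≠ 0`) has `m` distinct zeros
`ξ₀, …, ξ_{m-1}` in a splitting field `E`, all of the same finite multiplicative
order `n`, then `ord f = n` and every `f`-sequence `u` in any extension field `L`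
of `F` with `(u_0, …, u_{m-1}) ≠ (0, …, 0)` has smallest period `n`. -/
theorem lrs_period_eq_of_distinct_roots {F E L : Type*} [Field F] [Field E] [Algebra F E]
    [Field L] [Algebra F L]
    (m : ℕ) (hm : 0 < m) (f : Polynomial F) (hmon : f.Monic) (hdeg : f.natDegree = m)
    (h0 : f.coeff 0 ≠ 0)
    (ξ : Fin m → E) (hinj : Function.Injective ξ)
    (hsplit : f.map (algebraMap F E) = ∏ i : Fin m, (X - C (ξ i)))
    (n : ℕ) (hn : 0 < n) (hord : ∀ i : Fin m, orderOf (ξ i) = n)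
    (u : ℕ → L) (hu : IsLRS f u) (hnz : ∃ i : Fin m, u (i : ℕ) ≠ 0) :
    IsLeast {N : ℕ | 0 < N ∧ f ∣ (X : Polynomial F) ^ N - 1} n ∧
    IsLeast {p : ℕ | 0 < p ∧ ∀ k, u (k + p) = u k} n := by
  classical
  -- `f` annihilates `u` via the shift operator
  have hfu : (aeval (shiftL F L)) f u = 0 := aeval_shiftL_of_isLRS hmon hu
  have hfne : f ≠ 0 := hmon.ne_zero
  -- `f` divides `X^n - 1`
  have hfd : f ∣ (X : Polynomial F) ^ n - 1 := by
    rw [← Polynomial.map_dvd_map' (algebraMap F E)]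
    rw [Polynomial.map_sub, Polynomial.map_pow, Polynomial.map_X, Polynomial.map_one, hsplit]
    apply Finset.prod_dvd_of_coprime
    · intro a _ b _ hab
      exact (Polynomial.pairwise_coprime_X_sub_C hinj) hab
    · intro i _
      rw [Polynomial.dvd_iff_isRoot]
      have : ξ i ^ n = 1 := by rw [← hord i]; exact pow_orderOf_eq_one (ξ i)
      simp [Polynomial.IsRoot, this]
  -- lower bound on orders via roots
  have key : ∀ N : ℕ, 0 < N → f ∣ (X : Polynomial F) ^ N - 1 → n ≤ N := by
    intro N hN hdvd
    have : (f.map (algebraMap F E)) ∣ (X : Polynomial E) ^ N - 1 := by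
      have := Polynomial.map_dvd (algebraMap F E) hdvd
      rwa [Polynomial.map_sub, Polynomial.map_pow, Polynomial.map_X, Polynomial.map_one] at this
    set j : Fin m := ⟨0, hm⟩
    have hroot : (ξ j) ^ N = 1 := by
      obtain ⟨c, hc⟩ := this
      have h1 : Polynomial.eval (ξ j) ((X : Polynomial E) ^ N - 1) = 0 := by
        rw [hc, Polynomial.eval_mul, hsplit, Polynomial.eval_prod]
        rw [Finset.prod_eq_zero (Finset.mem_univ j) (by simp)]
        ring
      have := h1
      simp only [Polynomial.eval_sub, Polynomial.eval_pow, Polynomial.eval_X,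
        Polynomial.eval_one, sub_eq_zero] at this
      exact this
    have : n ∣ N := by rw [← hord j]; exact orderOf_dvd_of_pow_eq_one hroot
    exact Nat.le_of_dvd hN this
  constructor
  · exact ⟨⟨hn, hfd⟩, fun N hN => key N hN.1 hN.2⟩
  · constructor
    · exact ⟨hn, period_of_aeval_zero hfu hfd⟩
    · rintro p ⟨hp, hper⟩
      -- `X^p - 1` annihilates `u`
      have hXp : (aeval (shiftL F L)) ((X : Polynomial F) ^ p - 1) u = 0 := by
        funext k
        rw [map_sub, map_pow, map_one, aeval_X, LinearMap.sub_apply, Pi.sub_apply,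
          Module.End.one_apply, Pi.zero_apply, sub_eq_zero, shiftL_pow_apply]
        exact hper k
      -- the gcd annihilates `u`
      set h : Polynomial F := EuclideanDomain.gcd f ((X : Polynomial F) ^ p - 1) with hh
      have hgu : (aeval (shiftL F L)) h u = 0 := by
        rw [hh, EuclideanDomain.gcd_eq_gcd_ab f ((X : Polynomial F) ^ p - 1)]
        rw [mul_comm f _, mul_comm ((X : Polynomial F) ^ p - 1) _]
        rw [map_add, map_mul, map_mul, LinearMap.add_apply, Module.End.mul_apply,
          Module.End.mul_apply, hfu, hXp, map_zero, map_zero, add_zero]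
      have hhne : h ≠ 0 := by
        rw [hh, Ne, EuclideanDomain.gcd_eq_zero_iff]
        rintro ⟨hf0, -⟩
        exact hfne hf0
      rcases Nat.eq_zero_or_pos h.natDegree with hd0 | hdpos
      · -- constant gcd forces u = 0, contradiction
        exfalso
        have hc : h = Polynomial.C (h.coeff 0) := Polynomial.eq_C_of_natDegree_eq_zero hd0
        have hc0 : h.coeff 0 ≠ 0 := by
          intro hz
          apply hhne
          rw [hc, hz, map_zero]
        obtain ⟨i, hi⟩ := hnz
        apply hi
        have := congrFun hgu (i : ℕ)
        rw [hc, Polynomial.aeval_C] at this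
        have : algebraMap F L (h.coeff 0) • u (i : ℕ) = 0 := by
          simpa using this
        rcases smul_eq_zero.mp this with h1 | h1
        · exact absurd (RingHom.injective (algebraMap F L) (by rw [h1, map_zero])) hc0
        · exact h1
      · -- nonconstant gcd has a root ζ = ξ j, and ζ^p = 1 forces n ∣ p
        have hsplf : Polynomial.Splits (f.map (algebraMap F E)) := by
          rw [hsplit]
          exact Polynomial.Splits.prod fun i _ => Polynomial.Splits.X_sub_C _
        have hsplh : Polynomial.Splits (h.map (algebraMap F E)) :=
          hsplf.of_dvd (Polynomial.map_ne_zero hfne)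
            (Polynomial.map_dvd _ (EuclideanDomain.gcd_dvd_left _ _))
        have hdegne : h.degree ≠ 0 := by
          rw [Polynomial.degree_eq_natDegree hhne]
          exact_mod_cast Nat.pos_iff_ne_zero.mp hdpos
        obtain ⟨ζ, hζ⟩ := hsplh.exists_eval_eq_zero (by rwa [Polynomial.degree_map])
        rw [Polynomial.eval_map] at hζ
        -- ζ is a root of f, hence equals some ξ j
        have hζf : Polynomial.eval₂ (algebraMap F E) ζ f = 0 := by
          obtain ⟨c, hc⟩ := EuclideanDomain.gcd_dvd_left f ((X : Polynomial F) ^ p - 1)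
          rw [hc, Polynomial.eval₂_mul, hζ, zero_mul]
        have hζf' : Polynomial.eval ζ (f.map (algebraMap F E)) = 0 := by
          rwa [Polynomial.eval_map]
        rw [hsplit, Polynomial.eval_prod] at hζf'
        obtain ⟨j, -, hj⟩ := Finset.prod_eq_zero_iff.mp hζf'
        simp only [Polynomial.eval_sub, Polynomial.eval_X, Polynomial.eval_C,
          sub_eq_zero] at hj
        -- ζ^p = 1
        have hζp : ζ ^ p = 1 := by
          obtain ⟨c, hc⟩ := EuclideanDomain.gcd_dvd_right f ((X : Polynomial F) ^ p - 1)
          have : Polynomial.eval₂ (algebraMap F E) ζ ((X : Polynomial F) ^ p - 1) = 0 := by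
            rw [hc, Polynomial.eval₂_mul, hζ, zero_mul]
          simpa [sub_eq_zero] using this
        have : n ∣ p := by
          rw [← hord j]
          exact orderOf_dvd_of_pow_eq_one (by rw [← hj]; exact hζp)
        exact Nat.le_of_dvd hp this
end

section
/- Let F be a field, let f ∈ F[x] be monic of degree m with f(0) ≠ 0, irreducible over F, with finite order ord(f) and no multiple zeros. Then every f-subgroup K in an extension field L of F is of the form K = ⟨ξ⟩ = {1, ξ, ξ², …} for some zero ξ of f lying in L. -/
open Polynomial

section ShiftAux
variable {L : Type*} [Field L]

noncomputable def shiftOp (L : Type*) [Field L] : Module.End L (ℕ → L) where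
  toFun u := fun k => u (k + 1)
  map_add' := fun _ _ => rfl
  map_smul' := fun _ _ => rfl

lemma shiftOp_pow_apply (i : ℕ) (u : ℕ → L) (k : ℕ) :
    ((shiftOp L ^ i) u) k = u (k + i) := by
  induction i generalizing u k with
  | zero => rfl
  | succ j ih =>
    rw [pow_succ, Module.End.mul_apply, ih]
    rfl

lemma aeval_shiftOp_apply (g : Polynomial L) (u : ℕ → L) (k : ℕ) :
    ((aeval (shiftOp L) g) u) k
      = ∑ i ∈ Finset.range (g.natDegree + 1), g.coeff i * u (k + i) := by
  rw [Polynomial.aeval_eq_sum_range]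
  simp [LinearMap.sum_apply, Finset.sum_apply, shiftOp_pow_apply]

lemma annih_X_pow_sub_one_iff (t : ℕ) (u : ℕ → L) :
    (aeval (shiftOp L) ((X : Polynomial L) ^ t - 1)) u = 0 ↔ ∀ k, u (k + t) = u k := by
  rw [map_sub, map_pow, aeval_X, map_one, LinearMap.sub_apply, Module.End.one_apply,
    sub_eq_zero, funext_iff]
  constructor <;> intro h k <;> simpa [shiftOp_pow_apply] using h k

lemma eq_zero_of_annih_coprime {g h : Polynomial L} {u : ℕ → L}
    (hg : (aeval (shiftOp L) g) u = 0) (hh : (aeval (shiftOp L) h) u = 0)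
    (hco : IsCoprime g h) : u = 0 := by
  obtain ⟨a, b, hab⟩ := hco
  have h2 := congrArg (fun p => (aeval (shiftOp L) p) u) hab
  simpa [map_add, map_mul, LinearMap.add_apply, Module.End.mul_apply, hg, hh,
    Module.End.one_apply] using h2.symm

end ShiftAux

lemma annih_of_isLRS {F L : Type*} [Field F] [Field L] [Algebra F L]
    {f : Polynomial F} (hmon : f.Monic) {u : ℕ → L} (hu : IsLRS f u) :
    (aeval (shiftOp L) (f.map (algebraMap F L))) u = 0 := by
  funext k
  show ((aeval (shiftOp L) (f.map (algebraMap F L))) u) k = 0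
  rw [aeval_shiftOp_apply, hmon.natDegree_map, Finset.sum_range_succ]
  have hm1 : (f.map (algebraMap F L)).coeff f.natDegree = 1 := by
    rw [coeff_map, hmon.coeff_natDegree, map_one]
  rw [hm1, one_mul, hu k, ← Finset.sum_add_distrib]
  apply Finset.sum_eq_zero
  intro i _
  simp [coeff_map, map_neg, neg_mul]


/-- if `f` is monic of degree `m`, `f(0) ≠ 0`, irreducible over `F`, of
finite order and without multiple zeros, then every `f`-subgroup `K` in an extension
field `L` of `F` is of the form `K = ⟨ξ⟩ = {1, ξ, ξ², …}` for some zero `ξ` of `f` in `L`. -/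
theorem fSubgroup_eq_powers_of_root {F L : Type*} [Field F] [Field L] [Algebra F L]
    (m : ℕ) (hm : 0 < m) (f : Polynomial F) (hmon : f.Monic) (hdeg : f.natDegree = m)
    (h0 : f.coeff 0 ≠ 0) (hirr : Irreducible f) (hsep : f.Separable)
    (hord : ∃ N : ℕ, 0 < N ∧ f ∣ (X : Polynomial F) ^ N - 1)
    (K : Set L) (hKgrp : ∃ H : Subgroup Lˣ, K = Units.val '' (H : Set Lˣ))
    (hKfin : K.Finite)
    (hK : ∃ u : ℕ → L, IsLRS f u ∧
      IsLeast {p : ℕ | 0 < p ∧ ∀ k, u (k + p) = u k} K.ncard ∧ Set.range u = K) :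
    ∃ ξ : L, (aeval ξ) f = 0 ∧ K = powersOf ξ := by
  classical
  obtain ⟨u, hulrs, huleast, hurange⟩ := hK
  obtain ⟨H, hHK⟩ := hKgrp
  set n := K.ncard with hn
  have hn0 : 0 < n := huleast.1.1
  have hper : ∀ k, u (k + n) = u k := huleast.1.2
  have h1K : (1 : L) ∈ K := by
    rw [hHK]; exact ⟨1, H.one_mem, rfl⟩
  have hune : u ≠ 0 := by
    intro h
    rw [← hurange] at h1K
    obtain ⟨k, hk⟩ := h1K
    rw [h] at hk
    have : (0 : L) = 1 := by simpa using hk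
    exact zero_ne_one this
  have hannf : (aeval (shiftOp L) (f.map (algebraMap F L))) u = 0 := annih_of_isLRS hmon hulrs
  have hmapsub : ∀ t : ℕ, ((X : Polynomial F) ^ t - 1).map (algebraMap F L)
      = (X : Polynomial L) ^ t - 1 := by
    intro t
    simp [Polynomial.map_sub, Polynomial.map_pow, Polynomial.map_one]
  -- Step 1 : f ∣ X^n - 1 over F
  have hannn : (aeval (shiftOp L) ((X : Polynomial L) ^ n - 1)) u = 0 :=
    (annih_X_pow_sub_one_iff n u).mpr hper
  have hdvdn : f ∣ (X : Polynomial F) ^ n - 1 := by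
    rcases hirr.isCoprime_or_dvd ((X : Polynomial F) ^ n - 1) with hco | h
    · exfalso
      have hcoL := hco.map (mapRingHom (algebraMap F L))
      simp only [coe_mapRingHom, hmapsub] at hcoL
      exact hune (eq_zero_of_annih_coprime hannf hannn hcoL)
    · exact h
  -- Step 2 : every element of K is an n-th root of unity
  have hHfin : (H : Set Lˣ).Finite := by
    apply Set.Finite.of_finite_image _ (Set.injOn_of_injective Units.val_injective)
    rw [← hHK]; exact hKfin
  have hcardH : Nat.card H = n := by
    have h1 : Nat.card H = (H : Set Lˣ).ncard := Nat.card_coe_set_eq _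
    have h2 : (Units.val '' (H : Set Lˣ)).ncard = (H : Set Lˣ).ncard :=
      Set.ncard_image_of_injective _ Units.val_injective
    rw [h1, ← h2, ← hHK]
  have hpowone : ∀ κ ∈ K, κ ^ n = 1 := by
    intro κ hκ
    rw [hHK] at hκ
    obtain ⟨h, hh, rfl⟩ := hκ
    have : Finite H := hHfin
    have h1 : (⟨h, hh⟩ : H) ^ n = 1 := by rw [← hcardH]; exact pow_card_eq_one'
    have h2 : h ^ n = 1 := by simpa using congrArg Subtype.val h1
    simpa using congrArg Units.val h2
  -- Step 3 : X^n - 1 splits over L with root set exactly K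
  set K' : Finset L := hKfin.toFinset with hK'
  have hK'card : K'.card = n := (Set.ncard_eq_toFinset_card K hKfin).symm
  set q : Polynomial L := (X : Polynomial L) ^ n - 1 with hq
  have hqmonic : q.Monic := by
    have := monic_X_pow_sub_C (1 : L) hn0.ne'
    simpa [hq] using this
  have hq0 : q ≠ 0 := hqmonic.ne_zero
  have hqdeg : q.natDegree = n := by
    have := natDegree_X_pow_sub_C (n := n) (r := (1 : L))
    simpa [hq] using this
  have hroot : ∀ κ ∈ K', q.IsRoot κ := by
    intro κ hκ
    have hκK : κ ∈ K := hKfin.mem_toFinset.mp hκ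
    simp [hq, IsRoot, hpowone κ hκK]
  have hsub : K'.val ≤ q.roots := Finset.val_le_iff_val_subset.mpr (by
    intro a ha
    exact mem_roots'.mpr ⟨hq0, hroot a ha⟩)
  have hcard1 : n ≤ Multiset.card q.roots := by
    calc n = K'.card := hK'card.symm
    _ = Multiset.card K'.val := rfl
    _ ≤ Multiset.card q.roots := Multiset.card_le_card hsub
  have hcard2 : Multiset.card q.roots ≤ n := by
    simpa [hqdeg] using Polynomial.card_roots' q
  have hrootscard : Multiset.card q.roots = n := le_antisymm hcard2 hcard1
  have hrootsK : K'.val = q.roots :=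
    Multiset.eq_of_le_of_card_le hsub (by rw [hrootscard]; exact hK'card.ge)
  have hsplits : Splits q :=
    (splits_iff_card_roots).mpr (by rw [hrootscard, hqdeg])
  have hfLdvd : f.map (algebraMap F L) ∣ q := by
    have := _root_.map_dvd (mapRingHom (algebraMap F L)) hdvdn
    simpa [coe_mapRingHom, hmapsub, hq] using this
  have hfLsplits : Splits (f.map (algebraMap F L)) :=
    Splits.of_dvd hsplits hq0 hfLdvd
  have hfLdeg : (f.map (algebraMap F L)).degree ≠ 0 := by
    have hnd : (f.map (algebraMap F L)).natDegree = m := by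
      rw [hmon.natDegree_map, hdeg]
    exact degree_ne_of_natDegree_ne (n := 0) (by rw [hnd]; exact hm.ne')
  obtain ⟨ξ, hξ⟩ := Splits.exists_eval_eq_zero hfLsplits hfLdeg
  have hmapf0 : (f.map (algebraMap F L)).eval ξ = 0 := by
    exact hξ
  have hξf : (aeval ξ) f = 0 := by
    rw [aeval_def, eval₂_eq_eval_map]
    exact hmapf0
  -- ξ is an n-th root of unity, hence lies in K
  have hξn : ξ ^ n = 1 := by
    obtain ⟨g, hg⟩ := hdvdn
    have h2 : (aeval ξ) ((X : Polynomial F) ^ n - 1) = 0 := by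
      rw [hg, map_mul, hξf, zero_mul]
    rw [map_sub, map_pow, aeval_X, map_one, sub_eq_zero] at h2
    exact h2
  have hξK : ξ ∈ K := by
    have hroot : ξ ∈ q.roots := mem_roots'.mpr ⟨hq0, by simp [hq, IsRoot, hξn]⟩
    rw [← hrootsK] at hroot
    exact hKfin.mem_toFinset.mp hroot
  have hξ0 : ξ ≠ 0 := by
    intro h
    rw [h, zero_pow hn0.ne'] at hξn
    exact zero_ne_one hξn
  -- the multiplicative order of ξ equals n
  have hfin : IsOfFinOrder ξ := isOfFinOrder_iff_pow_eq_one.mpr ⟨n, hn0, hξn⟩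
  set t := orderOf ξ with ht
  have ht0 : 0 < t := hfin.orderOf_pos
  have htdvd : t ∣ n := orderOf_dvd_of_pow_eq_one hξn
  have hdvdt : f ∣ (X : Polynomial F) ^ t - 1 := by
    rcases hirr.isCoprime_or_dvd ((X : Polynomial F) ^ t - 1) with hco | h
    · exfalso
      have hcoL := hco.map (mapRingHom (algebraMap F L))
      simp only [coe_mapRingHom, hmapsub] at hcoL
      obtain ⟨a, b, hab⟩ := hcoL
      have hξt : ξ ^ t = 1 := by rw [ht]; exact pow_orderOf_eq_one ξ
      have h2 := congrArg (eval ξ) hab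
      simp [eval_add, eval_mul, hmapf0, eval_sub, eval_pow, eval_X, eval_one,
        hξt] at h2
    · exact h
  have hannt : (aeval (shiftOp L) ((X : Polynomial L) ^ t - 1)) u = 0 := by
    obtain ⟨g, hg⟩ := hdvdt
    have hfac : (X : Polynomial L) ^ t - 1
        = g.map (algebraMap F L) * f.map (algebraMap F L) := by
      rw [← Polynomial.map_mul, mul_comm, ← hg, hmapsub]
    rw [hfac, map_mul, Module.End.mul_apply, hannf, map_zero]
  have hperiodt : ∀ k, u (k + t) = u k := (annih_X_pow_sub_one_iff t u).mp hannt
  have hnt : n ≤ t := huleast.2 ⟨ht0, hperiodt⟩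
  have htn : t = n := le_antisymm (Nat.le_of_dvd hn0 htdvd) hnt
  -- conclude
  refine ⟨ξ, hξf, ?_⟩
  obtain ⟨hu, hhuH, hhuval⟩ : ∃ h ∈ (H : Set Lˣ), Units.val h = ξ := by
    rw [hHK] at hξK; exact hξK
  have hpowK : ∀ k : ℕ, ξ ^ k ∈ K := by
    intro k
    rw [hHK]
    exact ⟨hu ^ k, H.pow_mem hhuH k, by rw [Units.val_pow_eq_pow_val, hhuval]⟩
  set ξu : Lˣ := Units.mk0 ξ hξ0 with hξu
  have hou : orderOf ξu = n := by
    rw [← orderOf_units]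
    simpa [hξu] using htn
  have hinj : Set.InjOn (ξ ^ ·) ((Finset.range n : Finset ℕ) : Set ℕ) := by
    intro a ha b hb hab
    have ha' : a ∈ Set.Iio (orderOf ξu) := by
      rw [hou]; simpa using ha
    have hb' : b ∈ Set.Iio (orderOf ξu) := by
      rw [hou]; simpa using hb
    refine pow_injOn_Iio_orderOf ha' hb' ?_
    have : (ξu : L) ^ a = (ξu : L) ^ b := by simpa [hξu] using hab
    exact Units.ext (by simpa [Units.val_pow_eq_pow_val] using this)
  set PF : Finset L := (Finset.range n).image (ξ ^ ·) with hPF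
  have hPFcard : PF.card = n := by
    rw [hPF, Finset.card_image_of_injOn hinj, Finset.card_range]
  have hPFsub : PF ⊆ K' := by
    intro x hx
    rw [hPF] at hx
    simp only [Finset.mem_image] at hx
    obtain ⟨k, _, rfl⟩ := hx
    exact hKfin.mem_toFinset.mpr (hpowK k)
  have hPFK : PF = K' := Finset.eq_of_subset_of_card_le hPFsub (by rw [hPFcard, hK'card])
  ext x
  constructor
  · intro hx
    have hx' : x ∈ K' := hKfin.mem_toFinset.mpr hx
    rw [← hPFK, hPF] at hx'
    simp only [Finset.mem_image, Finset.mem_range] at hx'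
    obtain ⟨k, _, rfl⟩ := hx'
    exact ⟨k, rfl⟩
  · rintro ⟨k, rfl⟩
    exact hpowK k
end

section
/- Let q be a prime power and let ξ ∈ GF(q^m) have minimal polynomial f(x) = x^m − σ_{m−1}x^{m−1} − ⋯ − σ_1 x − σ_0 of degree m over GF(q). A sequence u = (u_k)_{k≥0} in GF(q^m) is an f-sequence if and only if there exists a q-polynomial L(x) = L_0 x + L_1 x^q + ⋯ + L_{m−1} x^{q^{m−1}} with coefficients in GF(q^m) such that u_k = L(ξ^k) for all k ≥ 0. -/
open Polynomial

set_option linter.unusedSectionVars false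

section Aux
variable {F E : Type*} [Field F] [Fintype F] [Field E] [Algebra F E]

lemma aux_sum_pow {ι : Type*} (s : Finset ι) (g : ι → E) (N : ℕ) :
    (∑ i ∈ s, g i) ^ (Fintype.card F) ^ N = ∑ i ∈ s, (g i) ^ (Fintype.card F) ^ N := by
  obtain ⟨n, hp, hq⟩ := FiniteField.card F (ringChar F)
  haveI : CharP E (ringChar F) := charP_of_injective_algebraMap (algebraMap F E).injective _
  haveI : ExpChar E (ringChar F) := .prime hp
  rw [hq, ← pow_mul, sum_pow_char_pow]

lemma aux_alg_pow (a : F) (N : ℕ) :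
    (algebraMap F E a) ^ (Fintype.card F) ^ N = algebraMap F E a := by
  rw [← map_pow, FiniteField.pow_card_pow]

end Aux

section Aux2
variable {F E : Type*} [Field F] [Fintype F] [Field E] [Algebra F E]

/-- the basic minimal polynomial relation -/
lemma aux_pow_deg {ξ : E} (hξ : IsIntegral F ξ) :
    ξ ^ (minpoly F ξ).natDegree = ∑ j ∈ Finset.range (minpoly F ξ).natDegree,
      algebraMap F E (-((minpoly F ξ).coeff j)) * ξ ^ j := by
  have h0 := minpoly.aeval F ξ
  rw [Polynomial.aeval_eq_sum_range, Finset.sum_range_succ,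
    (minpoly.monic hξ).coeff_natDegree, one_smul] at h0
  have h1 : ξ ^ (minpoly F ξ).natDegree
      = -∑ i ∈ Finset.range (minpoly F ξ).natDegree, (minpoly F ξ).coeff i • ξ ^ i := by
    linear_combination h0
  rw [h1, ← Finset.sum_neg_distrib]
  exact Finset.sum_congr rfl fun j _ => by rw [map_neg, Algebra.smul_def, neg_mul]

/-- the conjugate relation -/
lemma aux_conj_pow {ξ : E} (hξ : IsIntegral F ξ) (N : ℕ) :
    (ξ ^ (Fintype.card F) ^ N) ^ (minpoly F ξ).natDegree =
      ∑ j ∈ Finset.range (minpoly F ξ).natDegree,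
        algebraMap F E (-((minpoly F ξ).coeff j)) * (ξ ^ (Fintype.card F) ^ N) ^ j := by
  have := congrArg (· ^ (Fintype.card F) ^ N) (aux_pow_deg hξ)
  simp only [aux_sum_pow, mul_pow, aux_alg_pow] at this
  calc (ξ ^ (Fintype.card F) ^ N) ^ (minpoly F ξ).natDegree
      = (ξ ^ (minpoly F ξ).natDegree) ^ (Fintype.card F) ^ N := by
        rw [← pow_mul, ← pow_mul, Nat.mul_comm]
    _ = _ := by
        rw [this]
        exact Finset.sum_congr rfl fun j _ => by
          rw [← pow_mul, ← pow_mul, Nat.mul_comm]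

/-- any q-polynomial sequence is an f-sequence -/
lemma aux_isLRS_qPolyMap {ξ : E} (hξ : IsIntegral F ξ) {r : ℕ} (c : Fin r → E) :
    IsLRS (minpoly F ξ) (fun k => qPolyMap (Fintype.card F) c (ξ ^ k)) := by
  intro k
  simp only [qPolyMap]
  have key : ∀ i : Fin r,
      (ξ ^ (k + (minpoly F ξ).natDegree)) ^ (Fintype.card F) ^ (i : ℕ)
      = ∑ j ∈ Finset.range (minpoly F ξ).natDegree,
          algebraMap F E (-((minpoly F ξ).coeff j)) * (ξ ^ (k + j)) ^ (Fintype.card F) ^ (i : ℕ) := by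
    intro i
    have h1 : (ξ ^ (k + (minpoly F ξ).natDegree)) ^ (Fintype.card F) ^ (i : ℕ)
        = (ξ ^ (Fintype.card F) ^ (i : ℕ)) ^ k * (ξ ^ (Fintype.card F) ^ (i : ℕ)) ^ (minpoly F ξ).natDegree := by
      rw [← pow_add, ← pow_mul, ← pow_mul, Nat.mul_comm, Nat.mul_add, Nat.mul_comm]
    rw [h1, aux_conj_pow hξ, Finset.mul_sum]
    exact Finset.sum_congr rfl fun j _ => by
      rw [mul_left_comm, ← pow_add, ← pow_mul, ← pow_mul, Nat.mul_comm]
  calc (∑ i : Fin r, c i * (ξ ^ (k + (minpoly F ξ).natDegree)) ^ (Fintype.card F) ^ (i : ℕ))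
      = ∑ i : Fin r, ∑ j ∈ Finset.range (minpoly F ξ).natDegree,
          c i * (algebraMap F E (-((minpoly F ξ).coeff j)) * (ξ ^ (k + j)) ^ (Fintype.card F) ^ (i : ℕ)) := by
        exact Finset.sum_congr rfl fun i _ => by rw [key i, Finset.mul_sum]
    _ = ∑ j ∈ Finset.range (minpoly F ξ).natDegree, ∑ i : Fin r,
          c i * (algebraMap F E (-((minpoly F ξ).coeff j)) * (ξ ^ (k + j)) ^ (Fintype.card F) ^ (i : ℕ)) :=
        Finset.sum_comm
    _ = _ := Finset.sum_congr rfl fun j _ => by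
        rw [Finset.mul_sum]
        exact Finset.sum_congr rfl fun i _ => by ring

/-- uniqueness from initial conditions -/
lemma aux_lrs_ext {f : Polynomial F} {u v : ℕ → E} (hu : IsLRS f u) (hv : IsLRS f v)
    (h : ∀ j < f.natDegree, u j = v j) : ∀ k, u k = v k := by
  intro k
  induction k using Nat.strong_induction_on with
  | _ k ih =>
    rcases lt_or_ge k f.natDegree with h' | h'
    · exact h k h'
    · obtain ⟨t, rfl⟩ : ∃ t, k = t + f.natDegree := ⟨k - f.natDegree, by omega⟩
      rw [hu, hv]
      exact Finset.sum_congr rfl fun j hj => by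
        rw [ih (t + j) (by simp only [Finset.mem_range] at hj; omega)]

end Aux2

section Aux3
variable {F E : Type*} [Field F] [Fintype F] [Field E] [Fintype E] [Algebra F E]

lemma aux_qPolyMap_sum {r : ℕ} (c : Fin r → E) {ι : Type*} [Fintype ι]
    (a : ι → F) (x : ι → E) :
    qPolyMap (Fintype.card F) c (∑ j : ι, a j • x j)
      = ∑ j : ι, a j • qPolyMap (Fintype.card F) c (x j) := by
  simp only [qPolyMap, Algebra.smul_def]
  calc (∑ i : Fin r, c i * (∑ j : ι, algebraMap F E (a j) * x j) ^ (Fintype.card F) ^ (i : ℕ))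
      = ∑ i : Fin r, ∑ j : ι,
          algebraMap F E (a j) * (c i * (x j) ^ (Fintype.card F) ^ (i : ℕ)) := by
        refine Finset.sum_congr rfl fun i _ => ?_
        rw [aux_sum_pow, Finset.mul_sum]
        refine Finset.sum_congr rfl fun j _ => ?_
        rw [mul_pow, aux_alg_pow]
        ring
    _ = _ := by
        rw [Finset.sum_comm]
        exact Finset.sum_congr rfl fun j _ => by rw [Finset.mul_sum]

lemma aux_qPoly_zero {m : ℕ} (hm : 0 < m) (hrank : Module.finrank F E = m)
    {ξ : E} (hdeg : (minpoly F ξ).natDegree = m) (c : Fin m → E)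
    (h : ∀ k : ℕ, qPolyMap (Fintype.card F) c (ξ ^ k) = 0) : c = 0 := by
  haveI : Nonempty (Fin m) := ⟨⟨0, hm⟩⟩
  have li : LinearIndependent F (fun i : Fin m => ξ ^ (i : ℕ)) := by
    have := linearIndependent_pow (K := F) ξ
    rwa [hdeg] at this
  have hspan := li.span_eq_top_of_card_eq_finrank (by simp [hrank])
  have hall : ∀ x : E, qPolyMap (Fintype.card F) c x = 0 := by
    intro x
    have hx : x ∈ Submodule.span F (Set.range fun i : Fin m => ξ ^ (i : ℕ)) := by
      rw [hspan]; trivial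
    rw [Submodule.mem_span_range_iff_exists_fun] at hx
    obtain ⟨a, ha⟩ := hx
    rw [← ha, aux_qPolyMap_sum]
    simp [h]
  have hq1 : 1 < Fintype.card F := Fintype.one_lt_card
  set q := Fintype.card F with hq
  set P : Polynomial E := ∑ i : Fin m, Polynomial.C (c i) * Polynomial.X ^ (q ^ (i : ℕ)) with hPdef
  have hPeval : ∀ x : E, P.eval x = 0 := by
    intro x
    have := hall x
    simpa [hPdef, Polynomial.eval_finset_sum, qPolyMap] using this
  have hP : P = 0 := by
    refine Polynomial.eq_zero_of_natDegree_lt_card_of_eval_eq_zero P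
      Function.injective_id (fun x => hPeval x) ?_
    calc P.natDegree ≤ q ^ (m - 1) := by
          refine Polynomial.natDegree_sum_le_of_forall_le _ _ fun i _ => ?_
          refine le_trans (Polynomial.natDegree_C_mul_le _ _) ?_
          rw [Polynomial.natDegree_X_pow]
          exact Nat.pow_le_pow_right (le_of_lt hq1) (by omega)
      _ < q ^ m := Nat.pow_lt_pow_right hq1 (by omega)
      _ = Fintype.card E := by rw [Module.card_eq_pow_finrank (K := F) (V := E), hrank]
  funext i
  have hcoeff : P.coeff (q ^ (i : ℕ)) = c i := by
    rw [hPdef, Polynomial.finset_sum_coeff, Finset.sum_eq_single i]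
    · simp [Polynomial.coeff_C_mul, Polynomial.coeff_X_pow]
    · intro j _ hji
      rw [Polynomial.coeff_C_mul, Polynomial.coeff_X_pow, if_neg, mul_zero]
      intro hqq
      exact hji (Fin.ext (Nat.pow_right_injective hq1 hqq.symm))
    · simp
  rw [hP] at hcoeff
  simp only [Polynomial.coeff_zero] at hcoeff
  simp [← hcoeff]

end Aux3


/-- for `ξ ∈ GF(qᵐ)` with minimal polynomial `f` of degree `m` over
`GF(q)`, a sequence `u` in `GF(qᵐ)` is an `f`-sequence iff there is a `q`-polynomial
`L(x) = L₀x + L₁x^q + ⋯ + L_{m-1}x^{q^{m-1}}` over `GF(qᵐ)` with `u k = L(ξ^k)` for all `k`. -/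
theorem isLRS_iff_qPoly {F E : Type*} [Field F] [Fintype F] [Field E] [Fintype E]
    [Algebra F E] (m : ℕ) (hm : 0 < m) (hrank : Module.finrank F E = m)
    (ξ : E) (hdeg : (minpoly F ξ).natDegree = m) (u : ℕ → E) :
    IsLRS (minpoly F ξ) u ↔
      ∃ c : Fin m → E, ∀ k : ℕ, u k = qPolyMap (Fintype.card F) c (ξ ^ k) := by
  have hξ : IsIntegral F ξ := IsIntegral.of_finite F ξ
  constructor
  · intro h
    set q := Fintype.card F with hq
    set Φ : (Fin m → E) → (Fin m → E) := fun c j => qPolyMap q c (ξ ^ (j : ℕ)) with hΦ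
    have hinj : Function.Injective Φ := by
      intro c c' hcc
      have hdiff : ∀ k : ℕ, qPolyMap q (c - c') (ξ ^ k) = 0 := by
        have hv := aux_isLRS_qPolyMap (F := F) hξ c
        have hv' := aux_isLRS_qPolyMap (F := F) hξ c'
        have hagree : ∀ j < (minpoly F ξ).natDegree,
            qPolyMap q c (ξ ^ j) = qPolyMap q c' (ξ ^ j) := by
          intro j hj
          rw [hdeg] at hj
          exact congrFun hcc ⟨j, hj⟩
        have heq := aux_lrs_ext hv hv' hagree
        intro k
        have hk := heq k
        simp only [qPolyMap, Pi.sub_apply, sub_mul, Finset.sum_sub_distrib, qPolyMap] at hk ⊢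
        rw [hk, sub_self]
      have h0 := aux_qPoly_zero hm hrank hdeg (c - c') hdiff
      exact sub_eq_zero.mp h0
    obtain ⟨c, hc⟩ := Finite.injective_iff_surjective.mp hinj (fun j => u (j : ℕ))
    refine ⟨c, ?_⟩
    have hv := aux_isLRS_qPolyMap (F := F) hξ c
    have hagree : ∀ j < (minpoly F ξ).natDegree, u j = qPolyMap q c (ξ ^ j) := by
      intro j hj
      rw [hdeg] at hj
      exact (congrFun hc ⟨j, hj⟩).symm
    exact aux_lrs_ext h hv hagree
  · rintro ⟨c, hc⟩
    have hv := aux_isLRS_qPolyMap (F := F) hξ c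
    intro k
    simp only [hc]
    exact hv k
end

section
/- Let q be a prime power and let ξ ∈ GF(q^m) have degree m over GF(q). Then ξ is nonstandard of degree m over GF(q) if and only if there exists a nonstandard q-polynomial L(x) = L_0 x + L_1 x^q + ⋯ + L_{m−1} x^{q^{m−1}} with coefficients in GF(q^m) such that L maps the set ⟨ξ⟩ = {1, ξ, ξ², …} onto itself. -/
open Polynomial

section Aux

variable {F E : Type*} [Field F] [Field E] [Algebra F E]

lemma IsLRS.unique {f : Polynomial F} {u v : ℕ → E} (hu : IsLRS f u) (hv : IsLRS f v)
    (h : ∀ i < f.natDegree, u i = v i) : u = v := by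
  funext k
  induction k using Nat.strong_induction_on with
  | _ k ih =>
    rcases lt_or_ge k f.natDegree with hk | hk
    · exact h k hk
    · obtain ⟨j, rfl⟩ : ∃ j, k = j + f.natDegree := ⟨k - f.natDegree, by omega⟩
      rw [hu j, hv j]
      refine Finset.sum_congr rfl fun i hi => ?_
      have hi' := Finset.mem_range.mp hi
      rw [ih (j + i) (by omega)]

lemma isLRS_geom {f : Polynomial F} (hf : f.Monic) {ζ : E} (hζ : aeval ζ f = 0) :
    IsLRS f (fun k => ζ ^ k) := by
  have key : ζ ^ f.natDegree =
      ∑ i ∈ Finset.range f.natDegree, algebraMap F E (-(f.coeff i)) * ζ ^ i := by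
    have h1 := Polynomial.aeval_eq_sum_range (S := E) (p := f) ζ
    rw [Finset.sum_range_succ, hf.coeff_natDegree, one_smul, hζ] at h1
    have h2 : ζ ^ f.natDegree = -∑ i ∈ Finset.range f.natDegree, f.coeff i • ζ ^ i := by
      linear_combination -h1
    rw [h2, ← Finset.sum_neg_distrib]
    refine Finset.sum_congr rfl fun i _ => ?_
    rw [Algebra.smul_def, map_neg]
    ring
  intro k
  simp only [pow_add, key, Finset.mul_sum]
  refine Finset.sum_congr rfl fun i _ => by ring

lemma isLRS_sum {ι : Type*} (s : Finset ι) {f : Polynomial F} (v : ι → ℕ → E)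
    (hv : ∀ i ∈ s, IsLRS f (v i)) (a : ι → E) :
    IsLRS f (fun k => ∑ i ∈ s, a i * v i k) := by
  intro k
  simp only
  calc ∑ i ∈ s, a i * v i (k + f.natDegree)
      = ∑ i ∈ s, ∑ j ∈ Finset.range f.natDegree,
          algebraMap F E (-(f.coeff j)) * (a i * v i (k + j)) := by
        refine Finset.sum_congr rfl fun i hi => ?_
        rw [hv i hi k, Finset.mul_sum]
        exact Finset.sum_congr rfl fun j _ => by ring
    _ = ∑ j ∈ Finset.range f.natDegree, algebraMap F E (-(f.coeff j)) *
          ∑ i ∈ s, a i * v i (k + j) := by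
        rw [Finset.sum_comm]
        exact Finset.sum_congr rfl fun j _ => by rw [Finset.mul_sum]

lemma char_indep {s : ℕ} (w : Fin s → E) (hw : Function.Injective w)
    (a : Fin s → E) (h : ∀ k : ℕ, ∑ i, a i * w i ^ k = 0) : ∀ i, a i = 0 := by
  have li : LinearIndependent E
      (fun i : Fin s => ((powersHom E (w i) : Multiplicative ℕ →* E) : Multiplicative ℕ → E)) :=
    (linearIndependent_monoidHom (Multiplicative ℕ) E).comp _ ((powersHom E).injective.comp hw)
  refine Fintype.linearIndependent_iff.mp li a ?_
  funext x
  have := h (Multiplicative.toAdd x)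
  simpa [Finset.sum_apply] using this

end Aux

section FF
variable {F E : Type*} [Field F] [Fintype F] [Field E] [Fintype E] [Algebra F E]

lemma frob_aeval (g : Polynomial F) (x : E) (hx : aeval x g = 0) :
    aeval (x ^ Fintype.card F) g = 0 := by
  set p := ringChar F with hp
  haveI hf : Fact p.Prime := ⟨CharP.char_is_prime F p⟩
  haveI : CharP E p := charP_of_injective_algebraMap (algebraMap F E).injective p
  obtain ⟨n, -, hcard⟩ := FiniteField.card F p
  let φ : E →ₐ[F] E :=
    { iterateFrobenius E p n with
      commutes' := fun r => by
        show iterateFrobenius E p n (algebraMap F E r) = algebraMap F E r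
        rw [iterateFrobenius_def, ← map_pow, ← hcard, FiniteField.pow_card] }
  have h1 : aeval (φ x) g = φ (aeval x g) := aeval_algHom_apply φ x g
  have hφx : φ x = x ^ Fintype.card F := by
    show iterateFrobenius E p n x = _
    rw [iterateFrobenius_def, hcard]
  rw [← hφx, h1, hx, map_zero]

lemma conj_root (ξ : E) (i : ℕ) : aeval (ξ ^ Fintype.card F ^ i) (minpoly F ξ) = 0 := by
  induction i with
  | zero => simpa using minpoly.aeval F ξ
  | succ i ih =>
    have h : ξ ^ Fintype.card F ^ (i + 1) = (ξ ^ Fintype.card F ^ i) ^ Fintype.card F := by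
      rw [← pow_mul, ← pow_succ]
    rw [h]
    exact frob_aeval _ _ ih

lemma degree_le_of_pow_fixed {ξ : E} {d : ℕ} (hd : 0 < d)
    (hfix : ξ ^ Fintype.card F ^ d = ξ) : (minpoly F ξ).natDegree ≤ d := by
  classical
  by_contra hlt
  push_neg at hlt
  set q := Fintype.card F with hq
  set p := ringChar F with hp
  haveI hf : Fact p.Prime := ⟨CharP.char_is_prime F p⟩
  haveI : CharP E p := charP_of_injective_algebraMap (algebraMap F E).injective p
  obtain ⟨n, -, hcard⟩ := FiniteField.card F p
  have hqd : q ^ d = p ^ ((n : ℕ) * d) := by rw [hq, hcard, ← pow_mul]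
  have hint : IsIntegral F ξ := IsIntegral.of_finite F ξ
  have hfixed : ∀ x ∈ Algebra.adjoin F ({ξ} : Set E), x ^ q ^ d = x := by
    intro x hx
    induction hx using Algebra.adjoin_induction with
    | mem y hy =>
      rw [Set.mem_singleton_iff] at hy
      subst hy; exact hfix
    | algebraMap r =>
      have hr : r ^ q ^ d = r := by rw [hq]; exact FiniteField.pow_card_pow _ _
      rw [← map_pow, hr]
    | add x y hx hy ihx ihy => rw [hqd, add_pow_char_pow, ← hqd, ihx, ihy]
    | mul x y hx hy ihx ihy => rw [mul_pow, ihx, ihy]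
  set A := Algebra.adjoin F ({ξ} : Set E) with hA
  haveI : Fintype A := Fintype.ofFinite A
  have hAcard : Fintype.card A = q ^ (minpoly F ξ).natDegree := by
    rw [Module.card_eq_pow_finrank (K := F) (V := A)]
    congr 1
    rw [hA, (Algebra.adjoin.powerBasis hint).finrank, Algebra.adjoin.powerBasis_dim]
  set g : Polynomial E := X ^ q ^ d - X with hgdef
  have hq1 : 1 < q ^ d := Nat.one_lt_pow hd.ne' Fintype.one_lt_card
  have hgdeg : g.natDegree = q ^ d := by
    rw [hgdef, natDegree_sub_eq_left_of_natDegree_lt, natDegree_X_pow]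
    rw [natDegree_X, natDegree_X_pow]
    omega
  have hgne : g ≠ 0 := by
    intro h
    rw [h, natDegree_zero] at hgdeg
    omega
  have hsub : ∀ x : A, (x : E) ∈ g.roots.toFinset := by
    intro x
    rw [Multiset.mem_toFinset, mem_roots hgne]
    simp only [hgdef, IsRoot, eval_sub, eval_pow, eval_X]
    rw [hfixed x x.2, sub_self]
  have hcardle : Fintype.card A ≤ q ^ d := by
    calc Fintype.card A ≤ Fintype.card {x : E // x ∈ g.roots.toFinset} := by
          refine Fintype.card_le_of_injective (fun x => ⟨x, hsub x⟩) ?_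
          intro a b hab
          have h2 := congrArg Subtype.val hab
          exact Subtype.ext h2
      _ = g.roots.toFinset.card := Fintype.card_coe _
      _ ≤ Multiset.card g.roots := g.roots.toFinset_card_le
      _ ≤ g.natDegree := g.card_roots'
      _ = q ^ d := hgdeg
  rw [hAcard] at hcardle
  have : q ^ d < q ^ (minpoly F ξ).natDegree :=
    Nat.pow_lt_pow_right Fintype.one_lt_card hlt
  omega

lemma conj_ne {ξ : E} {m : ℕ} (hdeg : (minpoly F ξ).natDegree = m)
    (hcardE : Fintype.card E = Fintype.card F ^ m) {i j : ℕ} (hij : i < j) (hj : j < m) :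
    ξ ^ Fintype.card F ^ i ≠ ξ ^ Fintype.card F ^ j := by
  intro h
  set q := Fintype.card F with hq
  have hmfix : ξ ^ q ^ m = ξ := by rw [← hcardE]; exact FiniteField.pow_card ξ
  have hd : ξ ^ q ^ (i + (m - j)) = ξ := by
    have h2 := congrArg (fun y => y ^ q ^ (m - j)) h
    simp only [← pow_mul, ← pow_add] at h2
    have h3 : j + (m - j) = m := by omega
    rw [h3, hmfix] at h2
    exact h2
  have := degree_le_of_pow_fixed (F := F) (by omega : 0 < i + (m - j)) hd
  omega

end FF

/-- `ξ ∈ GF(qᵐ)` of degree `m` over `GF(q)` is nonstandard of degree `m`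
over `GF(q)` iff there is a nonstandard `q`-polynomial `L` over `GF(qᵐ)` (i.e. one not
of the form `c·x^{q^j}`) mapping the set `⟨ξ⟩ = {1, ξ, ξ², …}` onto itself. -/
theorem isNonstandard_iff_qPoly {F E : Type*} [Field F] [Fintype F] [Field E] [Fintype E]
    [Algebra F E] (m : ℕ) (hm : 0 < m) (hrank : Module.finrank F E = m)
    (ξ : E) (hdeg : (minpoly F ξ).natDegree = m) :
    IsNonstandard F m ξ ↔
      ∃ c : Fin m → E,
        (¬ ∃ j : Fin m, ∀ i : Fin m, i ≠ j → c i = 0) ∧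
        qPolyMap (Fintype.card F) c '' powersOf ξ = powersOf ξ := by
  classical
  rcases Nat.lt_or_ge m 2 with hm1 | hm2
  · -- m = 1 : both sides are false
    have hm1' : m = 1 := by omega
    subst hm1'
    constructor
    · rintro ⟨-, u, -, -, -, hu0, hlast⟩
      obtain ⟨i, hi⟩ := hlast ξ (minpoly.aeval F ξ)
      have hi0 : (i : ℕ) = 0 := by have := i.isLt; omega
      rw [hi0, pow_zero] at hi
      exact absurd hu0 hi
    · rintro ⟨c, hc, -⟩
      refine absurd ⟨⟨0, by omega⟩, fun i hi => ?_⟩ hc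
      exact absurd (Fin.ext (by have := i.isLt; omega)) hi
  · -- main case m ≥ 2
    set q := Fintype.card F with hq
    have hq1 : 1 < q := Fintype.one_lt_card
    have hcardE : Fintype.card E = q ^ m := by
      rw [hq, Module.card_eq_pow_finrank (K := F) (V := E), hrank]
    have hξ0 : ξ ≠ 0 := by
      rintro rfl
      have h0fix : (0 : E) ^ q ^ 1 = 0 := zero_pow (by positivity)
      have := degree_le_of_pow_fixed (F := F) one_pos h0fix
      omega
    set ζ : Fin m → E := fun i => ξ ^ q ^ (i : ℕ) with hζ
    have hζinj : Function.Injective ζ := by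
      intro i j hij
      by_contra hne
      have hne' : (i : ℕ) ≠ (j : ℕ) := fun h => hne (Fin.ext h)
      rcases Nat.lt_or_ge (i : ℕ) (j : ℕ) with h | h
      · exact conj_ne hdeg hcardE h j.isLt hij
      · exact conj_ne hdeg hcardE (by omega : (j:ℕ) < (i:ℕ)) i.isLt hij.symm
    have hζroot : ∀ i : Fin m, aeval (ζ i) (minpoly F ξ) = 0 := fun i => conj_root ξ i
    have hmonic : (minpoly F ξ).Monic := minpoly.monic (IsIntegral.of_finite F ξ)
    have hζlrs : ∀ i : Fin m, IsLRS (minpoly F ξ) (fun k => ζ i ^ k) :=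
      fun i => isLRS_geom hmonic (hζroot i)
    have hqpm : ∀ (a : Fin m → E) (k : ℕ), qPolyMap q a (ξ ^ k) = ∑ i, a i * ζ i ^ k := by
      intro a k
      refine Finset.sum_congr rfl fun i _ => ?_
      rw [hζ]
      congr 1
      rw [← pow_mul, ← pow_mul, Nat.mul_comm]
    constructor
    · -- forward direction
      rintro ⟨-, u, hulrs, -, hurange, hu0, hulast⟩
      set T : (Fin m → E) →ₗ[E] (Fin m → E) :=
        { toFun := fun a => fun j => ∑ i, a i * ζ i ^ (j : ℕ)
          map_add' := by
            intro a b
            funext j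
            simp [add_mul, Finset.sum_add_distrib]
          map_smul' := by
            intro r a
            funext j
            simp [Finset.mul_sum, smul_eq_mul, mul_assoc] } with hT
      have hTinj : Function.Injective T := by
        rw [injective_iff_map_eq_zero]
        intro a ha
        have hS : IsLRS (minpoly F ξ) (fun k => ∑ i, a i * ζ i ^ k) :=
          isLRS_sum Finset.univ _ (fun i _ => hζlrs i) a
        have hzero : IsLRS (minpoly F ξ) (fun _ => (0 : E)) := by
          intro k; simp
        have heq : (fun k => ∑ i, a i * ζ i ^ k) = (fun _ => (0:E)) := by
          refine hS.unique hzero fun i hi => ?_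
          rw [hdeg] at hi
          exact congrFun ha ⟨i, hi⟩
        have hall : ∀ k : ℕ, ∑ i, a i * ζ i ^ k = 0 := fun k => congrFun heq k
        funext i
        exact char_indep ζ hζinj a hall i
      obtain ⟨a, ha⟩ := LinearMap.injective_iff_surjective.mp hTinj (fun j => u (j : ℕ))
      have hrep : u = fun k => ∑ i, a i * ζ i ^ k := by
        refine hulrs.unique (isLRS_sum Finset.univ _ (fun i _ => hζlrs i) a) fun i hi => ?_
        rw [hdeg] at hi
        exact (congrFun ha ⟨i, hi⟩).symm
      refine ⟨a, ?_, ?_⟩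
      · rintro ⟨j, hj⟩
        have huk : ∀ k, u k = a j * ζ j ^ k := by
          intro k
          rw [hrep]
          exact Finset.sum_eq_single j (fun i _ hi => by rw [hj i hi, zero_mul])
            (fun h => absurd (Finset.mem_univ j) h)
        have haj : a j = 1 := by
          have h0 := huk 0
          rw [hu0, pow_zero, mul_one] at h0
          exact h0.symm
        obtain ⟨i, hi⟩ := hulast (ζ j) (hζroot j)
        exact hi (by rw [huk i, haj, one_mul])
      · have himg : qPolyMap q a '' powersOf ξ = Set.range u := by
          ext x
          constructor
          · rintro ⟨y, ⟨k, rfl⟩, rfl⟩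
            exact ⟨k, by rw [hrep]; exact (hqpm a k).symm⟩
          · rintro ⟨k, rfl⟩
            exact ⟨ξ ^ k, ⟨k, rfl⟩, by rw [hqpm a k, hrep]⟩
        rw [himg, hurange]
    · -- backward direction
      rintro ⟨c, hc, himg⟩
      have hcard2 : 2 ≤ Fintype.card E := Fintype.one_lt_card
      have hord : 0 < orderOf ξ := by
        refine orderOf_pos_iff.mpr (isOfFinOrder_iff_pow_eq_one.mpr ⟨Fintype.card E - 1, by omega, ?_⟩)
        exact FiniteField.pow_card_sub_one_eq_one ξ hξ0
      set n := orderOf ξ with hn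
      have hξn : ξ ^ n = 1 := pow_orderOf_eq_one ξ
      have h1mem : (1 : E) ∈ powersOf ξ := ⟨0, (pow_zero ξ).symm⟩
      have hL1 : qPolyMap q c 1 ∈ powersOf ξ := himg ▸ ⟨1, h1mem, rfl⟩
      obtain ⟨t, ht⟩ := hL1
      set e : E := ξ ^ (t * (n - 1)) with he
      have het : e * ξ ^ t = 1 := by
        obtain ⟨n', hn'⟩ : ∃ n', n = n' + 1 := ⟨n - 1, by omega⟩
        rw [he, ← pow_add]
        have harith : t * (n - 1) + t = n * t := by rw [hn', Nat.add_sub_cancel]; ring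
        rw [harith, pow_mul, hξn, one_pow]
      have he0 : e ≠ 0 := pow_ne_zero _ hξ0
      set c' : Fin m → E := fun i => e * c i with hc'
      set u : ℕ → E := fun k => ∑ i, c' i * ζ i ^ k with hu
      have huq : ∀ k, u k = e * qPolyMap q c (ξ ^ k) := by
        intro k
        rw [hu, hqpm c k, Finset.mul_sum]
        exact Finset.sum_congr rfl fun i _ => by rw [hc']; ring
      have hulrs : IsLRS (minpoly F ξ) u :=
        isLRS_sum Finset.univ _ (fun i _ => hζlrs i) c'
      have hζin : ∀ (i : Fin m), ζ i ^ n = 1 := by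
        intro i
        rw [hζ, ← pow_mul, mul_comm, pow_mul, hξn, one_pow]
      have hrange : Set.range u = powersOf ξ := by
        ext x
        constructor
        · rintro ⟨k, rfl⟩
          have hmem2 : qPolyMap q c (ξ ^ k) ∈ powersOf ξ := himg ▸ ⟨ξ ^ k, ⟨k, rfl⟩, rfl⟩
          obtain ⟨s, hs⟩ := hmem2
          exact ⟨t * (n - 1) + s, by rw [huq k, hs, he, ← pow_add]⟩
        · rintro ⟨s, rfl⟩
          have hmem2 : ξ ^ (s + t) ∈ qPolyMap q c '' powersOf ξ := himg.symm ▸ ⟨s + t, rfl⟩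
          obtain ⟨y, ⟨k, rfl⟩, hk⟩ := hmem2
          refine ⟨k, ?_⟩
          rw [huq k, hk, he, ← pow_add]
          obtain ⟨n', hn'⟩ : ∃ n', n = n' + 1 := ⟨n - 1, by omega⟩
          have harith : t * (n - 1) + (s + t) = s + n * t := by
            rw [hn', Nat.add_sub_cancel]; ring
          rw [harith, pow_add, pow_mul, hξn, one_pow, mul_one]
      have hpowinj : ∀ r s, r < n → s < n → ξ ^ r = ξ ^ s → r = s := by
        have key : ∀ r s, r ≤ s → s < n → ξ ^ r = ξ ^ s → r = s := by
          intro r s hrs hs h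
          have h2 : ξ ^ r * ξ ^ (s - r) = ξ ^ r * 1 := by
            rw [mul_one, ← pow_add, show r + (s - r) = s by omega, ← h]
          have h3 : ξ ^ (s - r) = 1 := mul_left_cancel₀ (pow_ne_zero r hξ0) h2
          have h4 := orderOf_dvd_of_pow_eq_one h3
          rcases Nat.eq_zero_or_pos (s - r) with h5 | h5
          · omega
          · have := Nat.le_of_dvd h5 h4
            omega
        intro r s hr hs h
        rcases le_total r s with hrs | hrs
        · exact key r s hrs hs h
        · exact (key s r hrs hr h.symm).symm
      have hncard : (powersOf ξ).ncard = n := by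
        have himg2 : powersOf ξ = (fun r : ℕ => ξ ^ r) '' Set.Iio n := by
          ext x
          constructor
          · rintro ⟨k, rfl⟩
            exact ⟨k % n, Nat.mod_lt k hord, pow_mod_orderOf ξ k⟩
          · rintro ⟨r, -, rfl⟩
            exact ⟨r, rfl⟩
        have hinj : Set.InjOn (fun r : ℕ => ξ ^ r) (Set.Iio n) :=
          fun r hr s hs h => hpowinj r s hr hs h
        rw [himg2, Set.ncard_image_of_injOn hinj, ← Finset.coe_Iio, Set.ncard_coe_finset,
          Nat.card_Iio]
      refine ⟨hdeg, u, hulrs, ⟨⟨hord, ?_⟩, ?_⟩, hrange, ?_, ?_⟩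
      · -- n is a period
        intro k
        rw [hu]
        refine Finset.sum_congr rfl fun i _ => ?_
        rw [pow_add, hζin i, mul_one]
      · -- n is least
        intro p hp
        obtain ⟨hp0, hper⟩ := hp
        have hsub : Set.range u ⊆ u '' Set.Iio p := by
          suffices h : ∀ k, u k ∈ u '' Set.Iio p by
            rintro x ⟨k, rfl⟩; exact h k
          intro k
          induction k using Nat.strong_induction_on with
          | _ k ih =>
            rcases Nat.lt_or_ge k p with h | h
            · exact ⟨k, h, rfl⟩
            · have heq : u k = u (k - p) := by
                conv_lhs => rw [show k = (k - p) + p by omega]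
                rw [hper]
              rw [heq]
              exact ih (k - p) (by omega)
        have h1 : n = (Set.range u).ncard := by rw [hrange, hncard]
        have h2 : (Set.range u).ncard ≤ (u '' Set.Iio p).ncard :=
          Set.ncard_le_ncard hsub ((Set.finite_Iio p).image u)
        have h3 : (u '' Set.Iio p).ncard ≤ (Set.Iio p).ncard :=
          Set.ncard_image_le (Set.finite_Iio p)
        have h4 : (Set.Iio p : Set ℕ).ncard = p := by
          rw [← Finset.coe_Iio, Set.ncard_coe_finset, Nat.card_Iio]
        omega
      · -- u 0 = 1
        have h0 := huq 0
        rw [pow_zero, ht] at h0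
        rw [h0, het]
      · -- nonstandard initial values
        intro ζ0 hζ0root
        by_contra hcon
        push_neg at hcon
        have hgeo : IsLRS (minpoly F ξ) (fun k => ζ0 ^ k) := isLRS_geom hmonic hζ0root
        have hueq : u = fun k => ζ0 ^ k := by
          refine hulrs.unique hgeo fun i hi => ?_
          rw [hdeg] at hi
          exact hcon ⟨i, hi⟩
        by_cases hmem : ∃ j : Fin m, ζ0 = ζ j
        · obtain ⟨j, rfl⟩ := hmem
          set b : Fin m → E := fun i => c' i - if i = j then 1 else 0 with hb
          have hball : ∀ k : ℕ, ∑ i, b i * ζ i ^ k = 0 := by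
            intro k
            have h1 : ∑ i, c' i * ζ i ^ k = ζ j ^ k := congrFun hueq k
            have h2 : ∑ i, (if i = j then (1:E) else 0) * ζ i ^ k = ζ j ^ k := by
              rw [Finset.sum_eq_single j (fun i _ hi => by rw [if_neg hi, zero_mul])
                (fun h => absurd (Finset.mem_univ j) h), if_pos rfl, one_mul]
            calc ∑ i, b i * ζ i ^ k
                = (∑ i, c' i * ζ i ^ k) - ∑ i, (if i = j then (1:E) else 0) * ζ i ^ k := by
                  rw [← Finset.sum_sub_distrib]
                  exact Finset.sum_congr rfl fun i _ => by rw [hb]; ring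
              _ = 0 := by rw [h1, h2, sub_self]
          have hb0 := char_indep ζ hζinj b hball
          refine hc ⟨j, fun i hij => ?_⟩
          have hbi := hb0 i
          rw [hb] at hbi
          simp only [if_neg hij, sub_zero] at hbi
          rw [hc'] at hbi
          rcases mul_eq_zero.mp hbi with h | h
          · exact absurd h he0
          · exact h
        · set w : Fin (m + 1) → E := Fin.snoc ζ ζ0 with hw
          have hwinj : Function.Injective w := by
            intro i j hij
            rcases Fin.eq_castSucc_or_eq_last i with ⟨i', rfl⟩ | rfl <;>
              rcases Fin.eq_castSucc_or_eq_last j with ⟨j', rfl⟩ | rfl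
            · rw [hw, Fin.snoc_castSucc, Fin.snoc_castSucc] at hij
              exact congrArg Fin.castSucc (hζinj hij)
            · rw [hw, Fin.snoc_castSucc, Fin.snoc_last] at hij
              exact absurd ⟨i', hij.symm⟩ hmem
            · rw [hw, Fin.snoc_castSucc, Fin.snoc_last] at hij
              exact absurd ⟨j', hij⟩ hmem
            · rfl
          set b : Fin (m + 1) → E := Fin.snoc c' (-1) with hb
          have hball : ∀ k : ℕ, ∑ i, b i * w i ^ k = 0 := by
            intro k
            rw [Fin.sum_univ_castSucc]
            simp only [hb, hw, Fin.snoc_castSucc, Fin.snoc_last]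
            have h1 : ∑ i, c' i * ζ i ^ k = ζ0 ^ k := congrFun hueq k
            rw [h1]
            ring
          have hlast := char_indep w hwinj b hball (Fin.last m)
          rw [hb, Fin.snoc_last] at hlast
          exact one_ne_zero (neg_eq_zero.mp hlast)
end

section
/- Let q be a prime power and let ξ ∈ GF(q^m)* have multiplicative order n and degree m over GF(q). The cyclic code C(n,q,{ξ}) of length n over GF(q) with defining zero ξ has a permutation automorphism group strictly larger than the group of order mn generated by the cyclic shift σ: i ↦ i−1 (mod n) and the Frobenius permutation φ: i ↦ qi (mod n) if and only if ξ is nonstandard of degree m over GF(q). -/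
open Polynomial

/-! ### Auxiliary lemmas -/

section PowArith

variable {E : Type*} [Field E] {ξ : E} {n : ℕ}

/-- Powers of `ξ` are equal iff exponents agree mod the order. -/
lemma NS.pow_eq_pow_iff_cast (hξ : ξ ≠ 0) (hn : orderOf ξ = n) (a b : ℕ) :
    ξ ^ a = ξ ^ b ↔ (a : ZMod n) = (b : ZMod n) := by
  rw [ZMod.natCast_eq_natCast_iff, ← hn]
  have hu : orderOf (Units.mk0 ξ hξ) = orderOf ξ := by
    rw [← orderOf_units, Units.val_mk0]
  rw [← hu, ← pow_eq_pow_iff_modEq]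
  constructor
  · intro h
    ext
    simpa using h
  · intro h
    have := congrArg (Units.val) h
    simpa using this

lemma NS.pow_val_natCast (hξ : ξ ≠ 0) (hn : orderOf ξ = n) [NeZero n] (a : ℕ) :
    ξ ^ ((a : ZMod n)).val = ξ ^ a := by
  rw [NS.pow_eq_pow_iff_cast hξ hn]
  simp [ZMod.natCast_val, ZMod.cast_id]

end PowArith

section Frob

variable {F E : Type*} [Field F] [Fintype F] [Field E] [Algebra F E]

/-- Evaluation of a polynomial over `F` commutes with the `q`-power Frobenius. -/
lemma NS.aeval_pow_card (P : Polynomial F) (ζ : E) :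
    aeval (ζ ^ Fintype.card F) P = (aeval ζ P) ^ Fintype.card F := by
  set p := ringChar F with hpdef
  haveI : CharP F p := ringChar.charP F
  have hp : p.Prime := CharP.char_is_prime F p
  haveI : CharP E p := charP_of_injective_algebraMap (algebraMap F E).injective p
  haveI : ExpChar E p := ExpChar.prime hp
  obtain ⟨e, -, hcard⟩ := FiniteField.card F p
  set φ := iterateFrobenius E p e with hφdef
  have hφ : ∀ x : E, φ x = x ^ Fintype.card F := by
    intro x
    rw [hφdef, iterateFrobenius_def, ← hcard]
  have hcomp : φ.comp (algebraMap F E) = algebraMap F E := by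
    ext a
    rw [RingHom.comp_apply, hφ, ← map_pow, FiniteField.pow_card]
  have h := Polynomial.hom_eval₂ P (algebraMap F E) φ ζ
  rw [hcomp, hφ, hφ] at h
  rw [aeval_def, aeval_def, ← h]

lemma NS.aeval_pow_card_pow (P : Polynomial F) (ζ : E) (s : ℕ) :
    aeval (ζ ^ (Fintype.card F) ^ s) P = (aeval ζ P) ^ (Fintype.card F) ^ s := by
  induction s with
  | zero => simp
  | succ s ih =>
    have h1 : ζ ^ (Fintype.card F) ^ (s + 1) = (ζ ^ (Fintype.card F) ^ s) ^ Fintype.card F := by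
      rw [← pow_mul, pow_succ]
    rw [h1, NS.aeval_pow_card, ih, ← pow_mul, ← pow_succ]

lemma NS.root_pow_card_pow {f : Polynomial F} {ζ : E} (h : aeval ζ f = 0) (s : ℕ) :
    aeval (ζ ^ (Fintype.card F) ^ s) f = 0 := by
  rw [NS.aeval_pow_card_pow, h, zero_pow]
  positivity

end Frob

section Roots

variable {F E : Type*} [Field F] [Fintype F] [Field E] [Fintype E] [Algebra F E]

/-- If `ξ` has degree `m = [E:F]` and `ξ^(q^d) = ξ` with `0 < d < m`, contradiction. -/
lemma NS.not_fixed (m : ℕ) (hrank : Module.finrank F E = m) (ξ : E)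
    (hdeg : (minpoly F ξ).natDegree = m) {d : ℕ} (hd0 : 0 < d) (hdm : d < m)
    (hfix : ξ ^ (Fintype.card F) ^ d = ξ) : False := by
  classical
  haveI : Module.Finite F E := Module.Finite.of_finite
  have hint : IsIntegral F ξ := IsIntegral.of_finite F ξ
  have hq2 : 1 < Fintype.card F := Fintype.one_lt_card
  set q := Fintype.card F with hqdef
  -- adjoin F {ξ} = ⊤
  have htop : Algebra.adjoin F {ξ} = ⊤ := by
    rw [← Algebra.toSubmodule_eq_top]
    apply Submodule.eq_top_of_finrank_eq
    have h1 : Module.finrank F (Algebra.adjoin F {ξ}) = (minpoly F ξ).natDegree := by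
      rw [(Algebra.adjoin.powerBasis hint).finrank, Algebra.adjoin.powerBasis_dim]
    rw [show Module.finrank F (Subalgebra.toSubmodule (Algebra.adjoin F {ξ})) =
        Module.finrank F (Algebra.adjoin F {ξ}) from rfl, h1, hdeg, hrank]
  -- every element is fixed by the d-fold q-Frobenius
  have hall : ∀ y : E, y ^ q ^ d = y := by
    intro y
    have hy : y ∈ Algebra.adjoin F {ξ} := htop ▸ Algebra.mem_top
    rw [Algebra.adjoin_singleton_eq_range_aeval] at hy
    obtain ⟨g, hg⟩ := (AlgHom.mem_range (Polynomial.aeval ξ)).mp hy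
    have h3 := NS.aeval_pow_card_pow g ξ d
    rw [hfix, hg] at h3
    exact h3.symm
  -- a generator of Eˣ then has small order
  obtain ⟨γ, hγ⟩ := IsCyclic.exists_generator (α := Eˣ)
  have hord : orderOf γ = Fintype.card Eˣ := by
    rw [orderOf_eq_card_of_forall_mem_zpowers hγ, Nat.card_eq_fintype_card]
  classical
  have hcardE : Fintype.card E = q ^ m := by
    rw [hqdef, Module.card_eq_pow_finrank (K := F) (V := E), hrank]
  have hcardU : Fintype.card Eˣ = q ^ m - 1 := by
    rw [Fintype.card_units, hcardE]
  have hγfix : γ ^ q ^ d = γ := by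
    ext
    push_cast
    exact hall _
  have h1 : γ ^ (q ^ d - 1) = 1 := by
    have hqd1 : 1 ≤ q ^ d := Nat.one_le_pow _ _ (by omega)
    have : γ ^ (q ^ d - 1) * γ = γ ^ (q ^ d - 1) * γ ^ 1 := by rw [pow_one]
    have h2 : γ ^ (q ^ d - 1) * γ = γ := by
      rw [this, ← pow_add]
      rw [show q ^ d - 1 + 1 = q ^ d from by omega]
      exact hγfix
    exact mul_right_cancel (by rw [h2, one_mul])
  have hdvd : q ^ m - 1 ∣ q ^ d - 1 := by
    rw [← hcardU, ← hord]
    exact orderOf_dvd_of_pow_eq_one h1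
  have hle : q ^ m - 1 ≤ q ^ d - 1 := by
    apply Nat.le_of_dvd _ hdvd
    have : 2 ≤ q ^ d := by
      calc 2 ≤ q := hq2
      _ = q ^ 1 := (pow_one q).symm
      _ ≤ q ^ d := Nat.pow_le_pow_right (by omega) hd0
    omega
  have hqm : q ^ d < q ^ m := Nat.pow_lt_pow_right hq2 hdm
  have : 1 ≤ q ^ d := Nat.one_le_pow _ _ (by omega)
  omega

/-- Classification of the roots of the minimal polynomial: they are the `q`-power
conjugates of `ξ`. -/
lemma NS.root_classify (m : ℕ) (hm : 0 < m) (hrank : Module.finrank F E = m) (ξ : E)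
    (hdeg : (minpoly F ξ).natDegree = m) {ζ : E} (hζ : aeval ζ (minpoly F ξ) = 0) :
    ∃ s : ℕ, s < m ∧ ζ = ξ ^ (Fintype.card F) ^ s := by
  classical
  haveI : Module.Finite F E := Module.Finite.of_finite
  have hint : IsIntegral F ξ := IsIntegral.of_finite F ξ
  set q := Fintype.card F with hqdef
  set f := minpoly F ξ with hfdef
  -- distinctness of conjugates
  have key : ∀ s t : ℕ, s < t → t < m → ξ ^ q ^ s = ξ ^ q ^ t → False := by
    intro s t hlt htm h
    set p := ringChar F with hpdef
    haveI : CharP F p := ringChar.charP F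
    have hp : p.Prime := CharP.char_is_prime F p
    haveI : CharP E p := charP_of_injective_algebraMap (algebraMap F E).injective p
    haveI : ExpChar E p := ExpChar.prime hp
    obtain ⟨e, -, hcard⟩ := FiniteField.card F p
    have hiter : ∀ (x : E) (a : ℕ), iterateFrobenius E p ((e : ℕ) * a) x = x ^ q ^ a := by
      intro x a
      rw [iterateFrobenius_def, hqdef, hcard, ← pow_mul, mul_comm (e : ℕ) a, pow_mul, ← pow_mul,
        mul_comm a (e : ℕ), pow_mul]
    have hkey : ξ ^ q ^ (t - s) = ξ := by
      have h2 : iterateFrobenius E p ((e : ℕ) * s) (ξ ^ q ^ (t - s)) =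
          iterateFrobenius E p ((e : ℕ) * s) ξ := by
        rw [hiter, hiter, ← pow_mul, ← pow_add]
        rw [show t - s + s = t from by omega]
        exact h.symm
      exact (iterateFrobenius E p ((e : ℕ) * s)).injective h2
    exact NS.not_fixed m hrank ξ hdeg (by omega) (by omega) hkey
  have hinj : Set.InjOn (fun s => ξ ^ q ^ s) (Finset.range m) := by
    intro s hs t ht h
    simp only [Finset.coe_range, Set.mem_Iio] at hs ht
    simp only at h
    rcases lt_trichotomy s t with hlt | heq | hgt
    · exact absurd (key s t hlt ht h) (fun x => x)
    · exact heq
    · exact absurd (key t s hgt hs h.symm) (fun x => x)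
  set R : Finset E := (Finset.range m).image (fun s => ξ ^ q ^ s) with hRdef
  have hcardR : R.card = m := by
    rw [hRdef, Finset.card_image_of_injOn hinj, Finset.card_range]
  -- all elements of R are roots of f.map
  set fp := f.map (algebraMap F E) with hfpdef
  have hmonic : f.Monic := minpoly.monic hint
  have hfp0 : fp ≠ 0 := (hmonic.map (algebraMap F E)).ne_zero
  have hfpdeg : fp.natDegree = m := by
    rw [hfpdef, hmonic.natDegree_map, hdeg]
  have hroot : ∀ x ∈ R, fp.IsRoot x := by
    intro x hx
    rw [hRdef, Finset.mem_image] at hx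
    obtain ⟨s, -, rfl⟩ := hx
    have := NS.root_pow_card_pow (f := f) (ζ := ξ) (minpoly.aeval F ξ) s
    rwa [IsRoot, hfpdef, eval_map, ← aeval_def]
  -- ζ must be in R
  by_contra hcon
  push_neg at hcon
  have hζR : ζ ∉ R := by
    intro hmem
    rw [hRdef, Finset.mem_image] at hmem
    obtain ⟨s, hs, hζeq⟩ := hmem
    exact hcon s (Finset.mem_range.mp hs) hζeq.symm
  have hζroot : fp.IsRoot ζ := by
    rwa [IsRoot, hfpdef, eval_map, ← aeval_def]
  have hsub : insert ζ R ⊆ fp.roots.toFinset := by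
    intro x hx
    rw [Multiset.mem_toFinset, mem_roots hfp0]
    rcases Finset.mem_insert.mp hx with h | h
    · exact h ▸ hζroot
    · exact hroot x h
  have : m + 1 ≤ m := by
    calc m + 1 = (insert ζ R).card := by rw [Finset.card_insert_of_notMem hζR, hcardR]
    _ ≤ fp.roots.toFinset.card := Finset.card_le_card hsub
    _ ≤ Multiset.card fp.roots := Multiset.toFinset_card_le _
    _ ≤ fp.natDegree := fp.card_roots'
    _ = m := hfpdeg
  omega

end Roots

section Affine

variable {n : ℕ} [NeZero n]

/-- The subgroup of affine permutations `i ↦ q^s i + t` of `ZMod n`. -/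
def NS.affSub (n : ℕ) (q m : ℕ) (hq : ((q : ZMod n)) ^ m = 1) (hm : 0 < m) :
    Subgroup (Equiv.Perm (ZMod n)) where
  carrier := {π | ∃ (s : ℕ) (t : ZMod n), ∀ i, π i = (q : ZMod n) ^ s * i + t}
  one_mem' := ⟨0, 0, fun i => by simp⟩
  mul_mem' := by
    rintro a b ⟨sa, ta, ha⟩ ⟨sb, tb, hb⟩
    refine ⟨sa + sb, (q : ZMod n) ^ sa * tb + ta, fun i => ?_⟩
    rw [Equiv.Perm.mul_apply, hb i, ha _, pow_add]
    ring
  inv_mem' := by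
    rintro a ⟨s, t, h⟩
    have hqq : (q : ZMod n) ^ s * (q : ZMod n) ^ (s * (m - 1)) = 1 := by
      rw [← pow_add, show s + s * (m - 1) = s * m from by
        cases m with
        | zero => omega
        | succ k => simp only [Nat.succ_sub_one]; ring, pow_mul', hq, one_pow]
    refine ⟨s * (m - 1), -((q : ZMod n) ^ (s * (m - 1)) * t), fun i => ?_⟩
    have : a ((q : ZMod n) ^ (s * (m - 1)) * i + -((q : ZMod n) ^ (s * (m - 1)) * t)) = i := by
      rw [h _]
      calc (q : ZMod n) ^ s * ((q : ZMod n) ^ (s * (m - 1)) * i +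
            -((q : ZMod n) ^ (s * (m - 1)) * t)) + t
          = ((q : ZMod n) ^ s * (q : ZMod n) ^ (s * (m - 1))) * i -
            ((q : ZMod n) ^ s * (q : ZMod n) ^ (s * (m - 1))) * t + t := by ring
        _ = i := by rw [hqq]; ring
    rw [show (a⁻¹ : Equiv.Perm (ZMod n)) = a.symm from rfl, Equiv.symm_apply_eq]
    exact this.symm

/-- The shift-and-Frobenius generating set. -/
def NS.genSet (n q : ℕ) : Set (Equiv.Perm (ZMod n)) :=
  {π' : Equiv.Perm (ZMod n) | (∀ i, π' i = i - 1) ∨ (∀ i, π' i = (q : ZMod n) * i)}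

/-- Members of the closure are affine. -/
lemma NS.closure_mem_affine {q m : ℕ} (hq : ((q : ZMod n)) ^ m = 1) (hm : 0 < m)
    {π : Equiv.Perm (ZMod n)} (hπ : π ∈ Subgroup.closure (NS.genSet n q)) :
    ∃ (s : ℕ) (t : ZMod n), ∀ i, π i = (q : ZMod n) ^ s * i + t := by
  refine (Subgroup.closure_le (NS.affSub n q m hq hm)).mpr ?_ hπ
  rintro π' (h | h)
  · exact ⟨0, -1, fun i => by rw [h i]; simp [sub_eq_add_neg]⟩
  · exact ⟨1, 0, fun i => by rw [h i]; simp⟩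

/-- Affine maps with multiplier a power of `q` lie in the closure. -/
lemma NS.affine_mem_closure {q m : ℕ} (hq : ((q : ZMod n)) ^ m = 1) (hm : 0 < m)
    (π : Equiv.Perm (ZMod n)) (s : ℕ) (t : ZMod n)
    (h : ∀ i, π i = (q : ZMod n) ^ s * i + t) :
    π ∈ Subgroup.closure (NS.genSet n q) := by
  have hq1 : (q : ZMod n) * (q : ZMod n) ^ (m - 1) = 1 := by
    rw [← pow_succ', show m - 1 + 1 = m from by omega, hq]
  -- the shift
  set σ : Equiv.Perm (ZMod n) := Equiv.subRight (1 : ZMod n) with hσdef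
  have hσ : σ ∈ NS.genSet n q := Or.inl (fun i => by rw [hσdef]; simp)
  have hσpow : ∀ (a : ℕ) (i : ZMod n), (σ ^ a) i = i - (a : ZMod n) := by
    intro a
    induction a with
    | zero => intro i; simp
    | succ a ih =>
      intro i
      rw [pow_succ, Equiv.Perm.mul_apply, hσdef, Equiv.subRight_apply, ih]
      push_cast
      ring
  -- the Frobenius multiplier
  set φp : Equiv.Perm (ZMod n) :=
    { toFun := fun i => (q : ZMod n) * i
      invFun := fun i => (q : ZMod n) ^ (m - 1) * i
      left_inv := fun i => by
        simp only
        rw [← mul_assoc, mul_comm ((q : ZMod n) ^ (m - 1)), hq1, one_mul]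
      right_inv := fun i => by
        simp only
        rw [← mul_assoc, hq1, one_mul] } with hφdef
  have hφ : φp ∈ NS.genSet n q := Or.inr (fun i => rfl)
  have hφpow : ∀ (a : ℕ) (i : ZMod n), (φp ^ a) i = (q : ZMod n) ^ a * i := by
    intro a
    induction a with
    | zero => intro i; simp
    | succ a ih =>
      intro i
      rw [pow_succ, Equiv.Perm.mul_apply, ih]
      show (q : ZMod n) ^ a * ((q : ZMod n) * i) = _
      rw [pow_succ]
      ring
  -- write π as φp^s * σ^(a.val) with a = q^(s*(m-1)) * (-t)
  have hqsq : (q : ZMod n) ^ s * (q : ZMod n) ^ (s * (m - 1)) = 1 := by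
    rw [← pow_add, show s + s * (m - 1) = s * m from by
      cases m with
      | zero => omega
      | succ k => simp only [Nat.succ_sub_one]; ring, pow_mul', hq, one_pow]
  set α : ZMod n := (q : ZMod n) ^ (s * (m - 1)) * (-t) with hαdef
  have hπeq : π = φp ^ s * σ ^ (α.val) := by
    ext i
    rw [Equiv.Perm.mul_apply, hσpow, hφpow, h i, ZMod.natCast_val, ZMod.cast_id]
    rw [hαdef]
    have hrr : (q : ZMod n) ^ s * (i - (q : ZMod n) ^ (s * (m - 1)) * (-t))
        = (q : ZMod n) ^ s * i + ((q : ZMod n) ^ s * (q : ZMod n) ^ (s * (m - 1))) * t := by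
      ring
    rw [hrr, hqsq, one_mul]
  rw [hπeq]
  exact Subgroup.mul_mem _ (Subgroup.pow_mem _ (Subgroup.subset_closure hφ) s)
    (Subgroup.pow_mem _ (Subgroup.subset_closure hσ) _)

/-- Inverses of affine maps are affine. -/
lemma NS.affine_inv {q m : ℕ} (hq : ((q : ZMod n)) ^ m = 1) (hm : 0 < m)
    (π : Equiv.Perm (ZMod n)) (s : ℕ) (t : ZMod n)
    (h : ∀ i, π i = (q : ZMod n) ^ s * i + t) :
    ∃ (s' : ℕ) (t' : ZMod n), ∀ i, π⁻¹ i = (q : ZMod n) ^ s' * i + t' :=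
  (NS.affSub n q m hq hm).inv_mem' ⟨s, t, h⟩

end Affine

section LRSSum

variable {F E : Type*} [Field F] [Field E] [Algebra F E]

/-- `p ↦ ∑ algebraMap (p.coeff k) * u k` as an additive monoid hom. -/
noncomputable def NS.lrsSum (u : ℕ → E) : Polynomial F →+ E where
  toFun p := p.sum fun k a => algebraMap F E a * u k
  map_zero' := Polynomial.sum_zero_index _
  map_add' p q := by
    simpa using Polynomial.sum_add_index p q (fun k a => algebraMap F E a * u k)
      (fun i => by rw [map_zero, zero_mul])
      (fun a b₁ b₂ => by rw [map_add, add_mul])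

lemma NS.lrsSum_monomial (u : ℕ → E) (k : ℕ) (a : F) :
    NS.lrsSum u (monomial k a) = algebraMap F E a * u k := by
  show (monomial k a).sum (fun k a => algebraMap F E a * u k) = algebraMap F E a * u k
  exact Polynomial.sum_monomial_index a _ (by rw [map_zero, zero_mul])

lemma NS.lrs_key {f : Polynomial F} {m : ℕ} (hdeg : f.natDegree = m) (hmonic : f.Monic)
    {u : ℕ → E} (hu : IsLRS f u) (a : ℕ) :
    ∑ i ∈ Finset.range (m + 1), algebraMap F E (f.coeff i) * u (a + i) = 0 := by
  rw [Finset.sum_range_succ]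
  have hc : f.coeff m = 1 := by rw [← hdeg]; exact hmonic.coeff_natDegree
  have hu' := hu a
  rw [hdeg] at hu'
  rw [hc, map_one, one_mul, hu', ← Finset.sum_add_distrib]
  apply Finset.sum_eq_zero
  intro i _
  rw [map_neg, neg_mul, add_neg_cancel]

lemma NS.lrsSum_mul {f : Polynomial F} {m : ℕ} (hdeg : f.natDegree = m) (hmonic : f.Monic)
    {u : ℕ → E} (hu : IsLRS f u) (g : Polynomial F) :
    NS.lrsSum u (f * g) = 0 := by
  induction g using Polynomial.induction_on' with
  | add p q hp hq => rw [mul_add, map_add, hp, hq, add_zero]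
  | monomial k b =>
    conv_lhs => rw [f.as_sum_range' (m + 1) (by omega)]
    rw [Finset.sum_mul, map_sum]
    have hterm : ∀ i, NS.lrsSum u (monomial i (f.coeff i) * monomial k b) =
        algebraMap F E b * (algebraMap F E (f.coeff i) * u (k + i)) := by
      intro i
      rw [monomial_mul_monomial, NS.lrsSum_monomial, map_mul, add_comm i k]
      ring
    calc ∑ i ∈ Finset.range (m + 1), NS.lrsSum u (monomial i (f.coeff i) * monomial k b)
        = algebraMap F E b *
          ∑ i ∈ Finset.range (m + 1), algebraMap F E (f.coeff i) * u (k + i) := by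
          rw [Finset.mul_sum]
          exact Finset.sum_congr rfl (fun i _ => hterm i)
      _ = 0 := by rw [NS.lrs_key hdeg hmonic hu k, mul_zero]

end LRSSum

section Extract

variable {F E : Type*} [Field F] [Field E] [Algebra F E]

lemma NS.lrs_of_key {f : Polynomial F} {m : ℕ} (hdeg : f.natDegree = m) (hmonic : f.Monic)
    {w : ℕ → E} (h : ∀ a, ∑ i ∈ Finset.range (m + 1), algebraMap F E (f.coeff i) * w (a + i) = 0) :
    IsLRS f w := by
  intro k
  rw [hdeg]
  have hc : f.coeff m = 1 := by rw [← hdeg]; exact hmonic.coeff_natDegree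
  have h1 := h k
  rw [Finset.sum_range_succ, hc, map_one, one_mul] at h1
  have h2 : w (k + m) = -∑ i ∈ Finset.range m, algebraMap F E (f.coeff i) * w (k + i) := by
    linear_combination h1
  rw [h2, ← Finset.sum_neg_distrib]
  exact Finset.sum_congr rfl fun i _ => by rw [map_neg, neg_mul]

lemma NS.geom_lrs {f : Polynomial F} {m : ℕ} (hdeg : f.natDegree = m) (hmonic : f.Monic)
    {ζ : E} (hζ : aeval ζ f = 0) : IsLRS f (fun k => ζ ^ k) := by
  apply NS.lrs_of_key hdeg hmonic
  intro a
  have hsum : ∑ i ∈ Finset.range (m + 1), algebraMap F E (f.coeff i) * ζ ^ i = 0 := by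
    rw [aeval_eq_sum_range, hdeg] at hζ
    rw [← hζ]
    exact Finset.sum_congr rfl fun i _ => by rw [Algebra.smul_def]
  calc ∑ i ∈ Finset.range (m + 1), algebraMap F E (f.coeff i) * ζ ^ (a + i)
      = ζ ^ a * ∑ i ∈ Finset.range (m + 1), algebraMap F E (f.coeff i) * ζ ^ i := by
        rw [Finset.mul_sum]
        exact Finset.sum_congr rfl fun i _ => by rw [pow_add]; ring
    _ = 0 := by rw [hsum, mul_zero]

end Extract

/-- for `ξ ∈ GF(qᵐ)*` of order `n` and degree `m` over `GF(q)`, the cyclic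
code `C(n, q, {ξ})` has a permutation automorphism outside the group generated by the
cyclic shift `i ↦ i - 1` and the Frobenius permutation `i ↦ q·i` (a group of order `mn`)
iff `ξ` is nonstandard of degree `m` over `GF(q)`. -/
theorem extraAut_iff_isNonstandard {F E : Type*} [Field F] [Fintype F] [Field E] [Fintype E]
    [Algebra F E] (m n : ℕ) [NeZero n] (hm : 0 < m) (hrank : Module.finrank F E = m)
    (ξ : E) (hξ : ξ ≠ 0) (hdeg : (minpoly F ξ).natDegree = m) (hn : orderOf ξ = n) :
    (∃ π : Equiv.Perm (ZMod n),
        (∀ c : ZMod n → F, (∑ i : ZMod n, algebraMap F E (c i) * ξ ^ i.val) = 0 →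
          (∑ i : ZMod n, algebraMap F E (c (π i)) * ξ ^ i.val) = 0) ∧
        π ∉ Subgroup.closure {π' : Equiv.Perm (ZMod n) |
          (∀ i, π' i = i - 1) ∨ (∀ i, π' i = (Fintype.card F : ZMod n) * i)}) ↔
      IsNonstandard F m ξ := by
  classical
  have hn0 : 0 < n := Nat.pos_of_ne_zero (NeZero.ne n)
  haveI : Module.Finite F E := Module.Finite.of_finite
  have hint : IsIntegral F ξ := IsIntegral.of_finite F ξ
  have hmonic : (minpoly F ξ).Monic := minpoly.monic hint
  have hL1 : ∀ a b : ℕ, ξ ^ a = ξ ^ b ↔ (a : ZMod n) = (b : ZMod n) :=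
    NS.pow_eq_pow_iff_cast hξ hn
  have hLv : ∀ a : ℕ, ξ ^ ((a : ZMod n)).val = ξ ^ a := NS.pow_val_natCast hξ hn
  have hxv : ∀ x : ZMod n, ((x.val : ℕ) : ZMod n) = x := fun x => ZMod.natCast_rightInverse x
  have hq1 : 0 < Fintype.card F := Fintype.card_pos
  -- `q^m = 1` in `ZMod n`
  have hdvd : n ∣ Fintype.card F ^ m - 1 := by
    have h1 : orderOf (Units.mk0 ξ hξ) = n := by
      have h2 : orderOf ((Units.mk0 ξ hξ : Eˣ) : E) = orderOf (Units.mk0 ξ hξ) := orderOf_units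
      rw [Units.val_mk0] at h2
      rw [← h2, hn]
    have h3 : Fintype.card Eˣ = Fintype.card F ^ m - 1 := by
      rw [Fintype.card_units, Module.card_eq_pow_finrank (K := F) (V := E), hrank]
    rw [← h1, ← h3]
    exact orderOf_dvd_card
  have hqm : ((Fintype.card F : ZMod n)) ^ m = 1 := by
    have h2 : ((Fintype.card F ^ m - 1 : ℕ) : ZMod n) = 0 :=
      (ZMod.natCast_eq_zero_iff _ n).2 hdvd
    have h3 : 1 ≤ Fintype.card F ^ m := Nat.one_le_pow _ _ hq1
    calc ((Fintype.card F : ZMod n)) ^ m = ((Fintype.card F ^ m : ℕ) : ZMod n) := by push_cast; ring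
      _ = ((Fintype.card F ^ m - 1 + 1 : ℕ) : ZMod n) := by rw [Nat.sub_add_cancel h3]
      _ = 1 := by rw [Nat.cast_add, h2, Nat.cast_one, zero_add]
  have hchi : ∀ x y : ZMod n, ξ ^ (x + y).val = ξ ^ x.val * ξ ^ y.val := by
    intro x y
    rw [← pow_add, hL1, Nat.cast_add, hxv, hxv, hxv]
  constructor
  · -- extra automorphism ⇒ nonstandard
    rintro ⟨π, hcode, hπ⟩
    set ρ : Equiv.Perm (ZMod n) := π.symm with hρdef
    set v : ℕ → E := fun k => ξ ^ ((ρ ((k : ZMod n))).val) with hvdef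
    set u : ℕ → E := fun k => ξ ^ ((ρ ((k : ZMod n)) - ρ 0).val) with hudef
    -- Step A: `v` satisfies the key sums
    have hvkey : ∀ k, ∑ i ∈ Finset.range (m + 1),
        algebraMap F E ((minpoly F ξ).coeff i) * v (k + i) = 0 := by
      intro k
      set c : ZMod n → F := fun j => ∑ i ∈ Finset.range (m + 1),
        if (((k + i : ℕ) : ZMod n)) = j then (minpoly F ξ).coeff i else 0 with hcdef
      have claim1 : ∀ w : ZMod n → E, ∑ j : ZMod n, algebraMap F E (c j) * w j =
          ∑ i ∈ Finset.range (m + 1),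
            algebraMap F E ((minpoly F ξ).coeff i) * w (((k + i : ℕ) : ZMod n)) := by
        intro w
        have hterm : ∀ j : ZMod n, algebraMap F E (c j) * w j =
            ∑ i ∈ Finset.range (m + 1),
              (if (((k + i : ℕ) : ZMod n)) = j
                then algebraMap F E ((minpoly F ξ).coeff i) * w j else 0) := by
          intro j
          rw [hcdef]
          simp only [map_sum, apply_ite (algebraMap F E), map_zero, Finset.sum_mul, ite_mul,
            zero_mul]
        calc ∑ j : ZMod n, algebraMap F E (c j) * w j
            = ∑ j : ZMod n, ∑ i ∈ Finset.range (m + 1),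
              (if (((k + i : ℕ) : ZMod n)) = j
                then algebraMap F E ((minpoly F ξ).coeff i) * w j else 0) := by
              exact Finset.sum_congr rfl fun j _ => hterm j
          _ = ∑ i ∈ Finset.range (m + 1), ∑ j : ZMod n,
              (if (((k + i : ℕ) : ZMod n)) = j
                then algebraMap F E ((minpoly F ξ).coeff i) * w j else 0) := Finset.sum_comm
          _ = ∑ i ∈ Finset.range (m + 1),
              algebraMap F E ((minpoly F ξ).coeff i) * w (((k + i : ℕ) : ZMod n)) := by
              exact Finset.sum_congr rfl fun i _ => by
                rw [Finset.sum_ite_eq Finset.univ (((k + i : ℕ) : ZMod n))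
                  (fun j => algebraMap F E ((minpoly F ξ).coeff i) * w j)]
                simp
      have hyp : ∑ j : ZMod n, algebraMap F E (c j) * ξ ^ (j.val) = 0 := by
        rw [claim1 (fun j => ξ ^ j.val)]
        have h5 : ∀ i, ξ ^ ((((k + i : ℕ) : ZMod n)).val) = ξ ^ k * ξ ^ i := by
          intro i
          rw [hLv, pow_add]
        calc ∑ i ∈ Finset.range (m + 1),
              algebraMap F E ((minpoly F ξ).coeff i) * ξ ^ ((((k + i : ℕ) : ZMod n)).val)
            = ξ ^ k * ∑ i ∈ Finset.range (m + 1),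
              algebraMap F E ((minpoly F ξ).coeff i) * ξ ^ i := by
              rw [Finset.mul_sum]
              exact Finset.sum_congr rfl fun i _ => by rw [h5 i]; ring
          _ = 0 := by
              have hz : ∑ i ∈ Finset.range (m + 1),
                  algebraMap F E ((minpoly F ξ).coeff i) * ξ ^ i = 0 := by
                have haev := minpoly.aeval F ξ
                rw [aeval_eq_sum_range, hdeg] at haev
                rw [← haev]
                exact Finset.sum_congr rfl fun i _ => by rw [Algebra.smul_def]
              rw [hz, mul_zero]
      have happ := hcode c hyp
      have hre : ∑ j : ZMod n, algebraMap F E (c (π j)) * ξ ^ (j.val) =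
          ∑ l : ZMod n, algebraMap F E (c l) * ξ ^ ((ρ l).val) := by
        rw [← Equiv.sum_comp π (fun l => algebraMap F E (c l) * ξ ^ ((ρ l).val))]
        exact Finset.sum_congr rfl fun j _ => by rw [hρdef, Equiv.symm_apply_apply]
      rw [hre] at happ
      rw [claim1 (fun l => ξ ^ ((ρ l).val))] at happ
      exact happ
    have hvlrs : IsLRS (minpoly F ξ) v := NS.lrs_of_key hdeg hmonic hvkey
    -- Step C: `u` is an LRS
    have hw0 : ξ ^ ((ρ 0).val) ≠ 0 := pow_ne_zero _ hξ
    have hu_v : ∀ k, u k * ξ ^ ((ρ 0).val) = v k := by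
      intro k
      rw [hudef, hvdef]
      show ξ ^ ((ρ ((k : ZMod n)) - ρ 0).val) * ξ ^ ((ρ 0).val) = ξ ^ ((ρ ((k : ZMod n))).val)
      rw [← hchi, sub_add_cancel]
    have hulrs : IsLRS (minpoly F ξ) u := by
      intro k
      have h6 := hvlrs k
      apply mul_right_cancel₀ hw0
      rw [hu_v, h6, Finset.sum_mul]
      exact Finset.sum_congr rfl fun i _ => by rw [mul_assoc, hu_v]
    -- Step D: least period
    have huleast : IsLeast {p : ℕ | 0 < p ∧ ∀ k, u (k + p) = u k} n := by
      constructor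
      · refine ⟨hn0, fun k => ?_⟩
        have h7 : (((k + n : ℕ)) : ZMod n) = ((k : ℕ) : ZMod n) := by
          push_cast
          simp
        rw [hudef]
        show ξ ^ ((ρ (((k + n : ℕ) : ZMod n)) - ρ 0).val) = ξ ^ ((ρ ((k : ZMod n)) - ρ 0).val)
        rw [h7]
      · rintro p ⟨hp0, hp⟩
        by_contra hlt
        push_neg at hlt
        have h8 : u p = u 0 := by
          have := hp 0
          simpa using this
        have h9 : ξ ^ ((ρ ((p : ZMod n)) - ρ 0).val) = ξ ^ ((ρ ((0 : ℕ) : ZMod n) - ρ 0).val) :=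
          h8
        rw [hL1, hxv, hxv] at h9
        have h10 : ρ ((p : ZMod n)) = ρ (((0 : ℕ) : ZMod n)) := by
          have h10' := congrArg (· + ρ 0) h9
          simpa [sub_add_cancel] using h10'
        have h11 : ((p : ZMod n)) = (((0 : ℕ) : ZMod n)) := ρ.injective h10
        rw [Nat.cast_zero] at h11
        have h12 : n ∣ p := (ZMod.natCast_eq_zero_iff p n).1 h11
        exact absurd (Nat.le_of_dvd hp0 h12) (by omega)
    -- Step E: range u = powersOf ξ
    have hurange : Set.range u = powersOf ξ := by
      ext x
      constructor
      · rintro ⟨k, rfl⟩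
        exact ⟨(ρ ((k : ZMod n)) - ρ 0).val, rfl⟩
      · rintro ⟨k, rfl⟩
        refine ⟨(π (((k : ZMod n)) + ρ 0)).val, ?_⟩
        rw [hudef]
        show ξ ^ ((ρ ((((π (((k : ZMod n)) + ρ 0)).val : ℕ) : ZMod n)) - ρ 0).val) = ξ ^ k
        rw [hxv, hρdef, Equiv.symm_apply_apply, add_sub_cancel_right, hLv]
    -- Step F
    have hu0 : u 0 = 1 := by
      rw [hudef]
      show ξ ^ ((ρ (((0 : ℕ) : ZMod n)) - ρ 0).val) = 1
      rw [Nat.cast_zero, sub_self, ZMod.val_zero, pow_zero]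
    refine ⟨hdeg, u, hulrs, by rwa [hn], hurange, hu0, ?_⟩
    -- Step G: the nonstandardness condition
    intro ζ hζ
    by_contra hcontra
    push_neg at hcontra
    have hgeo : IsLRS (minpoly F ξ) (fun k => ζ ^ k) := NS.geom_lrs hdeg hmonic hζ
    have hulrs' : ∀ a, u (a + m) = ∑ i ∈ Finset.range m,
        algebraMap F E (-((minpoly F ξ).coeff i)) * u (a + i) := by
      intro a
      have := hulrs a
      rwa [hdeg] at this
    have hgeo' : ∀ a, ζ ^ (a + m) = ∑ i ∈ Finset.range m,
        algebraMap F E (-((minpoly F ξ).coeff i)) * ζ ^ (a + i) := by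
      intro a
      have := hgeo a
      rwa [hdeg] at this
    have hall : ∀ k, u k = ζ ^ k := by
      intro k
      induction k using Nat.strong_induction_on with
      | _ k ih =>
        by_cases hk : k < m
        · exact hcontra ⟨k, hk⟩
        · push_neg at hk
          have hk' : k = (k - m) + m := by omega
          rw [hk', hulrs' (k - m), hgeo' (k - m)]
          exact Finset.sum_congr rfl fun i hi => by
            rw [ih ((k - m) + i) (by simp at hi; omega)]
    obtain ⟨s, hsm, hζeq⟩ := NS.root_classify m hm hrank ξ hdeg hζ
    have haff : ∀ j : ZMod n, ρ j = (Fintype.card F : ZMod n) ^ s * j + ρ 0 := by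
      intro j
      have h13 := hall (j.val)
      rw [hudef, hζeq] at h13
      have h14 : ξ ^ ((ρ (((j.val : ℕ) : ZMod n)) - ρ 0).val) =
          ξ ^ (Fintype.card F ^ s * j.val) := by
        rw [← pow_mul] at h13
        exact h13
      rw [hxv] at h14
      rw [hL1, hxv] at h14
      rw [Nat.cast_mul, Nat.cast_pow, hxv] at h14
      linear_combination h14
    have h15 : π.symm ∈ Subgroup.closure (NS.genSet n (Fintype.card F)) :=
      NS.affine_mem_closure hqm hm π.symm s (ρ 0) haff
    have h16 : π ∈ Subgroup.closure (NS.genSet n (Fintype.card F)) := by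
      have h17 := Subgroup.inv_mem _ h15
      simpa [Equiv.Perm.inv_def] using h17
    exact hπ h16
  · -- nonstandard ⇒ extra automorphism
    rintro ⟨-, u, hlrs, hleast, hrange, hu0, hne⟩
    rw [hn] at hleast
    have hper : ∀ k, u (k + n) = u k := hleast.1.2
    have hmod : ∀ k, u k = u (k % n) := by
      intro k
      induction k using Nat.strong_induction_on with
      | _ k ih =>
        by_cases hk : k < n
        · rw [Nat.mod_eq_of_lt hk]
        · push_neg at hk
          have e1 : u k = u (k - n) := by
            have e2 := hper (k - n)
            rw [show k - n + n = k from by omega] at e2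
            exact e2
          rw [e1, Nat.mod_eq_sub_mod hk]
          exact ih (k - n) (by omega)
    -- u is injective on [0, n)
    have hdist : ∀ a b : ℕ, a < n → b < n → u a = u b → a = b := by
      have hmemP : ∀ a : ℕ, u a ∈ powersOf ξ := by
        intro a
        rw [← hrange]
        exact ⟨a, rfl⟩
      set fu : Fin n → ↥(powersOf ξ) := fun a => ⟨u a, hmemP a⟩ with hfudef
      haveI : Fintype ↥(powersOf ξ) := Fintype.ofFinite _
      have hβ : Function.Bijective (fun a : Fin n => (⟨ξ ^ (a : ℕ), ⟨a, rfl⟩⟩ : ↥(powersOf ξ))) := by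
        constructor
        · intro a b hab
          have hab' : ξ ^ (a : ℕ) = ξ ^ (b : ℕ) := congrArg Subtype.val hab
          rw [hL1, ZMod.natCast_eq_natCast_iff] at hab'
          have := (Nat.ModEq.eq_of_lt_of_lt hab' a.isLt b.isLt)
          exact Fin.ext this
        · rintro ⟨x, k, rfl⟩
          refine ⟨⟨k % n, Nat.mod_lt _ hn0⟩, ?_⟩
          apply Subtype.ext
          show ξ ^ (k % n) = ξ ^ k
          rw [hL1]
          exact (ZMod.natCast_eq_natCast_iff _ _ _).2 (Nat.mod_modEq k n)
      have hcardP : Fintype.card (Fin n) = Fintype.card ↥(powersOf ξ) :=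
        Fintype.card_of_bijective hβ
      have hfusurj : Function.Surjective fu := by
        rintro ⟨x, k, rfl⟩
        have hx : ξ ^ k ∈ Set.range u := by rw [hrange]; exact ⟨k, rfl⟩
        obtain ⟨j, hj⟩ := hx
        refine ⟨⟨j % n, Nat.mod_lt _ hn0⟩, ?_⟩
        apply Subtype.ext
        show u (j % n) = ξ ^ k
        rw [← hmod j, hj]
      have hfubij : Function.Bijective fu :=
        (Fintype.bijective_iff_surjective_and_card fu).2 ⟨hfusurj, hcardP⟩
      intro a b ha hb hab
      have h1 : fu ⟨a, ha⟩ = fu ⟨b, hb⟩ := Subtype.ext hab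
      simpa using congrArg Fin.val (hfubij.1 h1)
    -- the exponent permutation
    have hex : ∀ j : ZMod n, ∃ k : ℕ, u j.val = ξ ^ k := by
      intro j
      have hj : u j.val ∈ powersOf ξ := by rw [← hrange]; exact ⟨_, rfl⟩
      exact hj
    set ρfun : ZMod n → ZMod n := fun j => ((Classical.choose (hex j) : ℕ) : ZMod n) with hρdef
    have hρ : ∀ j : ZMod n, ξ ^ ((ρfun j).val) = u j.val := by
      intro j
      rw [hρdef]
      show ξ ^ (((Classical.choose (hex j) : ℕ) : ZMod n)).val = u j.val
      rw [hLv]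
      exact (Classical.choose_spec (hex j)).symm
    have hρinj : Function.Injective ρfun := by
      intro a b hab
      have h1 : u a.val = u b.val := by rw [← hρ a, ← hρ b, hab]
      have h2 := hdist a.val b.val (ZMod.val_lt a) (ZMod.val_lt b) h1
      calc a = ((a.val : ℕ) : ZMod n) := (hxv a).symm
        _ = ((b.val : ℕ) : ZMod n) := by rw [h2]
        _ = b := hxv b
    set ρe : Equiv.Perm (ZMod n) :=
      Equiv.ofBijective ρfun (Finite.injective_iff_bijective.mp hρinj) with hρedef
    have hρ2 : ∀ j : ZMod n, ξ ^ ((ρe j).val) = u j.val := fun j => hρ j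
    refine ⟨ρe⁻¹, ?_, ?_⟩
    · -- code preservation
      intro c hc
      have hreidx : ∑ i : ZMod n, algebraMap F E (c ((ρe⁻¹ : Equiv.Perm (ZMod n)) i)) * ξ ^ i.val =
          ∑ l : ZMod n, algebraMap F E (c l) * u l.val := by
        rw [← Equiv.sum_comp ρe
          (fun i => algebraMap F E (c ((ρe⁻¹ : Equiv.Perm (ZMod n)) i)) * ξ ^ i.val)]
        refine Finset.sum_congr rfl fun l _ => ?_
        have h1 : (ρe⁻¹ : Equiv.Perm (ZMod n)) (ρe l) = l := ρe.symm_apply_apply l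
        rw [h1, hρ2]
      rw [hreidx]
      set P : Polynomial F := ∑ j : ZMod n, monomial j.val (c j) with hPdef
      have haevP : aeval ξ P = 0 := by
        rw [hPdef, map_sum, ← hc]
        exact Finset.sum_congr rfl fun j _ => by rw [aeval_monomial]
      obtain ⟨g, hg⟩ := minpoly.dvd F ξ haevP
      have hsum1 : NS.lrsSum u P = ∑ j : ZMod n, algebraMap F E (c j) * u j.val := by
        rw [hPdef, map_sum]
        exact Finset.sum_congr rfl fun j _ => NS.lrsSum_monomial u j.val (c j)
      rw [← hsum1, hg]
      exact NS.lrsSum_mul hdeg hmonic hlrs g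
    · -- outside the affine group
      intro hmem
      obtain ⟨s, t, hst⟩ := NS.closure_mem_affine hqm hm hmem
      obtain ⟨s', t', hst'⟩ := NS.affine_inv hqm hm ρe⁻¹ s t hst
      have hst'' : ∀ i, ρe i = (Fintype.card F : ZMod n) ^ s' * i + t' := by
        intro i
        have h1 := hst' i
        rwa [inv_inv] at h1
      have ht0 : t' = 0 := by
        have h1 : ξ ^ ((ρe 0).val) = u (0 : ZMod n).val := hρ2 0
        rw [ZMod.val_zero, hu0] at h1
        have h2 : ξ ^ ((ρe 0).val) = ξ ^ (0 : ℕ) := by rw [pow_zero]; exact h1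
        rw [hL1, hxv, Nat.cast_zero] at h2
        have h3 := hst'' 0
        rw [mul_zero, zero_add] at h3
        rw [← h3]
        exact h2
      have hallk : ∀ k : ℕ, u k = (ξ ^ (Fintype.card F ^ s')) ^ k := by
        intro k
        have h3 : u k = u (((k : ZMod n)).val) := by
          rw [hmod k, ZMod.val_natCast]
        rw [h3, ← hρ2 ((k : ZMod n)), hst'' _, ht0, add_zero]
        have h4 : ((Fintype.card F : ZMod n)) ^ s' * ((k : ZMod n)) =
            (((Fintype.card F ^ s' * k : ℕ)) : ZMod n) := by push_cast; ring
        rw [h4, hLv, pow_mul]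
      have hζroot : aeval (ξ ^ (Fintype.card F ^ s')) (minpoly F ξ) = 0 :=
        NS.root_pow_card_pow (minpoly.aeval F ξ) s'
      obtain ⟨i, hi⟩ := hne (ξ ^ (Fintype.card F ^ s')) hζroot
      exact hi (hallk i)
end

section
/- Let q be a prime power, let φ be nonstandard of degree m over GF(q), and let ξ be an element of an extension of GF(q) with ⟨ξ⟩ = ⟨φ⟩ (i.e., ξ generates the same cyclic group as φ). Then ξ is also nonstandard of degree m over GF(q), with the same multiplicative order and the same q-order as φ. -/
open Polynomial IntermediateField

/-- The shift operator on sequences, as an `F`-linear endomorphism. -/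
noncomputable def shiftMap (F : Type*) (E : Type*) [Field F] [Field E] [Algebra F E] :
    Module.End F (ℕ → E) where
  toFun u := fun j => u (j + 1)
  map_add' _ _ := rfl
  map_smul' _ _ := rfl

lemma shiftMap_pow_apply {F E : Type*} [Field F] [Field E] [Algebra F E]
    (i : ℕ) (u : ℕ → E) (j : ℕ) : ((shiftMap F E) ^ i) u j = u (j + i) := by
  induction i generalizing u with
  | zero => rfl
  | succ i ih =>
      rw [pow_succ, Module.End.mul_apply, ih]
      rfl

lemma aeval_shiftMap_pow_apply {F E : Type*} [Field F] [Field E] [Algebra F E]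
    (p : Polynomial F) (t : ℕ) (u : ℕ → E) (j : ℕ) :
    (aeval ((shiftMap F E) ^ t) p) u j
      = ∑ i ∈ Finset.range (p.natDegree + 1), algebraMap F E (p.coeff i) * u (j + t * i) := by
  rw [Polynomial.aeval_eq_sum_range, LinearMap.sum_apply, Finset.sum_apply]
  apply Finset.sum_congr rfl
  intro i _
  rw [LinearMap.smul_apply, Pi.smul_apply, ← pow_mul, shiftMap_pow_apply, Algebra.smul_def]

/-- if `φ` is nonstandard of degree `m` over `GF(q)` and `ξ` generates
the same cyclic group, `⟨ξ⟩ = ⟨φ⟩`, then `ξ` is also nonstandard of degree `m` over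
`GF(q)`, with the same multiplicative order and the same `q`-order as `φ`. -/
theorem nonstandard_of_same_powers {F E : Type*} [Field F] [Fintype F] [Field E] [Fintype E]
    [Algebra F E] (m : ℕ) (hm : 0 < m)
    (φ ξ : E) (hφ : IsNonstandard F m φ) (hgen : powersOf ξ = powersOf φ) :
    IsNonstandard F m ξ ∧ orderOf ξ = orderOf φ ∧ qOrder F ξ = qOrder F φ := by
  obtain ⟨hfdeg, u, hu_lrs, hu_least, hu_range, hu0, hu_nd⟩ := hφ
  set f := minpoly F φ with hf
  set g := minpoly F ξ with hg
  set n := orderOf φ with hn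
  have hn_pos : 0 < n := hu_least.1.1
  have hu_per : ∀ k, u (k + n) = u k := hu_least.1.2
  have hφn : φ ^ n = 1 := pow_orderOf_eq_one φ
  have hφ0 : φ ≠ 0 := by
    intro h
    rw [h, zero_pow hn_pos.ne'] at hφn
    exact one_ne_zero hφn.symm
  -- generators
  obtain ⟨a', ha'⟩ : ξ ∈ powersOf φ := hgen ▸ ⟨1, (pow_one ξ).symm⟩
  obtain ⟨b', hb'⟩ : φ ∈ powersOf ξ := hgen.symm ▸ ⟨1, (pow_one φ).symm⟩
  set a := a' + n with ha_def
  set b := b' + n with hb_def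
  have hξn : ξ ^ n = 1 := by rw [ha', ← pow_mul, mul_comm, pow_mul, hφn, one_pow]
  have hξa : ξ = φ ^ a := by rw [ha_def, pow_add, hφn, mul_one, ha']
  have hφb : φ = ξ ^ b := by rw [hb_def, pow_add, hξn, mul_one, hb']
  have ha_pos : 0 < a := Nat.lt_of_lt_of_le hn_pos (Nat.le_add_left n a')
  have hb_pos : 0 < b := Nat.lt_of_lt_of_le hn_pos (Nat.le_add_left n b')
  have hab_pos : 1 ≤ a * b := Nat.one_le_iff_ne_zero.mpr (Nat.mul_ne_zero ha_pos.ne' hb_pos.ne')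
  have hab1 : φ ^ (a * b) = φ := by rw [pow_mul, ← hξa, ← hφb]
  have hdvd : n ∣ a * b - 1 := by
    apply orderOf_dvd_of_pow_eq_one
    have h1 : φ ^ (a * b - 1) * φ = 1 * φ := by
      rw [← pow_succ, Nat.sub_add_cancel hab_pos, hab1, one_mul]
    exact mul_right_cancel₀ hφ0 h1
  have hab_eq : a * b = 1 + (a * b - 1) := (Nat.add_sub_cancel' hab_pos).symm
  have habj : ∀ j, a * (b * j) = j + n * ((a * b - 1) / n * j) := by
    intro j
    have h2 : n * ((a * b - 1) / n) = a * b - 1 := Nat.mul_div_cancel' hdvd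
    calc a * (b * j) = (a * b) * j := by ring
      _ = (1 + (a * b - 1)) * j := by rw [← hab_eq]
      _ = j + (a * b - 1) * j := by ring
      _ = j + n * ((a * b - 1) / n * j) := by rw [← mul_assoc, h2]
  have hu_per' : ∀ k c, u (k + n * c) = u k := by
    intro k c
    induction c with
    | zero => simp
    | succ c ih =>
        have h : k + n * (c + 1) = (k + n * c) + n := by ring
        rw [h, hu_per, ih]
  have hujv : ∀ j, u (a * (b * j)) = u j := fun j => by rw [habj j, hu_per']
  have hper_dvd : ∀ p, (∀ k, u (k + p) = u k) → n ∣ p := by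
    intro p hp
    rcases Nat.eq_zero_or_pos p with h0 | hpos
    · simp [h0]
    by_contra hnd
    have hr0 : p % n ≠ 0 := fun h => hnd (Nat.dvd_of_mod_eq_zero h)
    have hrper : ∀ k, u (k + p % n) = u k := by
      intro k
      have he : (k + p % n) + n * (p / n) = k + p := by
        rw [add_assoc, Nat.mod_add_div]
      calc u (k + p % n) = u ((k + p % n) + n * (p / n)) := (hu_per' _ _).symm
        _ = u (k + p) := by rw [he]
        _ = u k := hp k
    have hle : n ≤ p % n := hu_least.2 ⟨Nat.pos_of_ne_zero hr0, hrper⟩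
    exact absurd (Nat.mod_lt p hn_pos) (not_lt.mpr hle)
  -- order equality
  have hoξ : orderOf ξ = n := by
    have h1 : orderOf ξ ∣ n := orderOf_dvd_of_pow_eq_one hξn
    have h2 : n ∣ orderOf ξ := orderOf_dvd_of_pow_eq_one
      (show φ ^ orderOf ξ = 1 by rw [hφb, ← pow_mul, mul_comm, pow_mul, pow_orderOf_eq_one, one_pow])
    exact Nat.dvd_antisymm h1 h2
  -- minpoly degrees
  have hint : IsIntegral F ξ := IsIntegral.of_finite F ξ
  have hintφ : IsIntegral F φ := IsIntegral.of_finite F φ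
  have hgmon : g.Monic := minpoly.monic hint
  have hfmon : f.Monic := minpoly.monic hintφ
  have hgdeg : g.natDegree = m := by
    have hfe : F⟮ξ⟯ = F⟮φ⟯ := le_antisymm
      (IntermediateField.adjoin_simple_le_iff.mpr
        (by rw [hξa]; exact pow_mem (IntermediateField.mem_adjoin_simple_self F φ) a))
      (IntermediateField.adjoin_simple_le_iff.mpr
        (by rw [hφb]; exact pow_mem (IntermediateField.mem_adjoin_simple_self F ξ) b))
    have e1 : Module.finrank F F⟮ξ⟯ = g.natDegree := IntermediateField.adjoin.finrank hint
    have e2 : Module.finrank F F⟮φ⟯ = f.natDegree := IntermediateField.adjoin.finrank hintφ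
    rw [← e1, hfe, e2, hfdeg]
  -- the annihilator computation
  have hu_key : ∀ j, ∑ i ∈ Finset.range (f.natDegree + 1),
      algebraMap F E (f.coeff i) * u (j + i) = 0 := by
    intro j
    rw [Finset.sum_range_succ, hu_lrs j, hfmon.coeff_natDegree, map_one, one_mul,
      ← Finset.sum_add_distrib]
    apply Finset.sum_eq_zero
    intro i _
    rw [map_neg]
    ring
  have hu_ann : aeval (shiftMap F E) f u = 0 := by
    funext j
    have h1 := aeval_shiftMap_pow_apply (F := F) (E := E) f 1 u j
    simp only [pow_one, one_mul] at h1
    rw [h1]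
    exact hu_key j
  have hcomp : aeval φ (g.comp (X ^ a)) = 0 := by
    rw [Polynomial.aeval_comp, map_pow, aeval_X, ← hξa]
    exact minpoly.aeval F ξ
  obtain ⟨h, hh⟩ : f ∣ g.comp (X ^ a) := minpoly.dvd F φ hcomp
  have hv_ann : aeval ((shiftMap F E) ^ a) g u = 0 := by
    have h2 : aeval (shiftMap F E) (g.comp (X ^ a)) = aeval ((shiftMap F E) ^ a) g := by
      rw [Polynomial.aeval_comp, map_pow, aeval_X]
    rw [← h2, hh, mul_comm, map_mul, Module.End.mul_apply, hu_ann, map_zero]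
  set v : ℕ → E := fun k => u (a * k) with hv_def
  have hv_key : ∀ j, ∑ i ∈ Finset.range (g.natDegree + 1),
      algebraMap F E (g.coeff i) * u (j + a * i) = 0 := by
    intro j
    have h1 := congrFun hv_ann j
    rw [aeval_shiftMap_pow_apply] at h1
    exact h1
  have hv_lrs : IsLRS g v := by
    intro k
    show u (a * (k + g.natDegree)) = _
    have h1 := hv_key (a * k)
    rw [Finset.sum_range_succ, hgmon.coeff_natDegree, map_one, one_mul] at h1
    have h2 : u (a * k + a * g.natDegree)
        = -∑ i ∈ Finset.range g.natDegree, algebraMap F E (g.coeff i) * u (a * k + a * i) := by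
      linear_combination h1
    rw [show a * (k + g.natDegree) = a * k + a * g.natDegree from by ring, h2,
      ← Finset.sum_neg_distrib]
    apply Finset.sum_congr rfl
    intro i _
    show -(algebraMap F E (g.coeff i) * u (a * k + a * i))
        = algebraMap F E (-g.coeff i) * u (a * (k + i))
    rw [map_neg, neg_mul, show a * (k + i) = a * k + a * i from by ring]
  have hv_periodic : ∀ k, v (k + n) = v k := by
    intro k
    show u (a * (k + n)) = u (a * k)
    rw [show a * (k + n) = a * k + n * a from by ring, hu_per']
  have hv_least : IsLeast {p : ℕ | 0 < p ∧ ∀ k, v (k + p) = v k} n := by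
    constructor
    · exact ⟨hn_pos, hv_periodic⟩
    · rintro p ⟨hp_pos, hp⟩
      have hap : ∀ j, u (j + a * p) = u j := by
        intro j
        have he : (j + a * p) + n * ((a * b - 1) / n * j) = a * (b * j + p) := by
          calc (j + a * p) + n * ((a * b - 1) / n * j)
              = (j + n * ((a * b - 1) / n * j)) + a * p := by ring
            _ = a * (b * j) + a * p := by rw [habj j]
            _ = a * (b * j + p) := by ring
        calc u (j + a * p) = u ((j + a * p) + n * ((a * b - 1) / n * j)) := (hu_per' _ _).symm
          _ = u (a * (b * j + p)) := by rw [he]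
          _ = v (b * j + p) := rfl
          _ = v (b * j) := hp _
          _ = u j := hujv j
      have h3 : n ∣ (a * b - 1) * p := hdvd.mul_right p
      have h4 : n ∣ a * p * b := (hper_dvd _ hap).mul_right b
      have h5 : a * p * b = p + (a * b - 1) * p := by
        calc a * p * b = (a * b) * p := by ring
          _ = (1 + (a * b - 1)) * p := by rw [← hab_eq]
          _ = p + (a * b - 1) * p := by ring
      have h6 := Nat.dvd_sub h4 h3
      rw [h5, Nat.add_sub_cancel] at h6
      exact Nat.le_of_dvd hp_pos h6
  have hv_range : Set.range v = powersOf ξ := by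
    rw [hgen, ← hu_range]
    apply Set.Subset.antisymm
    · rintro x ⟨k, rfl⟩; exact ⟨a * k, rfl⟩
    · rintro x ⟨j, rfl⟩; exact ⟨b * j, hujv j⟩
  have hv0 : v 0 = 1 := by
    show u (a * 0) = 1
    rw [Nat.mul_zero]
    exact hu0
  have hv_nd : ∀ ζ : E, (aeval ζ) g = 0 → ∃ i : Fin m, v (i : ℕ) ≠ ζ ^ (i : ℕ) := by
    intro ζ hζ
    by_contra hcon
    push_neg at hcon
    have hζm : ζ ^ m = ∑ i ∈ Finset.range m, algebraMap F E (-(g.coeff i)) * ζ ^ i := by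
      have h1 : ∑ i ∈ Finset.range (g.natDegree + 1), g.coeff i • ζ ^ i = 0 := by
        rw [← Polynomial.aeval_eq_sum_range, hζ]
      rw [Finset.sum_range_succ, hgmon.coeff_natDegree, one_smul, hgdeg] at h1
      have h2 : ζ ^ m = -∑ i ∈ Finset.range m, g.coeff i • ζ ^ i := by
        linear_combination h1
      rw [h2, ← Finset.sum_neg_distrib]
      apply Finset.sum_congr rfl
      intro i _
      rw [Algebra.smul_def, map_neg, neg_mul]
    have hvk : ∀ k, v k = ζ ^ k := by
      intro k
      induction k using Nat.strong_induction_on with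
      | _ k ih =>
        rcases lt_or_ge k m with hk | hk
        · exact hcon ⟨k, hk⟩
        · obtain ⟨k', rfl⟩ : ∃ k', k = k' + m := ⟨k - m, (Nat.sub_add_cancel hk).symm⟩
          have h1 := hv_lrs k'
          rw [hgdeg] at h1
          rw [h1]
          rw [Finset.sum_congr rfl (fun i hi => by
            rw [ih (k' + i) (by have := Finset.mem_range.mp hi; omega)])]
          rw [pow_add, hζm, Finset.mul_sum]
          apply Finset.sum_congr rfl
          intro i _
          rw [pow_add]
          ring
    have hζ' : aeval (ζ ^ b) f = 0 := by
      obtain ⟨t, ht⟩ : g ∣ f.comp (X ^ b) := minpoly.dvd F ξ (by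
        rw [Polynomial.aeval_comp, map_pow, aeval_X, ← hφb]
        exact minpoly.aeval F φ)
      calc aeval (ζ ^ b) f = aeval ζ (f.comp (X ^ b)) := by
            rw [Polynomial.aeval_comp, map_pow, aeval_X]
        _ = aeval ζ (g * t) := by rw [ht]
        _ = 0 := by rw [map_mul, hζ, zero_mul]
    obtain ⟨i, hi⟩ := hu_nd (ζ ^ b) hζ'
    apply hi
    calc u (i : ℕ) = v (b * (i : ℕ)) := (hujv _).symm
      _ = ζ ^ (b * (i : ℕ)) := hvk _
      _ = (ζ ^ b) ^ (i : ℕ) := by rw [pow_mul]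
  -- q-order
  have hq : qOrder F ξ = qOrder F φ := by
    set e := qOrder F φ with he
    have hnS : 0 < n ∧ φ ^ n ∈ Set.range (algebraMap F E) :=
      ⟨hn_pos, ⟨1, (map_one _).trans hφn.symm⟩⟩
    have heS : e ∈ {d : ℕ | 0 < d ∧ φ ^ d ∈ Set.range (algebraMap F E)} :=
      Nat.sInf_mem ⟨n, hnS⟩
    obtain ⟨he_pos, y, hy⟩ := heS
    have hdvd_e : ∀ c, φ ^ c ∈ Set.range (algebraMap F E) → e ∣ c := by
      intro c hc
      by_contra hnd
      have hr0 : c % e ≠ 0 := fun h => hnd (Nat.dvd_of_mod_eq_zero h)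
      have hy0 : y ≠ 0 := by
        intro h
        rw [h, map_zero] at hy
        exact (pow_ne_zero e hφ0) hy.symm
      obtain ⟨z, hz⟩ := hc
      have hmem : φ ^ (c % e) ∈ Set.range (algebraMap F E) := by
        refine ⟨z * (y ^ (c / e))⁻¹, ?_⟩
        rw [map_mul, map_inv₀, map_pow, hy, hz, ← pow_mul]
        have hne : φ ^ (e * (c / e)) ≠ 0 := pow_ne_zero _ hφ0
        have hc' : φ ^ c = φ ^ (e * (c / e)) * φ ^ (c % e) := by
          rw [← pow_add, Nat.div_add_mod]
        rw [hc', mul_comm (φ ^ (e * (c / e))) (φ ^ (c % e)), mul_assoc,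
          mul_inv_cancel₀ hne, mul_one]
      have hle : e ≤ c % e := Nat.sInf_le ⟨Nat.pos_of_ne_zero hr0, hmem⟩
      exact absurd (Nat.mod_lt c he_pos) (not_lt.mpr hle)
    have hen : e ∣ n := hdvd_e n hnS.2
    have hleast : IsLeast {d : ℕ | 0 < d ∧ ξ ^ d ∈ Set.range (algebraMap F E)} e := by
      constructor
      · refine ⟨he_pos, ⟨y ^ a, ?_⟩⟩
        rw [map_pow, hy, hξa, ← pow_mul, ← pow_mul, mul_comm]
      · rintro d ⟨hd_pos, hd⟩
        have h1 : φ ^ (a * d) ∈ Set.range (algebraMap F E) := by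
          rw [pow_mul, ← hξa]; exact hd
        have h3 : e ∣ (a * b - 1) * d := (hen.trans hdvd).mul_right d
        have h4 : e ∣ a * d * b := (hdvd_e _ h1).mul_right b
        have h5 : a * d * b = d + (a * b - 1) * d := by
          calc a * d * b = (a * b) * d := by ring
            _ = (1 + (a * b - 1)) * d := by rw [← hab_eq]
            _ = d + (a * b - 1) * d := by ring
        have h6 := Nat.dvd_sub h4 h3
        rw [h5, Nat.add_sub_cancel] at h6
        exact Nat.le_of_dvd hd_pos h6
    rw [qOrder, hleast.csInf_eq]
  exact ⟨⟨hgdeg, v, hv_lrs, by rw [hoξ]; exact hv_least, hv_range, hv0, hv_nd⟩, hoξ, hq⟩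
end

section
/- Let q_0 be a prime power, let q = q_0^t, and let m be a positive integer with gcd(m, t) = 1. If ξ is nonstandard of degree m over GF(q_0), then ξ is also nonstandard of degree m over GF(q), with the same multiplicative order, and the q-order of ξ equals its q_0-order. -/
open Polynomial

private theorem lift_finrank_aux {F0 F : Type*} [Field F0] [Fintype F0] [Field F] [Fintype F]
    [Algebra F0 F] {t : ℕ} (hq : Fintype.card F = Fintype.card F0 ^ t) :
    Module.finrank F0 F = t := by
  have h1 : Fintype.card F = Fintype.card F0 ^ Module.finrank F0 F := Module.card_eq_pow_finrank
  exact Nat.pow_right_injective Fintype.one_lt_card (h1.symm.trans hq)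

private theorem lift_minpoly_aux {F0 F E : Type*} [Field F0] [Fintype F0] [Field F] [Fintype F]
    [Field E] [Fintype E] [Algebra F0 F] [Algebra F0 E] [Algebra F E] [IsScalarTower F0 F E]
    (m t : ℕ) (hcop : Nat.gcd m t = 1)
    (hq : Fintype.card F = Fintype.card F0 ^ t)
    (ξ : E) (hdeg0 : (minpoly F0 ξ).natDegree = m) :
    (minpoly F0 ξ).map (algebraMap F0 F) = minpoly F ξ := by
  have hint0 : IsIntegral F0 ξ := IsIntegral.of_finite F0 ξ
  have hintF : IsIntegral F ξ := IsIntegral.of_finite F ξ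
  have hfr : Module.finrank F0 F = t := lift_finrank_aux hq
  have hdvd : minpoly F ξ ∣ (minpoly F0 ξ).map (algebraMap F0 F) := by
    refine minpoly.dvd F ξ ?_
    rw [aeval_map_algebraMap]; exact minpoly.aeval F0 ξ
  have hmapmonic : ((minpoly F0 ξ).map (algebraMap F0 F)).Monic := (minpoly.monic hint0).map _
  have hle : (minpoly F ξ).natDegree ≤ m := by
    have := Polynomial.natDegree_le_of_dvd hdvd hmapmonic.ne_zero
    rwa [Polynomial.natDegree_map, hdeg0] at this
  set L : IntermediateField F E := IntermediateField.adjoin F {ξ} with hL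
  have hξL : ξ ∈ L := IntermediateField.mem_adjoin_simple_self F ξ
  have hfrL : Module.finrank F L = (minpoly F ξ).natDegree :=
    IntermediateField.adjoin.finrank hintF
  have h6 : minpoly F0 ξ = minpoly F0 (⟨ξ, hξL⟩ : L) := by
    have := minpoly.algHom_eq (A := F0) (L.val.restrictScalars F0)
      (fun a b h => Subtype.val_injective h) (⟨ξ, hξL⟩ : L)
    exact this
  have hdvdm : m ∣ Module.finrank F0 L := by
    rw [← hdeg0, h6]
    exact minpoly.degree_dvd (IsIntegral.of_finite F0 _)
  have htower : Module.finrank F0 F * Module.finrank F L = Module.finrank F0 L :=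
    Module.finrank_mul_finrank F0 F L
  have hma : m ∣ (minpoly F ξ).natDegree := by
    refine Nat.Coprime.dvd_of_dvd_mul_left hcop ?_
    rwa [← htower, hfrL, hfr] at hdvdm
  have hapos : 0 < (minpoly F ξ).natDegree := minpoly.natDegree_pos hintF
  refine Polynomial.eq_of_monic_of_dvd_of_natDegree_le (minpoly.monic hintF) hmapmonic hdvd ?_
  rw [Polynomial.natDegree_map, hdeg0,
    le_antisymm hle (Nat.le_of_dvd hapos hma)]

private theorem lift_range_aux {F0 F E : Type*} [Field F0] [Fintype F0] [Field F] [Fintype F]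
    [Field E] [Fintype E] [Algebra F0 F] [Algebra F0 E] [Algebra F E] [IsScalarTower F0 F E]
    (m t : ℕ) (hcop : Nat.gcd m t = 1)
    (hq : Fintype.card F = Fintype.card F0 ^ t)
    (ξ : E) (hdeg0 : (minpoly F0 ξ).natDegree = m)
    (x : E) (hxK : x ∈ IntermediateField.adjoin F0 ({ξ} : Set E))
    (hxF : x ∈ Set.range (algebraMap F E)) : x ∈ Set.range (algebraMap F0 E) := by
  have hint0 : IsIntegral F0 ξ := IsIntegral.of_finite F0 ξ
  have hfr : Module.finrank F0 F = t := lift_finrank_aux hq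
  set K0 : IntermediateField F0 E := IntermediateField.adjoin F0 {ξ} with hK0
  have hxm : (minpoly F0 x).natDegree ∣ m := by
    have h6 : minpoly F0 x = minpoly F0 (⟨x, hxK⟩ : K0) := by
      have := minpoly.algHom_eq (A := F0) K0.val
        (fun a b h => Subtype.val_injective h) (⟨x, hxK⟩ : K0)
      exact this
    rw [h6, ← hdeg0, ← IntermediateField.adjoin.finrank hint0]
    exact minpoly.degree_dvd (IsIntegral.of_finite F0 _)
  have hxt : (minpoly F0 x).natDegree ∣ t := by
    obtain ⟨y, hy⟩ := hxF
    have h7 : minpoly F0 x = minpoly F0 y := by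
      rw [← hy]
      exact minpoly.algebraMap_eq (algebraMap F E).injective y
    rw [h7, ← hfr]
    exact minpoly.degree_dvd (IsIntegral.of_finite F0 y)
  exact minpoly.natDegree_eq_one_iff.mp
    (Nat.eq_one_of_dvd_one (hcop ▸ Nat.dvd_gcd hxm hxt))

/-- lifting theorem: let `q₀` be a prime power, `q = q₀ᵗ` with
`gcd(m, t) = 1`. If `ξ` is nonstandard of degree `m` over `GF(q₀)`, then `ξ` is also
nonstandard of degree `m` over `GF(q)` (the multiplicative order being that of the same
element `ξ`), and the `q`-order of `ξ` equals its `q₀`-order. -/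
theorem lifting_theorem {F0 F E : Type*} [Field F0] [Fintype F0] [Field F] [Fintype F]
    [Field E] [Fintype E] [Algebra F0 F] [Algebra F0 E] [Algebra F E] [IsScalarTower F0 F E]
    (m t : ℕ) (hm : 0 < m) (ht : 0 < t) (hcop : Nat.gcd m t = 1)
    (hq : Fintype.card F = Fintype.card F0 ^ t)
    (ξ : E) (hξ : IsNonstandard F0 m ξ) :
    IsNonstandard F m ξ ∧ qOrder F ξ = qOrder F0 ξ := by
  obtain ⟨hdeg0, u, huLRS, huLeast, huRange, hu0, huZero⟩ := hξ
  have hkey : (minpoly F0 ξ).map (algebraMap F0 F) = minpoly F ξ :=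
    lift_minpoly_aux m t hcop hq ξ hdeg0
  have hdegF : (minpoly F ξ).natDegree = m := by
    rw [← hkey, Polynomial.natDegree_map, hdeg0]
  constructor
  · refine ⟨hdegF, u, ?_, huLeast, huRange, hu0, ?_⟩
    · intro k
      rw [← hkey]
      simp only [Polynomial.natDegree_map, Polynomial.coeff_map]
      rw [huLRS k]
      refine Finset.sum_congr rfl fun i _ => ?_
      rw [map_neg, map_neg, ← IsScalarTower.algebraMap_apply F0 F E]
    · intro ζ hζ
      refine huZero ζ ?_
      rw [← hkey, aeval_map_algebraMap] at hζ
      exact hζ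
  · unfold qOrder
    congr 1
    ext d
    simp only [Set.mem_setOf_eq, and_congr_right_iff]
    intro hd
    constructor
    · intro hx
      exact lift_range_aux m t hcop hq ξ hdeg0 (ξ ^ d)
        (pow_mem (IntermediateField.mem_adjoin_simple_self F0 ξ) d) hx
    · rintro ⟨y, hy⟩
      exact ⟨algebraMap F0 F y, by rw [← IsScalarTower.algebraMap_apply, hy]⟩
end

section
/- Let q be a prime power and let m ≥ 2 with either m > 2, or m = 2 and q > 2. Then every primitive element ξ of GF(q^m) (i.e., every ξ of multiplicative order q^m − 1) is nonstandard of degree m over GF(q). -/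
open Polynomial

section Aux

variable {F E : Type*} [Field F] [Fintype F] [Field E] [Fintype E] [Algebra F E]

lemma powersOf_eq_ne_zero {ξ : E} (hord : orderOf ξ = Fintype.card E - 1) :
    powersOf ξ = {x : E | x ≠ 0} := by
  classical
  have h1 : 1 < Fintype.card E := Fintype.one_lt_card
  have hopos : 0 < orderOf ξ := by omega
  have hξ0 : ξ ≠ 0 := by
    intro h
    rw [h] at hopos
    have h2 := pow_orderOf_eq_one (0 : E)
    rw [zero_pow hopos.ne'] at h2
    exact zero_ne_one h2
  ext x
  simp only [powersOf, Set.mem_setOf_eq]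
  constructor
  · rintro ⟨k, rfl⟩; exact pow_ne_zero _ hξ0
  · intro hx
    set ξu : Eˣ := Units.mk0 ξ hξ0 with hξu
    have hou : orderOf ξu = Fintype.card Eˣ := by
      rw [Fintype.card_units, ← hord, ← orderOf_units]
      rfl
    have htop : Subgroup.zpowers ξu = ⊤ := by
      apply Subgroup.eq_top_of_card_eq
      rw [Nat.card_zpowers, hou, Nat.card_eq_fintype_card]
    have hx' : Units.mk0 x hx ∈ Subgroup.zpowers ξu := htop ▸ Subgroup.mem_top _
    rw [← mem_powers_iff_mem_zpowers] at hx'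
    obtain ⟨k, hk⟩ := hx'
    refine ⟨k, ?_⟩
    have := congrArg Units.val hk
    simpa [hξu] using this.symm

set_option linter.unusedSectionVars false in
lemma isNonstandard_of_linearEquiv {ξ : E} (m : ℕ)
    (hdeg : (minpoly F ξ).natDegree = m)
    (hord : orderOf ξ = Fintype.card E - 1)
    (L : E ≃ₗ[F] E) (hL1 : L 1 = 1)
    (hns : ∀ ζ : E, (aeval ζ) (minpoly F ξ) = 0 →
      ∃ i : Fin m, L (ξ ^ (i : ℕ)) ≠ ζ ^ (i : ℕ)) :
    IsNonstandard F m ξ := by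
  have h1 : 1 < Fintype.card E := Fintype.one_lt_card
  have hopos : 0 < orderOf ξ := by omega
  have hξ0 : ξ ≠ 0 := by
    intro h
    rw [h] at hopos
    have h2 := pow_orderOf_eq_one (0 : E)
    rw [zero_pow hopos.ne'] at h2
    exact zero_ne_one h2
  have hint : IsIntegral F ξ := IsIntegral.of_finite F ξ
  set f : Polynomial F := minpoly F ξ with hf
  have hxm : ξ ^ m = ∑ i ∈ Finset.range m, algebraMap F E (-(f.coeff i)) * ξ ^ i := by
    have h0 : (aeval ξ) f = 0 := minpoly.aeval F ξ
    have hcm : f.coeff m = 1 := by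
      have := (minpoly.monic hint).coeff_natDegree
      rwa [← hf, hdeg] at this
    rw [aeval_eq_sum_range, hdeg, Finset.sum_range_succ, hcm, one_smul] at h0
    have h2 : ξ ^ m = -∑ i ∈ Finset.range m, f.coeff i • ξ ^ i :=
      eq_neg_of_add_eq_zero_right h0
    rw [h2, ← Finset.sum_neg_distrib]
    refine Finset.sum_congr rfl fun i _ => ?_
    rw [← neg_smul, Algebra.smul_def]
  have hpow : ∀ k : ℕ, ξ ^ (k + m) =
      ∑ i ∈ Finset.range m, algebraMap F E (-(f.coeff i)) * ξ ^ (k + i) := by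
    intro k
    rw [pow_add, hxm, Finset.mul_sum]
    refine Finset.sum_congr rfl fun i _ => ?_
    ring
  refine ⟨hdeg, fun k => L (ξ ^ k), ?_, ?_, ?_, ?_, ?_⟩
  · intro k
    simp only [← hf, hdeg]
    rw [hpow k, map_sum]
    refine Finset.sum_congr rfl fun i _ => ?_
    rw [← Algebra.smul_def, map_smul, Algebra.smul_def]
  · constructor
    · refine ⟨hopos, fun k => ?_⟩
      simp only [pow_add, pow_orderOf_eq_one, mul_one]
    · rintro p ⟨hp, hper⟩
      have h := hper 0
      simp only [zero_add] at h
      have hxp : ξ ^ p = 1 := by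
        have := L.injective h
        rwa [pow_zero] at this
      exact Nat.le_of_dvd hp (orderOf_dvd_of_pow_eq_one hxp)
  · rw [powersOf_eq_ne_zero hord]
    ext x
    simp only [Set.mem_range, Set.mem_setOf_eq]
    constructor
    · rintro ⟨k, rfl⟩
      intro h0
      have : ξ ^ k = 0 := L.injective (by rw [h0, map_zero])
      exact pow_ne_zero k hξ0 this
    · intro hx
      have h1' : L.symm x ≠ 0 := by
        intro h
        apply hx
        rw [← L.apply_symm_apply x, h, map_zero]
      have h2 : L.symm x ∈ powersOf ξ := by
        rw [powersOf_eq_ne_zero hord]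
        exact h1'
      obtain ⟨k, hk⟩ := h2
      exact ⟨k, by rw [← hk, L.apply_symm_apply]⟩
  · show L (ξ ^ 0) = 1
    rw [pow_zero]; exact hL1
  · exact hns

end Aux

/-- if `m > 2`, or `m = 2` and `q > 2`, then every primitive element `ξ`
of `GF(qᵐ)` (i.e. of multiplicative order `qᵐ - 1`) is nonstandard of degree `m` over
`GF(q)`. -/
theorem primitive_isNonstandard {F E : Type*} [Field F] [Fintype F] [Field E] [Fintype E]
    [Algebra F E] (m : ℕ) (hrank : Module.finrank F E = m)
    (hm : 2 < m ∨ (m = 2 ∧ 2 < Fintype.card F))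
    (ξ : E) (hprim : orderOf ξ = Fintype.card F ^ m - 1) :
    IsNonstandard F m ξ := by
  classical
  have hq : 1 < Fintype.card F := Fintype.one_lt_card
  have hm2 : 2 ≤ m := by rcases hm with h | ⟨h, _⟩ <;> omega
  have hcardE : Fintype.card E = Fintype.card F ^ m := by
    rw [Module.card_eq_pow_finrank (K := F) (V := E), hrank]
  have hord : orderOf ξ = Fintype.card E - 1 := by rw [hcardE, hprim]
  have h1E : 1 < Fintype.card E := Fintype.one_lt_card
  have hopos : 0 < orderOf ξ := by omega
  have hξ0 : ξ ≠ 0 := by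
    intro h
    rw [h] at hopos
    have h2 := pow_orderOf_eq_one (0 : E)
    rw [zero_pow hopos.ne'] at h2
    exact zero_ne_one h2
  have hint : IsIntegral F ξ := IsIntegral.of_finite F ξ
  have hpmem : powersOf ξ = {x : E | x ≠ 0} := powersOf_eq_ne_zero hord
  have htop : IntermediateField.adjoin F {ξ} = ⊤ := by
    rw [eq_top_iff]
    rintro x -
    by_cases hx : x = 0
    · rw [hx]; exact zero_mem _
    · have hxp : x ∈ powersOf ξ := by rw [hpmem]; exact hx
      obtain ⟨k, rfl⟩ := hxp
      exact pow_mem (IntermediateField.mem_adjoin_simple_self F ξ) k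
  have hdeg : (minpoly F ξ).natDegree = m := by
    rw [← IntermediateField.adjoin.finrank hint]
    show Module.finrank F (IntermediateField.adjoin F {ξ}) = m
    rw [htop, IntermediateField.finrank_top', hrank]
  have hli : LinearIndependent F fun i : Fin m => ξ ^ (i : ℕ) := by
    have h := linearIndependent_pow (K := F) ξ
    rwa [hdeg] at h
  haveI : Nonempty (Fin m) := ⟨⟨0, by omega⟩⟩
  set b : Module.Basis (Fin m) F E :=
    basisOfLinearIndependentOfCardEqFinrank hli (by rw [Fintype.card_fin, hrank]) with hb
  have hbcoe : ∀ i : Fin m, b i = ξ ^ (i : ℕ) := by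
    intro i
    rw [hb, coe_basisOfLinearIndependentOfCardEqFinrank]
  rcases hm with h3 | ⟨h2, hq3⟩
  · -- case m ≥ 3 : swap the basis vectors ξ and ξ²
    have hξ3 : ξ ^ 3 ≠ 1 := by
      intro h
      have hdvd := orderOf_dvd_of_pow_eq_one h
      have hle : orderOf ξ ≤ 3 := Nat.le_of_dvd (by norm_num) hdvd
      have h8 : 2 ^ 3 ≤ Fintype.card F ^ m :=
        le_trans (Nat.pow_le_pow_right (by norm_num) h3) (Nat.pow_le_pow_left hq m)
      omega
    set i0 : Fin m := ⟨0, by omega⟩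
    set i1 : Fin m := ⟨1, by omega⟩
    set i2 : Fin m := ⟨2, by omega⟩
    have h01 : i0 ≠ i1 := by simp [i0, i1, Fin.ext_iff]
    have h02 : i0 ≠ i2 := by simp [i0, i2, Fin.ext_iff]
    set L : E ≃ₗ[F] E := b.equiv b (Equiv.swap i1 i2) with hL
    apply isNonstandard_of_linearEquiv m hdeg hord L
    · have hone : b i0 = 1 := by rw [hbcoe]; simp [i0]
      have hLb : L (b i0) = b i0 := by
        rw [hL, Module.Basis.equiv_apply, Equiv.swap_apply_of_ne_of_ne h01 h02]
      rw [hone] at hLb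
      exact hLb
    · intro ζ hζ
      by_contra hc
      push_neg at hc
      have e1 : L (ξ ^ (1 : ℕ)) = ξ ^ 2 := by
        rw [show ξ ^ (1:ℕ) = b i1 by rw [hbcoe], hL, Module.Basis.equiv_apply, Equiv.swap_apply_left,
          hbcoe]
      have e2 : L (ξ ^ (2 : ℕ)) = ξ ^ 1 := by
        rw [show ξ ^ (2:ℕ) = b i2 by rw [hbcoe], hL, Module.Basis.equiv_apply, Equiv.swap_apply_right,
          hbcoe]
      have hc1 := hc i1
      have hc2 := hc i2
      simp only [i1, i2] at hc1 hc2
      rw [e1] at hc1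
      rw [e2] at hc2
      rw [pow_one] at hc1 hc2
      -- hc1 : ξ ^ 2 = ζ, hc2 : ξ = ζ ^ 2
      have h4 : ξ = ξ ^ 4 := by
        calc ξ = ζ ^ 2 := hc2
          _ = (ξ ^ 2) ^ 2 := by rw [hc1]
          _ = ξ ^ 4 := by rw [← pow_mul]
      apply hξ3
      have h5 : ξ ^ 3 * ξ = 1 * ξ := by
        rw [one_mul, ← pow_succ]
        exact h4.symm
      exact mul_right_cancel₀ hξ0 h5
  · -- case m = 2, q > 2
    subst h2
    set A : Finset E := Finset.univ.image (algebraMap F E) with hA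
    set R : Finset E := ((minpoly F ξ).aroots E).toFinset with hR
    have hAcard : A.card ≤ Fintype.card F := by
      calc A.card ≤ (Finset.univ : Finset F).card := Finset.card_image_le
        _ = Fintype.card F := Finset.card_univ
    have hRcard : R.card ≤ 2 := by
      calc R.card ≤ Multiset.card ((minpoly F ξ).aroots E) := Multiset.toFinset_card_le _
        _ ≤ ((minpoly F ξ).map (algebraMap F E)).natDegree := Polynomial.card_roots' _
        _ ≤ (minpoly F ξ).natDegree := Polynomial.natDegree_map_le
        _ = 2 := hdeg
    have hexists : ∃ μ : E, μ ∉ A ∪ R := by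
      by_contra hcon
      push_neg at hcon
      have hsub : (Finset.univ : Finset E).card ≤ (A ∪ R).card :=
        Finset.card_le_card fun x _ => hcon x
      have hun := Finset.card_union_le A R
      rw [Finset.card_univ, hcardE] at hsub
      have hsq : Fintype.card F ^ 2 ≤ Fintype.card F + 2 := by omega
      nlinarith [hq3]
    obtain ⟨μ, hμ⟩ := hexists
    have hμA : μ ∉ A := fun h => hμ (Finset.mem_union_left _ h)
    have hμR : μ ∉ R := fun h => hμ (Finset.mem_union_right _ h)
    have hli2 : LinearIndependent F ![(1 : E), μ] := by
      rw [linearIndependent_fin2]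
      constructor
    -- f 1 = μ ≠ 0
      · show μ ≠ 0
        intro h
        apply hμA
        rw [hA, h]
        exact Finset.mem_image.mpr ⟨0, Finset.mem_univ _, map_zero _⟩
      · intro a ha
        show False
        have ha' : a • μ = 1 := ha
        have ha0 : a ≠ 0 := by
          intro h; rw [h, zero_smul] at ha'; exact zero_ne_one ha'
        apply hμA
        rw [Algebra.smul_def] at ha'
        have h5 : μ = (algebraMap F E a)⁻¹ := eq_inv_of_mul_eq_one_right ha'
        rw [hA, h5, ← map_inv₀]
        exact Finset.mem_image.mpr ⟨a⁻¹, Finset.mem_univ _, rfl⟩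
    set b' : Module.Basis (Fin 2) F E :=
      basisOfLinearIndependentOfCardEqFinrank hli2 (by rw [Fintype.card_fin, hrank]) with hb'
    have hb'coe : ∀ i : Fin 2, b' i = ![(1 : E), μ] i := by
      intro i
      rw [hb', coe_basisOfLinearIndependentOfCardEqFinrank]
    set L : E ≃ₗ[F] E := b.equiv b' (Equiv.refl _) with hL
    apply isNonstandard_of_linearEquiv 2 hdeg hord L
    · have hone : b 0 = 1 := by rw [hbcoe]; simp
      have hLb : L (b 0) = b' 0 := by
        rw [hL, Module.Basis.equiv_apply, Equiv.refl_apply]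
      rw [hone, hb'coe] at hLb
      rw [hLb]
      simp
    · intro ζ hζ
      refine ⟨1, ?_⟩
      have e1 : L (ξ ^ ((1 : Fin 2) : ℕ)) = μ := by
        have : ξ ^ ((1 : Fin 2) : ℕ) = b 1 := by rw [hbcoe]
        rw [this, hL, Module.Basis.equiv_apply, Equiv.refl_apply, hb'coe]
        simp
      rw [e1]
      intro h
      apply hμR
      rw [hR, Multiset.mem_toFinset, Polynomial.mem_aroots]
      refine ⟨minpoly.ne_zero hint, ?_⟩
      rw [h]
      simpa using hζ
end

section
/- Let q be a prime power. There is no element ξ that is nonstandard of degree 2 over GF(q) with q-order ord_q(ξ) = 3. -/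
open Polynomial

lemma pow_card_hom (F : Type*) (E : Type*) [Field F] [Fintype F] [Field E] [Algebra F E] :
    ∃ φ : E →+* E, ∀ x, φ x = x ^ Fintype.card F := by
  obtain ⟨p, hchar⟩ := CharP.exists F
  haveI := hchar
  haveI hp : Fact p.Prime := ⟨CharP.char_is_prime F p⟩
  obtain ⟨n, -, hcard⟩ := FiniteField.card F p
  haveI : CharP E p := charP_of_injective_algebraMap (algebraMap F E).injective p
  refine ⟨iterateFrobenius E p n, fun x => ?_⟩
  rw [iterateFrobenius_def, hcard]

lemma mem_range_of_pow_card {F E : Type*} [Field F] [Fintype F] [Field E] [Fintype E]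
    [Algebra F E] {x : E} (h : x ^ Fintype.card F = x) : x ∈ Set.range (algebraMap F E) := by
  classical
  set q := Fintype.card F with hq
  have hq1 : 1 < q := Fintype.one_lt_card
  set P : E[X] := X ^ q - X with hP
  have hPdeg : P.natDegree = q := by
    have h1 : (X : E[X]).natDegree < ((X : E[X]) ^ q).natDegree := by
      simpa using hq1
    rw [hP, natDegree_sub_eq_left_of_natDegree_lt h1, natDegree_pow, natDegree_X, mul_one]
  have hP0 : P ≠ 0 := by
    intro h0
    rw [h0, natDegree_zero] at hPdeg
    omega
  have hroot : ∀ y : E, y ^ q = y → y ∈ P.roots.toFinset := by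
    intro y hy
    simp only [Multiset.mem_toFinset, mem_roots hP0, IsRoot.def]
    simp only [hP, eval_sub, eval_pow, eval_X]
    rw [hy, sub_self]
  set S : Finset E := Finset.univ.image (algebraMap F E) with hS
  have hsub : S ⊆ P.roots.toFinset := by
    intro a ha
    simp only [hS, Finset.mem_image] at ha
    obtain ⟨b, -, rfl⟩ := ha
    exact hroot _ (by rw [← map_pow, FiniteField.pow_card])
  have hcardS : S.card = q := by
    rw [hS, Finset.card_image_of_injective _ (algebraMap F E).injective, Finset.card_univ]
  have hle : P.roots.toFinset.card ≤ S.card := by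
    calc P.roots.toFinset.card ≤ Multiset.card P.roots := P.roots.toFinset_card_le
    _ ≤ P.natDegree := P.card_roots'
    _ = S.card := by rw [hPdeg, hcardS]
  have : P.roots.toFinset = S := (Finset.eq_of_subset_of_card_le hsub hle).symm
  have hx : x ∈ S := this ▸ hroot x h
  simp only [hS, Finset.mem_image] at hx
  obtain ⟨b, -, hb⟩ := hx
  exact ⟨b, hb⟩

/-- there is no nonstandard element of degree `2` over `GF(q)` with
`q`-order `3`. -/
theorem no_nonstandard_qOrder_three {F E : Type*} [Field F] [Fintype F] [Field E] [Fintype E]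
    [Algebra F E] (hrank : Module.finrank F E = 2) (ξ : E) :
    ¬ (IsNonstandard F 2 ξ ∧ qOrder F ξ = 3) := by
  classical
  rintro ⟨⟨hdeg, u, hLRS, -, hrange, hu0, hNS⟩, hord⟩
  set q := Fintype.card F with hqdef
  have hq1 : 1 < q := Fintype.one_lt_card
  obtain ⟨φ, hφ⟩ := pow_card_hom F E
  have hφalg : ∀ c : F, φ (algebraMap F E c) = algebraMap F E c := by
    intro c
    rw [hφ, ← map_pow, FiniteField.pow_card]
  -- unpack qOrder
  have hSne : {d : ℕ | 0 < d ∧ ξ ^ d ∈ Set.range (algebraMap F E)}.Nonempty := by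
    by_contra h
    rw [Set.not_nonempty_iff_eq_empty] at h
    rw [qOrder, h, Nat.sInf_empty] at hord
    omega
  have h3mem : (0:ℕ) < 3 ∧ ξ ^ 3 ∈ Set.range (algebraMap F E) := by
    have := Nat.sInf_mem hSne
    rwa [show sInf {d : ℕ | 0 < d ∧ ξ ^ d ∈ Set.range (algebraMap F E)} = 3 from hord] at this
  have hnotF : ξ ∉ Set.range (algebraMap F E) := by
    intro h
    have h1 : 1 ∈ {d : ℕ | 0 < d ∧ ξ ^ d ∈ Set.range (algebraMap F E)} := ⟨one_pos, by simpa⟩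
    have := Nat.sInf_le h1
    rw [show sInf {d : ℕ | 0 < d ∧ ξ ^ d ∈ Set.range (algebraMap F E)} = qOrder F ξ from rfl,
      hord] at this
    omega
  have hξ0 : ξ ≠ 0 := by
    rintro rfl
    exact hnotF ⟨0, (map_zero _)⟩
  have hξq : ξ ^ q ≠ ξ := fun h => hnotF (mem_range_of_pow_card h)
  -- cube root of unity
  set ω : E := ξ ^ (q - 1) with hωdef
  have hωξ : ξ ^ q = ω * ξ := by
    rw [hωdef, ← pow_succ]
    congr 1
    omega
  have hω0 : ω ≠ 0 := pow_ne_zero _ hξ0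
  clear_value ω
  have hω1 : ω ≠ 1 := by
    intro h
    apply hξq
    rw [hωξ, h, one_mul]
  have hω3 : ω ^ 3 = 1 := by
    have h3q : (ξ ^ 3) ^ q = ξ ^ 3 := by
      obtain ⟨c, hc⟩ := h3mem.2
      rw [← hc, ← map_pow, FiniteField.pow_card]
    have : ω ^ 3 * ξ ^ 3 = ξ ^ 3 := by
      calc ω ^ 3 * ξ ^ 3 = (ω * ξ) ^ 3 := by ring
      _ = (ξ ^ q) ^ 3 := by rw [hωξ]
      _ = (ξ ^ 3) ^ q := by rw [← pow_mul, ← pow_mul, Nat.mul_comm]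
      _ = ξ ^ 3 := h3q
    have h3 : ξ ^ 3 ≠ 0 := pow_ne_zero _ hξ0
    field_simp at this
    exact this
  have hω2 : ω ^ 2 ≠ 1 := by
    intro h
    exact hω1 (by rw [← hω3, pow_succ, h, one_mul])
  have hsum : 1 + ω + ω ^ 2 = 0 := by
    have h0 : (ω - 1) * (1 + ω + ω ^ 2) = 0 := by linear_combination hω3
    rcases mul_eq_zero.1 h0 with h | h
    · exact absurd (sub_eq_zero.1 h) hω1
    · exact h
  -- card E = q^2 and Frobenius facts
  haveI : Module.Finite F E := Module.finite_of_finrank_eq_succ hrank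
  have hφq : ∀ z : E, φ z = z ^ q := by
    intro z; rw [hφ, hqdef]
  have hcardE : Fintype.card E = q ^ 2 := by
    rw [Module.card_eq_pow_finrank (K := F) (V := E), hrank, hqdef]
  have hξE : (ξ ^ q) ^ q = ξ := by
    have h := FiniteField.pow_card ξ
    rw [hcardE, pow_two, mul_comm, pow_mul] at h
    exact h
  have hωq : ω ^ q = ω ^ 2 := by
    have h2 : ω ^ q * ω * ξ = 1 * ξ := by
      rw [one_mul]
      calc ω ^ q * ω * ξ = ω ^ q * (ω * ξ) := by ring
      _ = ω ^ q * ξ ^ q := by rw [hωξ]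
      _ = (ω * ξ) ^ q := by rw [mul_pow]
      _ = (ξ ^ q) ^ q := by rw [hωξ]
      _ = ξ := hξE
    have h3 : ω ^ q * ω = 1 := mul_right_cancel₀ hξ0 h2
    have h4 : ω ^ q * ω = ω ^ 2 * ω := by rw [h3, ← hω3]; ring
    exact mul_right_cancel₀ hω0 h4
  have hφξ : φ ξ = ω * ξ := by rw [hφq, hωξ]
  -- powers of ξ
  have hpowfact : ∀ z : E, z ∈ powersOf ξ →
      z ≠ 0 ∧ (z ^ q = z ∨ z ^ q = ω * z ∨ z ^ q = ω ^ 2 * z) := by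
    rintro z ⟨j, rfl⟩
    refine ⟨pow_ne_zero _ hξ0, ?_⟩
    have hz : (ξ ^ j) ^ q = ω ^ j * ξ ^ j := by
      rw [← pow_mul, mul_comm j q, pow_mul, hωξ, mul_pow]
    have hmod : ω ^ j = ω ^ (j % 3) := by
      conv_lhs => rw [← Nat.div_add_mod j 3]
      rw [pow_add, pow_mul, hω3, one_pow, one_mul]
    have h3 : j % 3 = 0 ∨ j % 3 = 1 ∨ j % 3 = 2 := by omega
    rcases h3 with h | h | h
    · left; rw [hz, hmod, h, pow_zero, one_mul]
    · right; left; rw [hz, hmod, h, pow_one]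
    · right; right; rw [hz, hmod, h]
  -- minpoly coefficients
  have hint : IsIntegral F ξ := IsIntegral.of_finite F ξ
  have hmonic : (minpoly F ξ).Monic := minpoly.monic hint
  have hcoeff2 : (minpoly F ξ).coeff 2 = 1 := by
    have h := hmonic.coeff_natDegree
    rwa [hdeg] at h
  have hexp : ∀ z : E, aeval z (minpoly F ξ) =
      algebraMap F E ((minpoly F ξ).coeff 0) + algebraMap F E ((minpoly F ξ).coeff 1) * z
        + z ^ 2 := by
    intro z
    rw [aeval_eq_sum_range, hdeg]
    rw [Finset.sum_range_succ, Finset.sum_range_succ, Finset.sum_range_one]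
    rw [hcoeff2]
    simp [Algebra.smul_def]
  have heq1 : algebraMap F E ((minpoly F ξ).coeff 0)
      + algebraMap F E ((minpoly F ξ).coeff 1) * ξ + ξ ^ 2 = 0 := by
    rw [← hexp ξ, minpoly.aeval]
  have heq2 : algebraMap F E ((minpoly F ξ).coeff 0)
      + algebraMap F E ((minpoly F ξ).coeff 1) * (ω * ξ) + (ω * ξ) ^ 2 = 0 := by
    have h := congrArg φ heq1
    rw [map_add, map_add, map_mul, map_pow, map_zero, hφalg, hφalg, hφξ] at h
    exact h
  have hθroot : aeval (ω * ξ) (minpoly F ξ) = 0 := by rw [hexp]; exact heq2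
  -- nonstandardness
  have hne : ∀ ζ : E, aeval ζ (minpoly F ξ) = 0 → u 1 ≠ ζ := by
    intro ζ hζ
    obtain ⟨i, hi⟩ := hNS ζ hζ
    fin_cases i
    · simp [hu0] at hi
    · simpa using hi
  have hu1ξ : u 1 ≠ ξ := hne ξ (minpoly.aeval F ξ)
  have hu1θ : u 1 ≠ ω * ξ := hne _ hθroot
  -- coefficient values
  have hξωne : ξ - ω * ξ ≠ 0 := by
    intro h
    have h1 : ω * ξ = 1 * ξ := by rw [one_mul, ← sub_eq_zero.1 h]
    exact hω1 (mul_right_cancel₀ hξ0 h1)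
  have hfac : (ξ - ω * ξ) * (algebraMap F E ((minpoly F ξ).coeff 1) + ξ + ω * ξ) = 0 := by
    linear_combination heq1 - heq2
  have hc1sum : algebraMap F E ((minpoly F ξ).coeff 1) + ξ + ω * ξ = 0 :=
    (mul_eq_zero.1 hfac).resolve_left hξωne
  have hc1 : algebraMap F E ((minpoly F ξ).coeff 1) = -((1 + ω) * ξ) := by
    linear_combination hc1sum
  have hc0 : algebraMap F E ((minpoly F ξ).coeff 0) = ω * ξ ^ 2 := by
    linear_combination heq1 - ξ * hc1sum
  -- the recurrence
  have hrec : ∀ k, u (k + 2) = algebraMap F E (-((minpoly F ξ).coeff 0)) * u k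
      + algebraMap F E (-((minpoly F ξ).coeff 1)) * u (k + 1) := by
    intro k
    have h := hLRS k
    rw [hdeg] at h
    rw [Finset.sum_range_succ, Finset.sum_range_one] at h
    simpa using h
  have hrec' : ∀ k, u (k + 2) = (1 + ω) * ξ * u (k + 1) - ω * ξ ^ 2 * u k := by
    intro k
    rw [hrec k, map_neg, map_neg, hc0, hc1]
    ring
  have hE0 : u 2 = (1 + ω) * ξ * u 1 - ω * ξ ^ 2 := by
    have h := hrec' 0
    norm_num [hu0] at h
    exact h
  have hu1mem : u 1 ∈ powersOf ξ := by rw [← hrange]; exact ⟨1, rfl⟩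
  have hu2mem : u 2 ∈ powersOf ξ := by rw [← hrange]; exact ⟨2, rfl⟩
  obtain ⟨hx0, hxq⟩ := hpowfact _ hu1mem
  obtain ⟨hy0, hyq⟩ := hpowfact _ hu2mem
  rcases hxq with hxA | hxq12
  · -- Frobenius fixes u 1, hence the whole sequence, hence ξ ∈ F: contradiction
    have key : ∀ k, u k ^ q = u k ∧ u (k + 1) ^ q = u (k + 1) := by
      intro k
      induction k with
      | zero => exact ⟨by rw [hu0, one_pow], hxA⟩
      | succ n ih =>
        refine ⟨ih.2, ?_⟩
        have h : u (n + 2) ^ q = algebraMap F E (-((minpoly F ξ).coeff 0)) * u n ^ q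
            + algebraMap F E (-((minpoly F ξ).coeff 1)) * u (n + 1) ^ q := by
          have h' := congrArg φ (hrec n)
          rwa [map_add, map_mul, map_mul, hφalg, hφalg, hφq, hφq, hφq] at h'
        have h2 : (n : ℕ) + 1 + 1 = n + 2 := rfl
        rw [h2, h, ih.1, ih.2, ← hrec n]
    have hξmem : ξ ∈ Set.range u := by
      rw [hrange]; exact ⟨1, (pow_one ξ).symm⟩
    obtain ⟨k, hk⟩ := hξmem
    have hfix : ξ ^ Fintype.card F = ξ := by
      rw [← hqdef, ← hk]; exact (key k).1
    exact hnotF (mem_range_of_pow_card hfix)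
  -- the Frobenius image of the recurrence relation at k = 0
  · have hEF : u 2 ^ q = (1 + ω ^ q) * ξ ^ q * u 1 ^ q - ω ^ q * (ξ ^ 2) ^ q := by
      have h := congrArg φ hE0
      simp only [map_sub, map_mul, map_add, map_one] at h
      simp only [hφq] at h
      exact h
    have hξ2q : (ξ ^ 2) ^ q = (ω * ξ) ^ 2 := by
      rw [← pow_mul, mul_comm 2 q, pow_mul, hωξ]
    rw [hωq, hωξ, hξ2q] at hEF
    -- hEF : u 2 ^ q = (1 + ω ^ 2) * (ω * ξ) * u 1 ^ q - ω ^ 2 * (ω * ξ) ^ 2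
    have hωne : ω - 1 ≠ 0 := sub_ne_zero.2 hω1
    rcases hxq12 with hx | hx
    · rcases hyq with hy | hy | hy
      · -- (α,β) = (1,0)
        have hT : (1 - ω ^ 2) * (ξ * u 1) = 0 := by
          linear_combination hEF - hy + (1 + ω ^ 2) * ω * ξ * hx - hE0
            + (ω * ξ * u 1 - ω * ξ ^ 2) * hω3
        rcases mul_eq_zero.1 hT with h | h
        · exact hω2 (sub_eq_zero.1 h).symm
        · rcases mul_eq_zero.1 h with h' | h'
          · exact hξ0 h'
          · exact hx0 h'
      · -- (α,β) = (1,1)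
        have hT : (ω - ω ^ 2) * ξ ^ 2 = 0 := by
          linear_combination hEF - hy + (1 + ω ^ 2) * ω * ξ * hx - ω * hE0
            + (ω * ξ * u 1 - ω * ξ ^ 2) * hω3
        rcases mul_eq_zero.1 hT with h | h
        · exact hω2 (by linear_combination ω * h + hω3)
        · exact pow_ne_zero 2 hξ0 h
      · -- (α,β) = (1,2)
        have hT : (1 - ω) * (ξ * (u 1 - ξ)) = 0 := by
          linear_combination hEF - hy + (1 + ω ^ 2) * ω * ξ * hx - ω ^ 2 * hE0
            + ((ω - 1) * (ξ * u 1 - ξ ^ 2)) * hω3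
        rcases mul_eq_zero.1 hT with h | h
        · exact hω1 (sub_eq_zero.1 h).symm
        · rcases mul_eq_zero.1 h with h' | h'
          · exact hξ0 h'
          · exact hu1ξ (sub_eq_zero.1 h')
    · rcases hyq with hy | hy | hy
      · -- (α,β) = (2,0)
        have hT : (ω - ω ^ 2) * (ξ * u 1) = 0 := by
          linear_combination hEF - hy + (1 + ω ^ 2) * ω * ξ * hx - hE0
            + ((ω ^ 2 + 1) * ξ * u 1 - ω * ξ ^ 2) * hω3
        rcases mul_eq_zero.1 hT with h | h
        · exact hω2 (by linear_combination ω * h + hω3)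
        · rcases mul_eq_zero.1 h with h' | h'
          · exact hξ0 h'
          · exact hx0 h'
      · -- (α,β) = (2,1)
        have hT : (ω - 1) * (ξ * (u 1 - ω * ξ)) = 0 := by
          linear_combination hEF - hy + (1 + ω ^ 2) * ω * ξ * hx - ω * hE0
            + ((ω ^ 2 + 1) * ξ * u 1 - ω * ξ ^ 2) * hω3
        rcases mul_eq_zero.1 hT with h | h
        · exact hω1 (sub_eq_zero.1 h)
        · rcases mul_eq_zero.1 h with h' | h'
          · exact hξ0 h'
          · exact hu1θ (sub_eq_zero.1 h')
      · -- (α,β) = (2,2)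
        have hT : (ω - 1) * ξ ^ 2 = 0 := by
          linear_combination hEF - hy + (1 + ω ^ 2) * ω * ξ * hx - ω ^ 2 * hE0
            + (ω ^ 2 * ξ * u 1 + (1 - ω) * ξ ^ 2) * hω3
        rcases mul_eq_zero.1 hT with h | h
        · exact hω1 (sub_eq_zero.1 h)
        · exact pow_ne_zero 2 hξ0 h
end

section
/- Let q be a prime power of characteristic p, and let ξ be nonstandard of degree 2 over GF(q) with q-order ord_q(ξ) = 4 and minimal polynomial x² − σ_1 x − σ_0 over GF(q) (necessarily σ_1 ≠ 0). Then p = 3 and ξ/σ_1 has multiplicative order 8, i.e., ξ/σ_1 is a primitive element of the subfield GF(9) of GF(q²). -/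
open Polynomial

lemma fixed_mem_range {F E : Type*} [Field F] [Fintype F] [Field E] [Algebra F E]
    {z : E} (hz : z ^ Fintype.card F = z) : z ∈ Set.range (algebraMap F E) := by
  classical
  by_contra h
  set q := Fintype.card F with hqdef
  have hq : 1 < q := Fintype.one_lt_card
  set P : E[X] := X ^ q - X with hP
  have hdeg : P.natDegree = q := by
    rw [hP, natDegree_sub_eq_left_of_natDegree_lt] <;> simp [natDegree_X_pow] <;> omega
  have hP0 : P ≠ 0 := by
    intro h0
    rw [h0] at hdeg
    simp at hdeg
    omega
  have hroot : ∀ x : E, x ^ q = x → x ∈ P.roots := by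
    intro x hx
    rw [mem_roots hP0]
    simp [hP, IsRoot, hx]
  set T : Finset E := insert z (Finset.univ.image (algebraMap F E)) with hT
  have hTsub : T ⊆ P.roots.toFinset := by
    intro x hx
    rw [hT, Finset.mem_insert] at hx
    rw [Multiset.mem_toFinset]
    rcases hx with rfl | hx
    · exact hroot _ hz
    · obtain ⟨a, _, rfl⟩ := Finset.mem_image.mp hx
      apply hroot
      rw [← map_pow, FiniteField.pow_card]
  have hcard : T.card = q + 1 := by
    rw [hT, Finset.card_insert_of_notMem, Finset.card_image_of_injective _ (algebraMap F E).injective, Finset.card_univ]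
    intro hmem
    obtain ⟨a, _, ha⟩ := Finset.mem_image.mp hmem
    exact h ⟨a, ha⟩
  have := (Finset.card_le_card hTsub).trans ((Multiset.toFinset_card_le _).trans ((card_roots' P).trans_eq hdeg))
  omega

/-- if `ξ` is nonstandard of degree `2` over `GF(q)` (characteristic `p`)
with `q`-order `4` and minimal polynomial `x² - σ₁x - σ₀` (necessarily `σ₁ ≠ 0`), then
`p = 3` and `ξ/σ₁` has multiplicative order `8`, i.e. `ξ/σ₁` is a primitive element of
the subfield `GF(9)` of `GF(q²)`. -/
theorem nonstandard_qOrder_four {F E : Type*} [Field F] [Fintype F] [Field E] [Fintype E]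
    [Algebra F E] (hrank : Module.finrank F E = 2)
    (ξ : E) (σ1 σ0 : F)
    (hmin : minpoly F ξ = X ^ 2 - C σ1 * X - C σ0)
    (hns : IsNonstandard F 2 ξ) (hd : qOrder F ξ = 4) :
    ringChar F = 3 ∧ σ1 ≠ 0 ∧ orderOf (ξ / algebraMap F E σ1) = 8 := by
  classical
  obtain ⟨hdeg2, u, hLRS, hLeast, hRange, hu0, hNS⟩ := hns
  have hq1 : 1 < Fintype.card F := Fintype.one_lt_card
  -- q-order facts
  have hd' : sInf {d : ℕ | 0 < d ∧ ξ ^ d ∈ Set.range (algebraMap F E)} = 4 := hd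
  have hset : {d : ℕ | 0 < d ∧ ξ ^ d ∈ Set.range (algebraMap F E)}.Nonempty := by
    by_contra h
    rw [Set.not_nonempty_iff_eq_empty] at h
    rw [h, Nat.sInf_empty] at hd'
    omega
  have h4mem : ξ ^ 4 ∈ Set.range (algebraMap F E) := (hd' ▸ Nat.sInf_mem hset).2
  have hnotmem : ∀ k, 0 < k → k < 4 → ξ ^ k ∉ Set.range (algebraMap F E) := by
    intro k hk hk4 hmem
    have := Nat.sInf_le (show k ∈ {d : ℕ | 0 < d ∧ ξ ^ d ∈ Set.range (algebraMap F E)} from ⟨hk, hmem⟩)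
    omega
  have hne1 : ξ ∉ Set.range (algebraMap F E) := by
    have := hnotmem 1 (by norm_num) (by norm_num)
    simpa using this
  have hne2 : ξ ^ 2 ∉ Set.range (algebraMap F E) := hnotmem 2 (by norm_num) (by norm_num)
  -- minimal polynomial equation
  set a : E := algebraMap F E σ1 with hadef
  set bb : E := algebraMap F E σ0 with hbdef
  have hξ2 : ξ ^ 2 = a * ξ + bb := by
    have h := minpoly.aeval F ξ
    rw [hmin] at h
    simp only [map_sub, map_mul, map_pow, aeval_X, aeval_C] at h
    rw [hadef, hbdef]
    linear_combination h
  have hcoefzero : ∀ x y : F, (algebraMap F E x) * ξ + algebraMap F E y ∈ Set.range (algebraMap F E) → x = 0 := by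
    rintro x y ⟨e, he⟩
    by_contra hx
    apply hne1
    refine ⟨(e - y) * x⁻¹, ?_⟩
    have hxE : algebraMap F E x ≠ 0 := by
      simpa using hx
    rw [map_mul, map_sub, map_inv₀, he]
    field_simp
    ring
  have hσ1 : σ1 ≠ 0 := by
    intro h
    apply hne2
    refine ⟨σ0, ?_⟩
    rw [hξ2, hadef, hbdef, h, map_zero, zero_mul, zero_add]
  have ha0 : a ≠ 0 := by
    rw [hadef]
    simpa using hσ1
  have hξ4 : ξ ^ 4 = algebraMap F E (σ1 * (σ1 ^ 2 + 2 * σ0)) * ξ + algebraMap F E (σ0 * (σ1 ^ 2 + σ0)) := by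
    simp only [map_mul, map_add, map_pow, map_ofNat, ← hadef, ← hbdef]
    linear_combination (ξ ^ 2 + a * ξ + a ^ 2 + bb) * hξ2
  have hkey0 : σ1 * (σ1 ^ 2 + 2 * σ0) = 0 := hcoefzero _ _ (hξ4 ▸ h4mem)
  have hkeyF : σ1 ^ 2 + 2 * σ0 = 0 := (mul_eq_zero.mp hkey0).resolve_left hσ1
  have hkey : a ^ 2 + 2 * bb = 0 := by
    have := congrArg (algebraMap F E) hkeyF
    simpa only [map_add, map_pow, map_mul, map_ofNat, map_zero, ← hadef, ← hbdef] using this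
  have h2E : (2 : E) ≠ 0 := by
    intro h
    apply ha0
    have ha2 : a ^ 2 = 0 := by linear_combination hkey - bb * h
    exact pow_eq_zero_iff (by norm_num) |>.mp ha2
  have hξ0 : ξ ≠ 0 := by
    intro h
    apply hne2
    rw [h]
    exact ⟨0, by simp⟩
  -- characteristic and Frobenius
  haveI hcharF : CharP F (ringChar F) := ringChar.charP F
  obtain ⟨n, hp, hcard⟩ := FiniteField.card F (ringChar F)
  haveI hfp : Fact (ringChar F).Prime := ⟨hp⟩
  haveI hcharE : CharP E (ringChar F) := charP_of_injective_algebraMap (algebraMap F E).injective _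
  have hfrobadd : ∀ x y : E, (x + y) ^ Fintype.card F = x ^ Fintype.card F + y ^ Fintype.card F := by
    intro x y
    rw [hcard]
    exact add_pow_char_pow x y _ _
  have halg : ∀ x : F, (algebraMap F E x) ^ Fintype.card F = algebraMap F E x := fun x => by
    rw [← map_pow, FiniteField.pow_card]
  have h2F : (2 : F) ≠ 0 := by
    intro h
    apply h2E
    rw [show (2 : E) = algebraMap F E 2 from (map_ofNat _ 2).symm, h, map_zero]
  have hp2 : ringChar F ≠ 2 := by
    intro h
    apply h2F
    have := CharP.cast_eq_zero F (ringChar F)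
    rw [h] at this
    exact_mod_cast this
  have hqodd : Odd (Fintype.card F) := by
    rw [hcard]
    exact (hp.odd_of_ne_two hp2).pow
  have hm1q : (-1 : E) ^ Fintype.card F = -1 := hqodd.neg_one_pow
  have hnegpow : ∀ z : E, (-z) ^ Fintype.card F = -(z ^ Fintype.card F) := fun z => by
    rw [neg_eq_neg_one_mul, mul_pow, hm1q]
    ring
  have hfix : ∀ z : E, z ^ Fintype.card F = z → z ∈ Set.range (algebraMap F E) :=
    fun z hz => fixed_mem_range hz
  -- Frobenius conjugate of ξ
  have hξq2 : (ξ ^ Fintype.card F) ^ 2 = a * (ξ ^ Fintype.card F) + bb := by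
    have h1 : (ξ ^ Fintype.card F) ^ 2 = (ξ ^ 2) ^ Fintype.card F := by
      rw [← pow_mul, ← pow_mul, mul_comm]
    rw [h1, hξ2, hfrobadd, mul_pow, hadef, hbdef, halg, halg]
  have hξqne : ξ ^ Fintype.card F ≠ ξ := fun h => hne1 (hfix ξ h)
  have hfq : ξ ^ Fintype.card F = a - ξ := by
    have hfac : (ξ ^ Fintype.card F - ξ) * (ξ ^ Fintype.card F - (a - ξ)) = 0 := by
      linear_combination hξq2 - hξ2
    rcases mul_eq_zero.mp hfac with h | h
    · exact absurd (sub_eq_zero.mp h) hξqne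
    · linear_combination h
  -- η
  set η : E := (a - ξ) * ξ⁻¹ with hηdef
  have hηξ : η * ξ = a - ξ := by
    rw [hηdef]
    field_simp
  have hη2 : η ^ 2 = -1 := by
    have h' : η ^ 2 * ξ ^ 2 = (-1) * ξ ^ 2 := by
      linear_combination (η * ξ + a - ξ) * hηξ + 2 * hξ2 + hkey
    exact mul_right_cancel₀ (pow_ne_zero 2 hξ0) h'
  have hη4 : η ^ 4 = 1 := by linear_combination (η ^ 2 - 1) * hη2
  have hη3 : η ^ 3 = -η := by linear_combination η * hη2
  have hηne0 : η ≠ 0 := by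
    intro h
    rw [h] at hη2
    norm_num at hη2
  have hηne1 : η ≠ 1 := by
    intro h
    rw [h] at hη2
    apply h2E
    linear_combination hη2
  have hηnem1 : η ≠ -1 := by
    intro h
    rw [h] at hη2
    apply h2E
    linear_combination hη2
  have hηnotF : η ∉ Set.range (algebraMap F E) := by
    rintro ⟨cc, hcc⟩
    have hcc1 : algebraMap F E cc + 1 ≠ 0 := by
      intro h
      apply hηnem1
      rw [← hcc]
      linear_combination h
    have hccF : cc + 1 ≠ 0 := by
      intro h
      apply hcc1
      rw [show (1 : E) = algebraMap F E 1 from (map_one _).symm, ← map_add, h, map_zero]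
    apply hne1
    refine ⟨σ1 * (cc + 1)⁻¹, ?_⟩
    rw [map_mul, map_inv₀, map_add, map_one, ← hadef]
    have hηξ' : algebraMap F E cc * ξ = a - ξ := by rw [hcc]; exact hηξ
    field_simp
    linear_combination -hηξ'
  have hηq : η ^ Fintype.card F = -η := by
    have h2q : (η ^ Fintype.card F) ^ 2 = -1 := by
      rw [← pow_mul, mul_comm, pow_mul, hη2]
      exact hm1q
    have hfac : (η ^ Fintype.card F - η) * (η ^ Fintype.card F + η) = 0 := by
      linear_combination h2q - hη2
    rcases mul_eq_zero.mp hfac with h | h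
    · exact absurd (hfix η (sub_eq_zero.mp h)) hηnotF
    · linear_combination h
  have hξqη : ξ ^ Fintype.card F = ξ * η := by
    rw [hfq, ← hηξ]
    ring
  have hξq1 : ξ ^ (Fintype.card F - 1) = η := by
    rw [pow_sub₀ ξ hξ0 (le_of_lt hq1), pow_one, hξqη]
    field_simp
  -- linear recurrence
  have hrec : ∀ k, u (k + 2) = bb * u k + a * u (k + 1) := by
    intro k
    have h := hLRS k
    rw [hmin] at h
    rw [show (X ^ 2 - C σ1 * X - C σ0 : F[X]).natDegree = 2 from by compute_degree!] at h
    rw [Finset.sum_range_succ, Finset.sum_range_succ, Finset.sum_range_zero] at h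
    simp only [zero_add, coeff_sub, coeff_X_pow, coeff_C_mul, coeff_X_one, coeff_C,
      coeff_X_zero, add_zero, Nat.add_zero] at h
    norm_num at h
    rw [hadef, hbdef]
    linear_combination h
  -- the coefficients A, B
  have hden : ξ - ξ ^ Fintype.card F ≠ 0 := sub_ne_zero.mpr (Ne.symm hξqne)
  set A : E := (u 1 - ξ ^ Fintype.card F) / (ξ - ξ ^ Fintype.card F) with hAdef
  set B : E := (ξ - u 1) / (ξ - ξ ^ Fintype.card F) with hBdef
  have hAB : A + B = 1 := by
    rw [hAdef, hBdef, ← add_div, div_eq_one_iff_eq hden]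
    ring
  have hu1AB : u 1 = A * ξ + B * ξ ^ Fintype.card F := by
    rw [hAdef, hBdef]
    field_simp
    ring
  have huk : ∀ k, u k = A * ξ ^ k + B * (ξ ^ Fintype.card F) ^ k := by
    have H : ∀ k, u k = A * ξ ^ k + B * (ξ ^ Fintype.card F) ^ k ∧
        u (k + 1) = A * ξ ^ (k + 1) + B * (ξ ^ Fintype.card F) ^ (k + 1) := by
      intro k
      induction k with
      | zero =>
        constructor
        · rw [hu0]
          simpa using hAB.symm
        · simpa using hu1AB
      | succ m ih =>
        refine ⟨ih.2, ?_⟩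
        rw [show m + 1 + 1 = m + 2 from rfl, hrec m, ih.1, ih.2]
        linear_combination (-(A * ξ ^ m)) * hξ2 + (-(B * (ξ ^ Fintype.card F) ^ m)) * hξq2
    exact fun k => (H k).1
  -- A and B are nonzero
  have hu1ne : ∀ ζ : E, ζ ^ 2 = a * ζ + bb → u 1 ≠ ζ := by
    intro ζ hζ
    obtain ⟨i, hi⟩ := hNS ζ (by
      rw [hmin]
      simp only [map_sub, map_mul, map_pow, aeval_X, aeval_C]
      rw [← hadef, ← hbdef]
      linear_combination hζ)
    fin_cases i
    · exact absurd (by simp [hu0]) hi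
    · simpa using hi
  have hB0 : B ≠ 0 := by
    intro h
    apply hu1ne ξ hξ2
    have hA1 : A = 1 := by linear_combination hAB - h
    rw [hu1AB, hA1, h]
    ring
  have hA0 : A ≠ 0 := by
    intro h
    apply hu1ne (ξ ^ Fintype.card F) hξq2
    have hB1 : B = 1 := by linear_combination hAB - h
    rw [hu1AB, hB1, h]
    ring
  obtain ⟨c, hcdef⟩ : ∃ c : E, c = A - B := ⟨_, rfl⟩
  have hc1 : c ≠ 1 := by
    intro h
    apply hB0
    have h2B : B * 2 = 0 := by linear_combination hAB + hcdef - h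
    exact (mul_eq_zero.mp h2B).resolve_right h2E
  have hcm1 : c ≠ -1 := by
    intro h
    apply hA0
    have h2A : A * 2 = 0 := by linear_combination hAB - hcdef + h
    exact (mul_eq_zero.mp h2A).resolve_right h2E
  -- sequence values in the subgroup
  have hwu : ∀ k, u k = ξ ^ k * (A + B * η ^ k) := by
    intro k
    rw [huk k, hξqη, mul_pow]
    ring
  have hcover : ∀ i : ℕ, ∃ j, j < 4 ∧
      η ^ j * (A + B * η ^ j) ^ (Fintype.card F - 1) = η ^ i := by
    intro i
    have hmem : ξ ^ i ∈ Set.range u := by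
      rw [hRange]
      exact ⟨i, rfl⟩
    obtain ⟨k, hk⟩ := hmem
    have hmod : η ^ k = η ^ (k % 4) := by
      conv_lhs => rw [← Nat.div_add_mod k 4]
      rw [pow_add, pow_mul, hη4, one_pow, one_mul]
    refine ⟨k % 4, Nat.mod_lt _ (by norm_num), ?_⟩
    have h1 : ξ ^ k * (A + B * η ^ k) = ξ ^ i := by rw [← hwu k, hk]
    apply_fun (· ^ (Fintype.card F - 1)) at h1
    simp only [mul_pow] at h1
    rw [← pow_mul, mul_comm k, pow_mul, hξq1, ← pow_mul, mul_comm i, pow_mul, hξq1] at h1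
    rw [hmod] at h1
    exact h1
  -- the Frobenius equations
  obtain ⟨ρ1, hρ1def⟩ : ∃ r : E, r = (A + B * η) ^ (Fintype.card F - 1) := ⟨_, rfl⟩
  obtain ⟨ρ2, hρ2def⟩ : ∃ r : E, r = (A - B) ^ (Fintype.card F - 1) := ⟨_, rfl⟩
  obtain ⟨ρ3, hρ3def⟩ : ∃ r : E, r = (A - B * η) ^ (Fintype.card F - 1) := ⟨_, rfl⟩
  have hpowsucc : ∀ z : E, z ^ Fintype.card F = z ^ (Fintype.card F - 1) * z := by
    intro z
    rw [← pow_succ]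
    congr 1
    omega
  have hF0 : A ^ Fintype.card F + B ^ Fintype.card F = 1 := by
    rw [← hfrobadd, hAB, one_pow]
  have hF1 : A ^ Fintype.card F - B ^ Fintype.card F * η = (A + B * η) * ρ1 := by
    have h1 : (A + B * η) ^ Fintype.card F = A ^ Fintype.card F - B ^ Fintype.card F * η := by
      rw [hfrobadd, mul_pow, hηq]
      ring
    rw [← h1, hpowsucc (A + B * η), hρ1def]
    ring
  have hF2 : A ^ Fintype.card F - B ^ Fintype.card F = (A - B) * ρ2 := by
    have h1 : (A - B) ^ Fintype.card F = A ^ Fintype.card F - B ^ Fintype.card F := by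
      rw [sub_eq_add_neg, hfrobadd, hnegpow]
      ring
    rw [← h1, hpowsucc (A - B), hρ2def]
    ring
  have hF3 : A ^ Fintype.card F + B ^ Fintype.card F * η = (A - B * η) * ρ3 := by
    have h1 : (A - B * η) ^ Fintype.card F = A ^ Fintype.card F + B ^ Fintype.card F * η := by
      rw [sub_eq_add_neg, hfrobadd, hnegpow, mul_pow, hηq]
      ring
    rw [← h1, hpowsucc (A - B * η), hρ3def]
    ring
  have hG1 : (1 + c * ρ2) - (1 - c * ρ2) * η = ((1 + c) + (1 - c) * η) * ρ1 := by
    linear_combination (-1 + η) * hF0 + (-1 - η) * hF2 +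
      (ρ2 * (1 + η) - ρ1 * (1 - η)) * hcdef + (ρ1 * (1 + η)) * hAB + 2 * hF1
  have hG3 : (1 + c * ρ2) + (1 - c * ρ2) * η = ((1 + c) - (1 - c) * η) * ρ3 := by
    linear_combination (-1 - η) * hF0 + (-1 + η) * hF2 +
      (ρ2 * (1 - η) - ρ3 * (1 + η)) * hcdef + (ρ3 * (1 - η)) * hAB + 2 * hF3
  -- specialize the covering facts
  have hcov : ∀ i : ℕ, (η * ρ1 = η ^ i) ∨ ((-1) * ρ2 = η ^ i) ∨ ((-η) * ρ3 = η ^ i) ∨ ((1 : E) = η ^ i) := by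
    intro i
    obtain ⟨j, hj4, hj⟩ := hcover i
    interval_cases j
    · have hone : A + B * η ^ 0 = 1 := by
        rw [pow_zero, mul_one]
        exact hAB
      rw [hone, one_pow, pow_zero, one_mul] at hj
      exact Or.inr (Or.inr (Or.inr hj))
    · rw [pow_one] at hj
      rw [← hρ1def] at hj
      exact Or.inl hj
    · have hw2 : A + B * η ^ 2 = A - B := by linear_combination B * hη2
      rw [hw2, ← hρ2def, hη2] at hj
      exact Or.inr (Or.inl hj)
    · have hw3 : A + B * η ^ 3 = A - B * η := by linear_combination B * hη3
      rw [hw3, ← hρ3def, hη3] at hj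
      exact Or.inr (Or.inr (Or.inl hj))
  have Hc1' : (η * ρ1 = η) ∨ ((-1) * ρ2 = η) ∨ ((-η) * ρ3 = η) := by
    have h := hcov 1
    rw [pow_one] at h
    rcases h with h | h | h | h
    · exact Or.inl h
    · exact Or.inr (Or.inl h)
    · exact Or.inr (Or.inr h)
    · exact absurd h.symm hηne1
  have Hc2' : (η * ρ1 = -1) ∨ ((-1) * ρ2 = -1) ∨ ((-η) * ρ3 = -1) := by
    have h := hcov 2
    rw [hη2] at h
    rcases h with h | h | h | h
    · exact Or.inl h
    · exact Or.inr (Or.inl h)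
    · exact Or.inr (Or.inr h)
    · exact absurd (by linear_combination h : (2 : E) = 0) h2E
  have Hc3' : (η * ρ1 = -η) ∨ ((-1) * ρ2 = -η) ∨ ((-η) * ρ3 = -η) := by
    have h := hcov 3
    rw [hη3] at h
    rcases h with h | h | h | h
    · exact Or.inl h
    · exact Or.inr (Or.inl h)
    · exact Or.inr (Or.inr h)
    · exact absurd (by linear_combination h : η = -1) hηnem1
  have hd1 : η ≠ -1 := hηnem1
  have hd2 : η ≠ -η := by
    intro h
    have h2 : η * 2 = 0 := by linear_combination h
    rcases mul_eq_zero.mp h2 with h' | h'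
    · exact hηne0 h'
    · exact h2E h'
  have hd3 : (-1 : E) ≠ -η := fun h => hηne1 (by linear_combination h)
  have h4E : (4 : E) ≠ 0 := by
    intro h
    have h22 : (2 : E) * 2 = 0 := by linear_combination h
    rcases mul_eq_zero.mp h22 with h' | h' <;> exact h2E h'
  have hfinish : (12 : E) = 0 → (3 : E) = 0 := by
    intro h12
    have h43 : (4 : E) * 3 = 0 := by linear_combination h12
    rcases mul_eq_zero.mp h43 with h' | h'
    · exact absurd h' h4E
    · exact h'
  have h3E : (3 : E) = 0 := by
    rcases Hc1' with h1 | h1 | h1 <;> rcases Hc2' with h2 | h2 | h2 <;> rcases Hc3' with h3 | h3 | h3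
    · exact absurd (h1.symm.trans h2) hd1
    · exact absurd (h1.symm.trans h2) hd1
    · exact absurd (h1.symm.trans h2) hd1
    · exact absurd (h1.symm.trans h3) hd2
    · exact absurd (h2.symm.trans h3) hd3
    · have hr1 : ρ1 = 1 := mul_left_cancel₀ hηne0 (h1.trans (mul_one η).symm)
      have hr2 : ρ2 = 1 := by linear_combination -h2
      have hr3 : ρ3 = 1 := mul_left_cancel₀ hηne0 (show η*ρ3 = η*1 by linear_combination -h3)
      rw [hr1, hr2] at hG1
      have hx : (c - 1) * (2 * η) = 0 := by linear_combination hG1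
      rcases mul_eq_zero.mp hx with h' | h'
      · exact absurd (by linear_combination h' : c = 1) hc1
      · rcases mul_eq_zero.mp h' with h'' | h''
        · exact absurd h'' h2E
        · exact absurd h'' hηne0
    · exact absurd (h1.symm.trans h3) hd2
    · have hr1 : ρ1 = 1 := mul_left_cancel₀ hηne0 (h1.trans (mul_one η).symm)
      have hr2 : ρ2 = η := by linear_combination -h3
      have hr3 : ρ3 = -η := mul_left_cancel₀ hηne0 (show η*ρ3 = η*(-η) by linear_combination -h2 + hη2)
      rw [hr1, hr2] at hG1
      rw [hr2, hr3] at hG3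
      exact hfinish (by linear_combination (2*η) * hG1 + (2-2*η) * hG3 + (10-2*η-2*c*η) * hη2)
    · exact absurd (h2.symm.trans h3) hd3
    · exact absurd (h2.symm.trans h3) hd3
    · exact absurd (h1.symm.trans h3) hd2
    · have hr1 : ρ1 = η := mul_left_cancel₀ hηne0 (h2.trans (show (-1:E) = η*η by linear_combination -hη2))
      have hr2 : ρ2 = -η := by linear_combination -h1
      have hr3 : ρ3 = 1 := mul_left_cancel₀ hηne0 (show η*ρ3 = η*1 by linear_combination -h3)
      rw [hr1, hr2] at hG1
      rw [hr2, hr3] at hG3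
      exact hfinish (by linear_combination (2+2*η) * hG1 + (-2*η) * hG3 + (10+2*η+2*c*η) * hη2)
    · exact absurd (h1.symm.trans h2) hd1
    · exact absurd (h1.symm.trans h2) hd1
    · exact absurd (h1.symm.trans h2) hd1
    · have hr1 : ρ1 = -1 := mul_left_cancel₀ hηne0 (h3.trans (show (-η:E) = η*(-1) by ring))
      have hr2 : ρ2 = -η := by linear_combination -h1
      have hr3 : ρ3 = -η := mul_left_cancel₀ hηne0 (show η*ρ3 = η*(-η) by linear_combination -h2 + hη2)
      rw [hr1, hr2] at hG1
      rw [hr2, hr3] at hG3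
      exact hfinish (by linear_combination (2:E) * hG1 + (2-2*η) * hG3 + (6-2*η-2*c+4*c*η) * hη2)
    · exact absurd (h1.symm.trans h3) hd2
    · exact absurd (h2.symm.trans h3) hd3
    · exact absurd (h2.symm.trans h3) hd3
    · have hr1 : ρ1 = η := mul_left_cancel₀ hηne0 (h2.trans (show (-1:E) = η*η by linear_combination -hη2))
      have hr2 : ρ2 = η := by linear_combination -h3
      have hr3 : ρ3 = -1 := mul_left_cancel₀ hηne0 (show η*ρ3 = η*(-1) by linear_combination -h1)
      rw [hr1, hr2] at hG1
      rw [hr2, hr3] at hG3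
      exact hfinish (by linear_combination (2+2*η) * hG1 + (2:E) * hG3 + (6+2*η-2*c-4*c*η) * hη2)
    · exact absurd (h1.symm.trans h3) hd2
    · have hr1 : ρ1 = -1 := mul_left_cancel₀ hηne0 (h3.trans (show (-η:E) = η*(-1) by ring))
      have hr2 : ρ2 = 1 := by linear_combination -h2
      have hr3 : ρ3 = -1 := mul_left_cancel₀ hηne0 (show η*ρ3 = η*(-1) by linear_combination -h1)
      rw [hr1, hr2] at hG1
      have hx : (c + 1) * 2 = 0 := by linear_combination hG1
      rcases mul_eq_zero.mp hx with h' | h'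
      · exact absurd (by linear_combination h' : c = -1) hcm1
      · exact absurd h' h2E
    · exact absurd (h2.symm.trans h3) hd3
    · exact absurd (h1.symm.trans h3) hd2
    · exact absurd (h1.symm.trans h2) hd1
    · exact absurd (h1.symm.trans h2) hd1
    · exact absurd (h1.symm.trans h2) hd1
  -- conclude
  have h3F : (3 : F) = 0 := by
    apply (algebraMap F E).injective
    rw [map_ofNat, map_zero]
    exact h3E
  have hchar3 : ringChar F = 3 := by
    have hdvd : ringChar F ∣ 3 := ringChar.dvd (by exact_mod_cast h3F)
    rcases Nat.prime_three.eq_one_or_self_of_dvd _ hdvd with h | h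
    · exfalso
      have h1 := CharP.cast_eq_zero F (ringChar F)
      rw [h] at h1
      simp at h1
    · exact h
  refine ⟨hchar3, hσ1, ?_⟩
  have hba2 : bb = a ^ 2 := by linear_combination -hkey + bb * h3E
  have hθ2 : (ξ / a) ^ 2 = ξ / a + 1 := by
    field_simp
    linear_combination hξ2 + hba2
  have hθ4 : (ξ / a) ^ 4 = -1 := by
    have h44 : (ξ / a) ^ 4 = ((ξ / a) ^ 2) ^ 2 := by ring
    rw [h44, hθ2]
    linear_combination hθ2 + (ξ / a + 1) * h3E
  have hθ8 : (ξ / a) ^ 8 = 1 := by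
    have h88 : (ξ / a) ^ 8 = ((ξ / a) ^ 4) ^ 2 := by ring
    rw [h88, hθ4]
    ring
  have hθ4ne : (ξ / a) ^ 4 ≠ 1 := by
    rw [hθ4]
    intro h
    exact h2E (by linear_combination -h)
  haveI : Fact (Nat.Prime 2) := ⟨Nat.prime_two⟩
  have hord := orderOf_eq_prime_pow (x := ξ / a) (p := 2) (n := 2)
    (by rw [show (2 : ℕ) ^ 2 = 4 from by norm_num]; exact hθ4ne)
    (by rw [show (2 : ℕ) ^ (2 + 1) = 8 from by norm_num]; exact hθ8)
  simpa using hord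
end
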